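/- arXiv:1703.06976 — 4 statements merged into one kernel-verified Lean document; each statement's English description precedes it below -/
import Mathlib

section
/- Let n ≥ 2, let ϕ and φ satisfy conditions A1)–A3), let μ be a nonzero finite Borel measure on S^{n-1}, and suppose there exists a convex body K ∈ 𝒦₀ⁿ such that μ/|μ| = C̃_φ(K,·)/Ṽ_φ(K). Then μ is not concentrated in any closed hemisphere, i.e. ∫_{S^{n-1}} max(ξ·θ, 0) dμ(θ) > 0 for every ξ ∈ S^{n-1}. -/
open MeasureTheory Metric Set Filter
open scoped ENNReal NNReal Topology RealInnerProductSpace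

noncomputable section

/-- The unit sphere `S^{n-1}` in `ℝⁿ`. -/
def unitSphere (n : ℕ) : Set (EuclideanSpace ℝ (Fin n)) :=
  Metric.sphere (0 : EuclideanSpace ℝ (Fin n)) 1

/-- The spherical Lebesgue (Hausdorff) measure on `S^{n-1}`, i.e. the
`(n-1)`-dimensional Hausdorff measure restricted to the unit sphere. -/
def sphMeasure (n : ℕ) : Measure (EuclideanSpace ℝ (Fin n)) :=
  (μH[(n : ℝ) - 1] : Measure (EuclideanSpace ℝ (Fin n))).restrict (unitSphere n)

/-- `K` is a convex body in `ℝⁿ` with the origin in its interior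
(`K ∈ 𝒦₀ⁿ`). -/
def IsConvexBody0 {n : ℕ} (K : Set (EuclideanSpace ℝ (Fin n))) : Prop :=
  IsCompact K ∧ Convex ℝ K ∧ (0 : EuclideanSpace ℝ (Fin n)) ∈ interior K

/-- The radial function `ρ_K(u) = max {r > 0 : r • u ∈ K}`. -/
def radialFn {n : ℕ} (K : Set (EuclideanSpace ℝ (Fin n))) (u : EuclideanSpace ℝ (Fin n)) : ℝ :=
  sSup {r : ℝ | 0 < r ∧ r • u ∈ K}

/-- The support function `h_K(u) = max {x·u : x ∈ K}`. -/
def suppFn {n : ℕ} (K : Set (EuclideanSpace ℝ (Fin n))) (u : EuclideanSpace ℝ (Fin n)) : ℝ :=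
  sSup ((fun x => ⟪x, u⟫) '' K)

/-- The reverse radial Gauss image `α*_K(η)`: unit vectors `x/‖x‖` over boundary
points `x ∈ ∂K` lying on a supporting hyperplane of `K` with outer normal in `η`. -/
def revGauss {n : ℕ} (K η : Set (EuclideanSpace ℝ (Fin n))) :
    Set (EuclideanSpace ℝ (Fin n)) :=
  {v | ∃ x ∈ frontier K, (∃ u ∈ η, ⟪x, u⟫ = suppFn K u) ∧ v = ‖x‖⁻¹ • x}

/-- The dual Orlicz curvature `C̃_φ(K,η) = (1/n) ∫_{α*_K(η)} φ(ρ_K(u)) du`,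
as a set function. -/
def dualCurv {n : ℕ} (φ : ℝ → ℝ) (K η : Set (EuclideanSpace ℝ (Fin n))) : ℝ :=
  (n : ℝ)⁻¹ * ∫ u in revGauss K η, φ (radialFn K u) ∂(sphMeasure n)

/-- The dual Orlicz quermassintegral `Ṽ_ϕ(K) = (1/n) ∫_{S^{n-1}} ϕ(ρ_K(u)) du`. -/
def dualQuerm {n : ℕ} (ϕ : ℝ → ℝ) (K : Set (EuclideanSpace ℝ (Fin n))) : ℝ :=
  (n : ℝ)⁻¹ * ∫ u, ϕ (radialFn K u) ∂(sphMeasure n)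

/-- `μ` is not concentrated in any closed hemisphere. -/
def NotConcentrated {n : ℕ} (μ : Measure (EuclideanSpace ℝ (Fin n))) : Prop :=
  ∀ ξ ∈ unitSphere n, 0 < ∫ θ, max ⟪ξ, θ⟫ 0 ∂μ

/-- Conditions A1)–A3): `ϕ : (0,∞) → (0,∞)` is strictly decreasing with
`ϕ(0⁺) = ∞`, `ϕ(∞) = 0`, differentiable with `ϕ' < 0`, and
`φ(t) = -ϕ'(t)·t` is (positive and) continuous on `(0,∞)`. -/
def CondA (ϕ φ : ℝ → ℝ) : Prop :=
  StrictAntiOn ϕ (Set.Ioi 0) ∧ (∀ t > (0 : ℝ), 0 < ϕ t) ∧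
    Tendsto ϕ (𝓝[>] (0 : ℝ)) atTop ∧ Tendsto ϕ atTop (𝓝 (0 : ℝ)) ∧
    (∀ t > (0 : ℝ), HasDerivAt ϕ (-(φ t) / t) t) ∧
    (∀ t > (0 : ℝ), 0 < φ t) ∧ ContinuousOn φ (Set.Ioi 0)

/-- Conditions B1)–B3): `ϕ : (0,∞) → (0,∞)` is strictly increasing with
`ϕ(0⁺) = 0`, `ϕ(∞) = ∞`, differentiable with `ϕ' > 0`, and
`φ(t) = ϕ'(t)·t` is (positive and) continuous on `(0,∞)`. -/
def CondB (ϕ φ : ℝ → ℝ) : Prop :=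
  StrictMonoOn ϕ (Set.Ioi 0) ∧ (∀ t > (0 : ℝ), 0 < ϕ t) ∧
    Tendsto ϕ (𝓝[>] (0 : ℝ)) (𝓝 (0 : ℝ)) ∧ Tendsto ϕ atTop atTop ∧
    (∀ t > (0 : ℝ), HasDerivAt ϕ (φ t / t) t) ∧
    (∀ t > (0 : ℝ), 0 < φ t) ∧ ContinuousOn φ (Set.Ioi 0)

/-- The Wulff shape `[f] = ⋂_{u ∈ Ω} {x : x·u ≤ f(u)}`. -/
def wulff {n : ℕ} (Ω : Set (EuclideanSpace ℝ (Fin n))) (f : EuclideanSpace ℝ (Fin n) → ℝ) :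
    Set (EuclideanSpace ℝ (Fin n)) :=
  ⋂ u ∈ Ω, {x | ⟪x, u⟫ ≤ f u}

/-- The convex hull `⟨ρ⟩ = conv {ρ(u) u : u ∈ Ω}`. -/
def sphHull {n : ℕ} (Ω : Set (EuclideanSpace ℝ (Fin n))) (ρ : EuclideanSpace ℝ (Fin n) → ℝ) :
    Set (EuclideanSpace ℝ (Fin n)) :=
  convexHull ℝ ((fun u => ρ u • u) '' Ω)

/-- The set `∂′K` of boundary points of `K` having a unique outer unit normal. -/
def uniqNormalPts {n : ℕ} (K : Set (EuclideanSpace ℝ (Fin n))) :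
    Set (EuclideanSpace ℝ (Fin n)) :=
  {x | x ∈ frontier K ∧ ∃! v, v ∈ unitSphere n ∧ ⟪x, v⟫ = suppFn K v}

/-- The polar body `K* = {x : x·y ≤ 1 for all y ∈ K}`. -/
def polarBody {n : ℕ} (K : Set (EuclideanSpace ℝ (Fin n))) :
    Set (EuclideanSpace ℝ (Fin n)) :=
  {x | ∀ y ∈ K, ⟪x, y⟫ ≤ 1}

/-- `Ω` is a closed subset of `S^{n-1}` not contained in any closed hemisphere. -/
def GoodOmega {n : ℕ} (Ω : Set (EuclideanSpace ℝ (Fin n))) : Prop :=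
  Ω ⊆ unitSphere n ∧ IsClosed Ω ∧ ∀ ξ ∈ unitSphere n, ∃ u ∈ Ω, ⟪ξ, u⟫ < 0
lemma radial_spec {n : ℕ} {K : Set (EuclideanSpace ℝ (Fin n))} (hK : IsConvexBody0 K)
    {r R : ℝ} (hr : 0 < r) (hball : closedBall (0 : EuclideanSpace ℝ (Fin n)) r ⊆ K)
    (hR : ∀ x ∈ K, ‖x‖ ≤ R) {u : EuclideanSpace ℝ (Fin n)} (hu : ‖u‖ = 1) :
    r ≤ radialFn K u ∧ radialFn K u ≤ R ∧ radialFn K u • u ∈ K ∧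
      (∀ t : ℝ, 0 < t → t ≤ radialFn K u → t • u ∈ K) ∧
      radialFn K u • u ∈ frontier K ∧
      (∀ t : ℝ, 0 < t → t < radialFn K u → t • u ∈ interior K) := by
  obtain ⟨hcomp, hconv, h0⟩ := hK
  have hKclosed : IsClosed K := hcomp.isClosed
  set S := {t : ℝ | 0 < t ∧ t • u ∈ K} with hSdef
  have hnorm : ∀ t : ℝ, 0 ≤ t → ‖t • u‖ = t := fun t ht => by
    rw [norm_smul, hu, mul_one, Real.norm_eq_abs, abs_of_nonneg ht]
  have hrS : r ∈ S := by
    refine ⟨hr, hball ?_⟩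
    rw [mem_closedBall, dist_zero_right, hnorm r hr.le]
  have hbddf : ∀ t ∈ S, t ≤ R := fun t ht => by
    have h1 := hR _ ht.2
    rwa [hnorm t ht.1.le] at h1
  have hbdd : BddAbove S := ⟨R, hbddf⟩
  have hne : S.Nonempty := ⟨r, hrS⟩
  have h1 : r ≤ radialFn K u := le_csSup hbdd hrS
  have h2 : radialFn K u ≤ R := csSup_le hne hbddf
  have hρpos : 0 < radialFn K u := lt_of_lt_of_le hr h1
  have hmem : radialFn K u • u ∈ K := by
    have hcl : radialFn K u ∈ closure S := csSup_mem_closure hne hbdd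
    have hsub : closure S ⊆ {t : ℝ | t • u ∈ K} := by
      refine closure_minimal (fun t ht => ht.2) ?_
      exact hKclosed.preimage (by fun_prop)
    exact hsub hcl
  have hscale : ∀ t : ℝ, 0 < t → t ≤ radialFn K u → t • u ∈ K := by
    intro t ht hle
    rcases eq_or_lt_of_le hle with h | h
    · exact h ▸ hmem
    · have ha0 : (0:ℝ) ≤ t / radialFn K u := (div_pos ht hρpos).le
      have ha1 : t / radialFn K u ≤ 1 := (div_le_one hρpos).2 h.le
      have hxx := hconv (a := t / radialFn K u) (b := 1 - t / radialFn K u) hmem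
        (interior_subset h0) ha0 (by linarith) (by ring)
      rw [smul_zero, add_zero, smul_smul, div_mul_cancel₀ _ hρpos.ne'] at hxx
      exact hxx
  have hint : ∀ t : ℝ, 0 < t → t < radialFn K u → t • u ∈ interior K := by
    intro t ht hlt
    have ha : 0 < 1 - t / radialFn K u := by
      have : t / radialFn K u < 1 := (div_lt_one hρpos).2 hlt
      linarith
    have hb : (0:ℝ) ≤ t / radialFn K u := (div_pos ht hρpos).le
    have hxx := hconv.combo_interior_closure_mem_interior (a := 1 - t / radialFn K u)
      (b := t / radialFn K u) h0 (subset_closure hmem) ha hb (by ring)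
    rw [smul_zero, zero_add, smul_smul, div_mul_cancel₀ _ hρpos.ne'] at hxx
    exact hxx
  refine ⟨h1, h2, hmem, hscale, ?_, hint⟩
  · rw [hKclosed.frontier_eq]
    refine mem_diff_of_mem hmem ?_
    intro hintmem
    obtain ⟨ε, hε, hballsub⟩ := Metric.isOpen_iff.1 isOpen_interior _ hintmem
    have hmem2 : (radialFn K u + ε / 2) • u ∈ K := by
      refine interior_subset (hballsub ?_)
      rw [mem_ball, dist_eq_norm, ← sub_smul, add_sub_cancel_left, hnorm _ (by linarith)]
      linarith
    have hmem3 : radialFn K u + ε / 2 ∈ S := ⟨by linarith, hmem2⟩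
    have hle2 : radialFn K u + ε / 2 ≤ radialFn K u := le_csSup hbdd hmem3
    linarith

lemma radial_continuousOn {n : ℕ} {K : Set (EuclideanSpace ℝ (Fin n))} (hK : IsConvexBody0 K)
    {r R : ℝ} (hr : 0 < r) (hball : closedBall (0 : EuclideanSpace ℝ (Fin n)) r ⊆ K)
    (hR : ∀ x ∈ K, ‖x‖ ≤ R) :
    ContinuousOn (radialFn K) (sphere (0 : EuclideanSpace ℝ (Fin n)) 1) := by
  have hKclosed : IsClosed K := hK.1.isClosed
  intro u hu
  rw [mem_sphere_zero_iff_norm] at hu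
  obtain ⟨h1u, h2u, hmemu, hscaleu, hfru, hintu⟩ := radial_spec hK hr hball hR hu
  rw [Metric.continuousWithinAt_iff]
  intro ε hε
  -- upper semicontinuity data
  set t₁ := radialFn K u + ε with ht₁def
  have ht₁pos : 0 < t₁ := by have := lt_of_lt_of_le hr h1u; linarith
  have ht₁notin : t₁ • u ∉ K := by
    intro hmem
    have : t₁ ∈ {t : ℝ | 0 < t ∧ t • u ∈ K} := ⟨ht₁pos, hmem⟩
    have hb : BddAbove {t : ℝ | 0 < t ∧ t • u ∈ K} := ⟨R, fun t ht => by
      have h1 := hR _ ht.2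
      rwa [norm_smul, hu, mul_one, Real.norm_eq_abs, abs_of_nonneg ht.1.le] at h1⟩
    have hle3 : t₁ ≤ radialFn K u := le_csSup hb this
    simp only [ht₁def] at hle3
    linarith
  obtain ⟨d₁, hd₁, hball₁⟩ : ∃ d > 0, ball (t₁ • u) d ⊆ Kᶜ := by
    obtain ⟨d, hd, hsub⟩ := Metric.isOpen_iff.1 hKclosed.isOpen_compl _ ht₁notin
    exact ⟨d, hd, hsub⟩
  -- lower semicontinuity data
  obtain ⟨d₂, hd₂, hlow⟩ : ∃ d > 0, ∀ v ∈ sphere (0 : EuclideanSpace ℝ (Fin n)) 1,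
      dist v u < d → radialFn K u - ε < radialFn K v := by
    by_cases hcase : radialFn K u - ε < r
    · refine ⟨1, one_pos, fun v hv _ => ?_⟩
      rw [mem_sphere_zero_iff_norm] at hv
      have := (radial_spec hK hr hball hR hv).1
      linarith
    · push_neg at hcase
      obtain ⟨t₂, ht₂def⟩ : ∃ t : ℝ, t = radialFn K u - ε / 2 := ⟨_, rfl⟩
      have ht₂pos : 0 < t₂ := by rw [ht₂def]; linarith
      have ht₂lt : t₂ < radialFn K u := by rw [ht₂def]; linarith
      have hintm := hintu t₂ ht₂pos ht₂lt
      obtain ⟨d, hd, hsub⟩ := Metric.isOpen_iff.1 isOpen_interior _ hintm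
      refine ⟨d / t₂, div_pos hd ht₂pos, fun v hv hdist => ?_⟩
      rw [mem_sphere_zero_iff_norm] at hv
      have hmemv : t₂ • v ∈ K := by
        refine interior_subset (hsub ?_)
        rw [mem_ball, dist_eq_norm, ← smul_sub, norm_smul, Real.norm_eq_abs,
          abs_of_pos ht₂pos]
        calc t₂ * ‖v - u‖ < t₂ * (d / t₂) := by
              refine mul_lt_mul_of_pos_left ?_ ht₂pos
              rwa [dist_eq_norm] at hdist
          _ = d := by field_simp
      have hb : BddAbove {t : ℝ | 0 < t ∧ t • v ∈ K} := ⟨R, fun t ht => by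
        have h1 := hR _ ht.2
        rwa [norm_smul, hv, mul_one, Real.norm_eq_abs, abs_of_nonneg ht.1.le] at h1⟩
      have hle4 : t₂ ≤ radialFn K v := le_csSup hb ⟨ht₂pos, hmemv⟩
      rw [ht₂def] at hle4
      linarith
  refine ⟨min (d₁ / t₁) d₂, lt_min (div_pos hd₁ ht₁pos) hd₂, fun v hv hdist => ?_⟩
  have hvs := hv
  rw [mem_sphere_zero_iff_norm] at hvs
  have hlower := hlow v hv (lt_of_lt_of_le hdist (min_le_right _ _))
  have hupper : radialFn K v < radialFn K u + ε := by
    by_contra hcon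
    push_neg at hcon
    have hmemv : t₁ • v ∈ K := (radial_spec hK hr hball hR hvs).2.2.2.1 t₁ ht₁pos hcon
    have : t₁ • v ∈ ball (t₁ • u) d₁ := by
      rw [mem_ball, dist_eq_norm, ← smul_sub, norm_smul, Real.norm_eq_abs, abs_of_pos ht₁pos]
      calc t₁ * ‖v - u‖ < t₁ * (d₁ / t₁) := by
            refine mul_lt_mul_of_pos_left ?_ ht₁pos
            have := lt_of_lt_of_le hdist (min_le_left _ _)
            rwa [dist_eq_norm] at this
        _ = d₁ := by field_simp
    exact hball₁ this hmemv
  rw [Real.dist_eq, abs_sub_lt_iff]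
  constructor <;> linarith

lemma exists_unit_normal {n : ℕ} {K : Set (EuclideanSpace ℝ (Fin n))} (hK : IsConvexBody0 K)
    {x : EuclideanSpace ℝ (Fin n)} (hx : x ∈ frontier K) :
    ∃ u : EuclideanSpace ℝ (Fin n), ‖u‖ = 1 ∧ (∀ y ∈ K, ⟪y, u⟫ ≤ ⟪x, u⟫) ∧
      ⟪x, u⟫ = suppFn K u := by
  obtain ⟨hcomp, hconv, h0⟩ := hK
  have hKclosed : IsClosed K := hcomp.isClosed
  have hxK : x ∈ K := hKclosed.frontier_subset hx
  have hxnotint : x ∉ interior K := by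
    rw [hKclosed.frontier_eq] at hx; exact hx.2
  obtain ⟨f, hf⟩ := geometric_hahn_banach_open_point (hconv.interior) isOpen_interior hxnotint
  have hf0 : (0:ℝ) < f x := by simpa using hf 0 h0
  have hfK : ∀ y ∈ K, f y ≤ f x := by
    intro y hy
    by_contra hcon
    push_neg at hcon
    have hfy : 0 < f y := lt_trans hf0 hcon
    set a := (f y - f x) / (2 * f y) with ha
    have ha0 : 0 < a := div_pos (by linarith) (by linarith)
    have ha1 : a < 1 := by
      rw [ha, div_lt_one (by positivity)]
      linarith
    have hcombo := hconv.combo_interior_closure_mem_interior h0 (subset_closure hy)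
      (by linarith : (0:ℝ) < a) (by linarith : (0:ℝ) ≤ 1 - a) (by ring)
    have := hf _ hcombo
    simp only [smul_zero, zero_add, _root_.map_smul, smul_eq_mul] at this
    rw [ha] at this
    have key : (1 - (f y - f x) / (2 * f y)) * f y = (f y + f x) / 2 := by
      field_simp
      ring
    rw [key] at this
    linarith
  set u₀ := (InnerProductSpace.toDual ℝ (EuclideanSpace ℝ (Fin n))).symm f with hu₀
  have hu₀app : ∀ y, ⟪u₀, y⟫ = f y := fun y => InnerProductSpace.toDual_symm_apply
  have hu₀app2 : ∀ y, ⟪y, u₀⟫ = f y := fun y => by rw [real_inner_comm]; exact hu₀app y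
  have hu₀ne : u₀ ≠ 0 := by
    intro hc
    have := hu₀app x
    rw [hc, inner_zero_left] at this
    linarith
  have hval : ∀ y, ⟪y, ‖u₀‖⁻¹ • u₀⟫ = ‖u₀‖⁻¹ * f y := fun y => by
    rw [real_inner_smul_right, hu₀app2]
  refine ⟨‖u₀‖⁻¹ • u₀, norm_smul_inv_norm hu₀ne, ?_, ?_⟩
  · intro y hy
    rw [hval, hval]
    exact mul_le_mul_of_nonneg_left (hfK y hy) (inv_pos.2 (norm_pos_iff.2 hu₀ne)).le
  · have hne : ((fun y => ⟪y, ‖u₀‖⁻¹ • u₀⟫) '' K).Nonempty := ⟨_, mem_image_of_mem _ hxK⟩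
    refine le_antisymm (le_csSup ⟨‖u₀‖⁻¹ * f x, ?_⟩ (mem_image_of_mem _ hxK)) (csSup_le hne ?_)
    · rintro z ⟨y, hy, rfl⟩
      simp only [hval]
      exact mul_le_mul_of_nonneg_left (hfK y hy) (inv_pos.2 (norm_pos_iff.2 hu₀ne)).le
    · rintro z ⟨y, hy, rfl⟩
      simp only [hval]
      exact mul_le_mul_of_nonneg_left (hfK y hy) (inv_pos.2 (norm_pos_iff.2 hu₀ne)).le

lemma insertNth_isometry {k : ℕ} (i : Fin (k + 1)) (c : ℝ) :
    Isometry (fun p : Fin k → ℝ => i.insertNth (α := fun _ => ℝ) c p) := by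
  refine Isometry.of_dist_eq fun p q => ?_
  refine le_antisymm ?_ ?_
  · rw [dist_pi_le_iff dist_nonneg]
    intro j
    rcases eq_or_ne j i with rfl | hj
    · simpa using dist_nonneg
    · obtain ⟨k', rfl⟩ := Fin.exists_succAbove_eq hj
      simp only [Fin.insertNth_apply_succAbove]
      exact dist_le_pi_dist p q k'
  · rw [dist_pi_le_iff dist_nonneg]
    intro j
    calc dist (p j) (q j)
        = dist (i.insertNth (α := fun _ => ℝ) c p (i.succAbove j))
            (i.insertNth (α := fun _ => ℝ) c q (i.succAbove j)) := by
          simp only [Fin.insertNth_apply_succAbove]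
      _ ≤ _ := dist_le_pi_dist _ _ _

lemma piSphere_hausdorff_lt_top (m : ℕ) :
    μH[(m : ℝ) + 1] (sphere (0 : Fin (m + 2) → ℝ) 1) < ⊤ := by
  classical
  have hd0 : (0:ℝ) ≤ (m : ℝ) + 1 := by positivity
  have hcast : ((m : ℝ) + 1) = ((Fintype.card (Fin (m + 1)) : ℕ) : ℝ) := by
    simp [Fintype.card_fin]
  set F : Fin (m + 2) → ℝ → Set (Fin (m + 2) → ℝ) :=
    fun i c => (fun p : Fin (m + 1) → ℝ => i.insertNth (α := fun _ => ℝ) c p) '' closedBall 0 1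
    with hF
  have hface : ∀ i c, μH[(m : ℝ) + 1] (F i c) < ⊤ := by
    intro i c
    have h1 : μH[(m : ℝ) + 1] (F i c) = μH[(m : ℝ) + 1] (closedBall (0 : Fin (m+1) → ℝ) 1) :=
      (insertNth_isometry i c).hausdorffMeasure_image (Or.inl hd0) _
    rw [h1, hcast, hausdorffMeasure_pi_real]
    exact (isCompact_closedBall _ _).measure_lt_top
  have hcover : sphere (0 : Fin (m + 2) → ℝ) 1 ⊆ ⋃ i, (F i 1 ∪ F i (-1)) := by
    intro x hx
    rw [mem_sphere_zero_iff_norm] at hx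
    obtain ⟨i, -, hi⟩ := Finset.exists_mem_eq_sup (Finset.univ : Finset (Fin (m + 2)))
      ⟨0, Finset.mem_univ 0⟩ (fun i => ‖x i‖₊)
    have hxi : ‖x i‖ = 1 := by
      have h1 : ‖x‖₊ = ‖x i‖₊ := by rw [Pi.nnnorm_def, hi]
      have : ‖x‖ = ‖x i‖ := congrArg NNReal.toReal h1
      rw [← this, hx]
    have hp : (fun j => x (i.succAbove j)) ∈ closedBall (0 : Fin (m+1) → ℝ) 1 := by
      rw [mem_closedBall_zero_iff]
      refine (pi_norm_le_iff_of_nonneg zero_le_one).2 fun j => ?_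
      rw [← hx]; exact norm_le_pi_norm x _
    have hins : i.insertNth (x i) (fun j => x (i.succAbove j)) = x := by
      funext j
      rcases eq_or_ne j i with rfl | hj
      · rw [Fin.insertNth_apply_same]
      · obtain ⟨k', rfl⟩ := Fin.exists_succAbove_eq hj
        rw [Fin.insertNth_apply_succAbove]
    rcases (abs_eq zero_le_one).1 (by rwa [Real.norm_eq_abs] at hxi) with h1 | h1
    · refine mem_iUnion.2 ⟨i, Or.inl ⟨_, hp, ?_⟩⟩
      rw [h1] at hins; exact hins
    · refine mem_iUnion.2 ⟨i, Or.inr ⟨_, hp, ?_⟩⟩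
      rw [h1] at hins; exact hins
  calc μH[(m : ℝ) + 1] (sphere (0 : Fin (m + 2) → ℝ) 1)
      ≤ μH[(m : ℝ) + 1] (⋃ i, (F i 1 ∪ F i (-1))) := measure_mono hcover
    _ ≤ ∑' i : Fin (m + 2), μH[(m : ℝ) + 1] (F i 1 ∪ F i (-1)) := measure_iUnion_le _
    _ < ⊤ := by
        rw [tsum_fintype]
        refine ENNReal.sum_lt_top.2 fun i _ => ?_
        exact lt_of_le_of_lt (measure_union_le _ _)
          (ENNReal.add_lt_top.2 ⟨hface i 1, hface i (-1)⟩)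

lemma radialproj_lipschitzOnWith {E : Type*} [NormedAddCommGroup E] [NormedSpace ℝ E] :
    LipschitzOnWith 2 (fun x : E => ‖x‖⁻¹ • x) {x : E | 1 ≤ ‖x‖} := by
  rw [lipschitzOnWith_iff_dist_le_mul]
  intro x hx y hy
  simp only [mem_setOf_eq] at hx hy
  have hxpos : (0:ℝ) < ‖x‖ := lt_of_lt_of_le one_pos hx
  have hypos : (0:ℝ) < ‖y‖ := lt_of_lt_of_le one_pos hy
  rw [dist_eq_norm, dist_eq_norm]
  have key : ‖x‖⁻¹ • x - ‖y‖⁻¹ • y = ‖x‖⁻¹ • (x - y) + (‖x‖⁻¹ - ‖y‖⁻¹) • y := by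
    rw [smul_sub, sub_smul]; abel
  rw [key]
  have h1 : ‖(‖x‖⁻¹ : ℝ) • (x - y)‖ = ‖x‖⁻¹ * ‖x - y‖ := by
    rw [norm_smul, Real.norm_eq_abs, abs_of_pos (inv_pos.2 hxpos)]
  have h2 : ‖((‖x‖⁻¹ - ‖y‖⁻¹ : ℝ)) • y‖ = |‖x‖⁻¹ - ‖y‖⁻¹| * ‖y‖ := by
    rw [norm_smul, Real.norm_eq_abs]
  have h3 : |‖x‖⁻¹ - ‖y‖⁻¹| * ‖y‖ ≤ ‖x‖⁻¹ * ‖x - y‖ := by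
    have heq : ‖x‖⁻¹ - ‖y‖⁻¹ = (‖y‖ - ‖x‖) / (‖x‖ * ‖y‖) := by field_simp
    rw [heq, abs_div, abs_of_pos (by positivity : (0:ℝ) < ‖x‖ * ‖y‖), div_mul_eq_mul_div,
      div_le_iff₀ (by positivity : (0:ℝ) < ‖x‖ * ‖y‖)]
    have habs : |‖y‖ - ‖x‖| ≤ ‖x - y‖ := by
      rw [abs_sub_comm]; exact abs_norm_sub_norm_le _ _
    calc |‖y‖ - ‖x‖| * ‖y‖ ≤ ‖x - y‖ * ‖y‖ :=
          mul_le_mul_of_nonneg_right habs (norm_nonneg _)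
      _ = ‖x‖⁻¹ * ‖x - y‖ * (‖x‖ * ‖y‖) := by field_simp
  have hxinv : ‖x‖⁻¹ ≤ 1 := by
    rw [inv_le_one_iff₀]; right; exact hx
  calc ‖(‖x‖⁻¹ : ℝ) • (x - y) + (‖x‖⁻¹ - ‖y‖⁻¹) • y‖
      ≤ ‖(‖x‖⁻¹ : ℝ) • (x - y)‖ + ‖((‖x‖⁻¹ - ‖y‖⁻¹ : ℝ)) • y‖ := norm_add_le _ _
    _ ≤ ‖x‖⁻¹ * ‖x - y‖ + ‖x‖⁻¹ * ‖x - y‖ := by rw [h1, h2]; linarith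
    _ = 2 * (‖x‖⁻¹ * ‖x - y‖) := by ring
    _ ≤ 2 * (1 * ‖x - y‖) := by
        refine mul_le_mul_of_nonneg_left ?_ (by norm_num)
        exact mul_le_mul_of_nonneg_right hxinv (norm_nonneg _)
    _ = (2 : ℝ≥0) * ‖x - y‖ := by norm_num

lemma euclid_ball_hausdorff_pos (k : ℕ) {s : ℝ} (hs : 0 < s) :
    0 < μH[((k : ℝ) + 1)] (ball (0 : EuclideanSpace ℝ (Fin (k + 1))) s) := by
  have hd0 : (0:ℝ) ≤ (k : ℝ) + 1 := by positivity
  set e := WithLp.equiv 2 (Fin (k + 1) → ℝ) with he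
  set C := ((Fintype.card (Fin (k + 1)) : ℝ≥0) ^ (1 / (2:ℝ≥0∞)).toReal) with hC
  have hanti : AntilipschitzWith C e := PiLp.antilipschitzWith_ofLp 2 _
  have hCpos : 0 < (C : ℝ) := by
    refine NNReal.coe_pos.2 ?_
    refine NNReal.rpow_pos ?_
    simp [Fintype.card_fin]
  have hsub : ball (0 : Fin (k+1) → ℝ) (s / C) ⊆ e '' ball (0 : EuclideanSpace ℝ (Fin (k+1))) s := by
    intro y hy
    rw [mem_ball_zero_iff] at hy
    refine ⟨e.symm y, ?_, (WithLp.equiv 2 _).apply_symm_apply y⟩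
    rw [mem_ball_zero_iff]
    have h1 : dist (e.symm y) 0 ≤ C * dist (e (e.symm y)) (e 0) := hanti.le_mul_dist _ _
    rw [(WithLp.equiv 2 _).apply_symm_apply, show e 0 = 0 from rfl] at h1
    rw [← dist_zero_right]
    calc dist (e.symm y) 0 ≤ C * dist y 0 := h1
      _ = C * ‖y‖ := by rw [dist_zero_right]
      _ < C * (s / C) := by exact mul_lt_mul_of_pos_left hy hCpos
      _ = s := by field_simp
  have hcast : ((k : ℝ) + 1) = ((Fintype.card (Fin (k + 1)) : ℕ) : ℝ) := by
    simp [Fintype.card_fin]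
  have hvol : 0 < μH[((k : ℝ) + 1)] (ball (0 : Fin (k+1) → ℝ) (s / C)) := by
    rw [hcast, hausdorffMeasure_pi_real]
    exact measure_ball_pos _ _ (div_pos hs hCpos)
  have hlip : LipschitzWith 1 e := PiLp.lipschitzWith_ofLp 2 _
  have himg := hlip.hausdorffMeasure_image_le hd0 (ball (0 : EuclideanSpace ℝ (Fin (k+1))) s)
  calc (0:ℝ≥0∞) < μH[((k : ℝ) + 1)] (ball (0 : Fin (k+1) → ℝ) (s / C)) := hvol
    _ ≤ μH[((k : ℝ) + 1)] (e '' ball (0 : EuclideanSpace ℝ (Fin (k+1))) s) := measure_mono hsub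
    _ ≤ (1:ℝ≥0) ^ ((k:ℝ)+1) * μH[((k : ℝ) + 1)] (ball (0 : EuclideanSpace ℝ (Fin (k+1))) s) :=
        himg
    _ = μH[((k : ℝ) + 1)] (ball (0 : EuclideanSpace ℝ (Fin (k+1))) s) := by
        simp

lemma euclid_sphere_hausdorff_lt_top (m : ℕ) :
    μH[(m : ℝ) + 1] (sphere (0 : EuclideanSpace ℝ (Fin (m + 2))) 1) < ⊤ := by
  have hd0 : (0:ℝ) ≤ (m : ℝ) + 1 := by positivity
  set e := WithLp.equiv 2 (Fin (m + 2) → ℝ) with he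
  set C := ((Fintype.card (Fin (m + 2)) : ℝ≥0) ^ (1 / (2:ℝ≥0∞)).toReal) with hC
  have hanti : AntilipschitzWith C e := PiLp.antilipschitzWith_ofLp 2 _
  have hlipsymm : LipschitzWith C e.symm := by
    intro x y
    have := hanti (e.symm x) (e.symm y)
    rwa [(WithLp.equiv 2 _).apply_symm_apply, (WithLp.equiv 2 _).apply_symm_apply] at this
  have hlip : LipschitzWith 1 e := PiLp.lipschitzWith_ofLp 2 _
  set S := e.symm '' sphere (0 : Fin (m + 2) → ℝ) 1 with hS
  have hSsub : S ⊆ {x : EuclideanSpace ℝ (Fin (m + 2)) | 1 ≤ ‖x‖} := by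
    rintro x ⟨y, hy, rfl⟩
    rw [mem_sphere_zero_iff_norm] at hy
    have h1 : dist (e (e.symm y)) (e 0) ≤ 1 * dist (e.symm y) 0 := by
      simpa using hlip.dist_le_mul (e.symm y) 0
    rw [(WithLp.equiv 2 _).apply_symm_apply, show e 0 = 0 from rfl, one_mul, dist_zero_right,
      dist_zero_right, hy] at h1
    exact h1
  have hcover : sphere (0 : EuclideanSpace ℝ (Fin (m + 2))) 1 ⊆
      (fun x : EuclideanSpace ℝ (Fin (m + 2)) => ‖x‖⁻¹ • x) '' S := by
    intro v hv
    rw [mem_sphere_zero_iff_norm] at hv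
    have hvne : v ≠ 0 := by
      intro hc; rw [hc, norm_zero] at hv; norm_num at hv
    have htne : e v ≠ 0 := by
      intro hc
      have : v = 0 := by
        have := congrArg e.symm hc
        rwa [(WithLp.equiv 2 _).symm_apply_apply, show e.symm 0 = 0 from rfl] at this
      exact hvne this
    set t := ‖e v‖ with ht
    have htpos : 0 < t := norm_pos_iff.2 htne
    refine ⟨t⁻¹ • v, ⟨e (t⁻¹ • v), ?_, ((WithLp.equiv 2 _)).symm_apply_apply _⟩, ?_⟩
    · rw [mem_sphere_zero_iff_norm, show e (t⁻¹ • v) = t⁻¹ • e v from rfl, norm_smul, Real.norm_eq_abs,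
        abs_of_pos (inv_pos.2 htpos), ← ht, inv_mul_cancel₀ htpos.ne']
    · have hnx : ‖t⁻¹ • v‖ = t⁻¹ := by
        rw [norm_smul, Real.norm_eq_abs, abs_of_pos (inv_pos.2 htpos), hv, mul_one]
      show ‖t⁻¹ • v‖⁻¹ • (t⁻¹ • v) = v
      rw [hnx, inv_inv, smul_smul, mul_inv_cancel₀ htpos.ne', one_smul]
  have h1 := (radialproj_lipschitzOnWith (E := EuclideanSpace ℝ (Fin (m + 2)))).mono hSsub
  have himg := h1.hausdorffMeasure_image_le hd0
  have himg2 := hlipsymm.hausdorffMeasure_image_le hd0 (sphere (0 : Fin (m + 2) → ℝ) 1)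
  calc μH[(m : ℝ) + 1] (sphere (0 : EuclideanSpace ℝ (Fin (m + 2))) 1)
      ≤ μH[(m : ℝ) + 1] ((fun x : EuclideanSpace ℝ (Fin (m + 2)) => ‖x‖⁻¹ • x) '' S) :=
        measure_mono hcover
    _ ≤ (2:ℝ≥0) ^ ((m:ℝ)+1) * μH[(m : ℝ) + 1] S := himg
    _ ≤ (2:ℝ≥0) ^ ((m:ℝ)+1) * ((C:ℝ≥0) ^ ((m:ℝ)+1) *
          μH[(m : ℝ) + 1] (sphere (0 : Fin (m + 2) → ℝ) 1)) := by
        exact mul_le_mul_right himg2 _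
    _ < ⊤ := by
        refine ENNReal.mul_lt_top ?_ (ENNReal.mul_lt_top ?_ (piSphere_hausdorff_lt_top m))
        · exact ENNReal.rpow_lt_top_of_nonneg hd0 ENNReal.coe_ne_top
        · exact ENNReal.rpow_lt_top_of_nonneg hd0 ENNReal.coe_ne_top

lemma proj_lipschitz {E : Type*} [NormedAddCommGroup E] [InnerProductSpace ℝ E]
    {ξ : E} (hξ : ‖ξ‖ = 1) :
    LipschitzWith 1 (fun x : E => x - ⟪ξ, x⟫ • ξ) := by
  have hbound : ∀ z : E, ‖z - ⟪ξ, z⟫ • ξ‖ ≤ ‖z‖ := by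
    intro z
    have hsq : ‖z - ⟪ξ, z⟫ • ξ‖ ^ 2 = ‖z‖ ^ 2 - ⟪ξ, z⟫ ^ 2 := by
      rw [norm_sub_sq_real, real_inner_smul_right, norm_smul, Real.norm_eq_abs,
        real_inner_comm z ξ, hξ, mul_one, sq_abs]
      ring
    have h2 : ‖z - ⟪ξ, z⟫ • ξ‖ ^ 2 ≤ ‖z‖ ^ 2 := by
      rw [hsq]; nlinarith [sq_nonneg (⟪ξ, z⟫ : ℝ)]
    nlinarith [norm_nonneg (z - ⟪ξ, z⟫ • ξ), norm_nonneg z]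
  refine LipschitzWith.of_dist_le_mul fun x y => ?_
  rw [dist_eq_norm, dist_eq_norm, NNReal.coe_one, one_mul]
  have hrw : (x - ⟪ξ, x⟫ • ξ) - (y - ⟪ξ, y⟫ • ξ) = (x - y) - ⟪ξ, x - y⟫ • ξ := by
    rw [inner_sub_right, sub_smul]; abel
  rw [hrw]
  exact hbound (x - y)

lemma cap_hausdorff_pos (m : ℕ) {ξ : EuclideanSpace ℝ (Fin (m + 2))} (hξ : ‖ξ‖ = 1)
    {c : ℝ} (hc : c < 1) :
    0 < μH[(m : ℝ) + 1]
      (sphere (0 : EuclideanSpace ℝ (Fin (m + 2))) 1 ∩ {v | c < ⟪ξ, v⟫}) := by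
  have hd0 : (0:ℝ) ≤ (m : ℝ) + 1 := by positivity
  have hξne : ξ ≠ 0 := by intro h; rw [h, norm_zero] at hξ; norm_num at hξ
  set c' := max c 0 with hc'
  have hc'0 : 0 ≤ c' := le_max_right _ _
  have hc'1 : c' < 1 := max_lt hc one_pos
  set s := Real.sqrt (1 - c' ^ 2) with hsdef
  have hspos : 0 < s := Real.sqrt_pos.2 (by nlinarith)
  have hssq : s ^ 2 = 1 - c' ^ 2 := Real.sq_sqrt (by nlinarith)
  have hs1 : s ≤ 1 := by
    calc s = Real.sqrt (1 - c' ^ 2) := hsdef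
      _ ≤ Real.sqrt 1 := Real.sqrt_le_sqrt (by nlinarith)
      _ = 1 := Real.sqrt_one
  haveI : Fact (Module.finrank ℝ (EuclideanSpace ℝ (Fin (m + 2))) = (m + 1) + 1) :=
    ⟨by simp [finrank_euclideanSpace_fin]⟩
  set F := (ℝ ∙ ξ)ᗮ with hF
  set e := (OrthonormalBasis.fromOrthogonalSpanSingleton (𝕜 := ℝ) (m + 1) hξne).repr with he
  -- the projected ball is inside the image of the cap
  have hproj_img : (Subtype.val '' ball (0 : F) s) ⊆
      (fun x : EuclideanSpace ℝ (Fin (m + 2)) => x - ⟪ξ, x⟫ • ξ) ''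
        (sphere (0 : EuclideanSpace ℝ (Fin (m + 2))) 1 ∩ {v | c < ⟪ξ, v⟫}) := by
    rintro _ ⟨w, hw, rfl⟩
    rw [mem_ball_zero_iff] at hw
    have hwnorm : ‖(w : EuclideanSpace ℝ (Fin (m + 2)))‖ = ‖w‖ := rfl
    have horth : ⟪ξ, (w : EuclideanSpace ℝ (Fin (m + 2)))⟫ = 0 :=
      w.2 ξ (Submodule.mem_span_singleton_self ξ)
    have hw1 : ‖(w : EuclideanSpace ℝ (Fin (m + 2)))‖ < s := by rw [hwnorm]; exact hw
    have hw2 : ‖(w : EuclideanSpace ℝ (Fin (m + 2)))‖ < 1 := lt_of_lt_of_le hw1 hs1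
    have hwpos : 0 ≤ ‖(w : EuclideanSpace ℝ (Fin (m + 2)))‖ := norm_nonneg _
    set a := Real.sqrt (1 - ‖(w : EuclideanSpace ℝ (Fin (m + 2)))‖ ^ 2) with ha
    have ha2 : a ^ 2 = 1 - ‖(w : EuclideanSpace ℝ (Fin (m + 2)))‖ ^ 2 :=
      Real.sq_sqrt (by nlinarith)
    have ha0 : 0 ≤ a := Real.sqrt_nonneg _
    set v := a • ξ + (w : EuclideanSpace ℝ (Fin (m + 2))) with hv
    have hips : ⟪ξ, v⟫ = a := by
      rw [hv, inner_add_right, real_inner_smul_right, horth, add_zero,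
        real_inner_self_eq_norm_sq, hξ]
      norm_num
    have hvnorm : ‖v‖ = 1 := by
      have h2 : ‖v‖ ^ 2 = 1 := by
        rw [hv, norm_add_sq_real, real_inner_smul_left, horth, norm_smul, Real.norm_eq_abs,
          hξ, mul_one, sq_abs]
        nlinarith
      calc ‖v‖ = Real.sqrt (‖v‖ ^ 2) := (Real.sqrt_sq (norm_nonneg v)).symm
        _ = 1 := by rw [h2, Real.sqrt_one]
    have hcgt : c < ⟪ξ, v⟫ := by
      rw [hips]
      have h3 : c' < a := by
        have : c' = Real.sqrt (c' ^ 2) := (Real.sqrt_sq hc'0).symm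
        rw [this, ha]
        refine Real.sqrt_lt_sqrt (by nlinarith) ?_
        nlinarith
      calc c ≤ c' := le_max_left _ _
        _ < a := h3
    refine ⟨v, ⟨mem_sphere_zero_iff_norm.2 hvnorm, hcgt⟩, ?_⟩
    show v - ⟪ξ, v⟫ • ξ = _
    rw [hips, hv, add_sub_cancel_left]
  -- measure chain
  have hiso1 : μH[(m : ℝ) + 1] (Subtype.val '' ball (0 : F) s) =
      μH[(m : ℝ) + 1] (ball (0 : F) s) :=
    F.subtypeₗᵢ.isometry.hausdorffMeasure_image (Or.inl hd0) _
  have himg : e '' ball (0 : F) s = ball (0 : EuclideanSpace ℝ (Fin (m + 1))) s := by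
    ext y
    constructor
    · rintro ⟨x, hx, rfl⟩
      rw [mem_ball_zero_iff] at hx ⊢
      rw [e.norm_map]; exact hx
    · intro hy
      rw [mem_ball_zero_iff] at hy
      refine ⟨e.symm y, ?_, e.apply_symm_apply y⟩
      rw [mem_ball_zero_iff, ← e.norm_map (e.symm y), e.apply_symm_apply]
      exact hy
  have hiso2 : μH[(m : ℝ) + 1] (ball (0 : F) s) =
      μH[(m : ℝ) + 1] (ball (0 : EuclideanSpace ℝ (Fin (m + 1))) s) := by
    rw [← himg]
    exact (e.isometry.hausdorffMeasure_image (Or.inl hd0) _).symm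
  have hlipproj := (proj_lipschitz hξ).hausdorffMeasure_image_le hd0
    (sphere (0 : EuclideanSpace ℝ (Fin (m + 2))) 1 ∩ {v | c < ⟪ξ, v⟫})
  calc (0:ℝ≥0∞) < μH[(m : ℝ) + 1] (ball (0 : EuclideanSpace ℝ (Fin (m + 1))) s) :=
        euclid_ball_hausdorff_pos m hspos
    _ = μH[(m : ℝ) + 1] (Subtype.val '' ball (0 : F) s) := by rw [hiso1, hiso2]
    _ ≤ μH[(m : ℝ) + 1] ((fun x : EuclideanSpace ℝ (Fin (m + 2)) => x - ⟪ξ, x⟫ • ξ) ''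
          (sphere (0 : EuclideanSpace ℝ (Fin (m + 2))) 1 ∩ {v | c < ⟪ξ, v⟫})) :=
        measure_mono hproj_img
    _ ≤ (1:ℝ≥0) ^ ((m:ℝ) + 1) * μH[(m : ℝ) + 1]
          (sphere (0 : EuclideanSpace ℝ (Fin (m + 2))) 1 ∩ {v | c < ⟪ξ, v⟫}) := hlipproj
    _ = μH[(m : ℝ) + 1]
          (sphere (0 : EuclideanSpace ℝ (Fin (m + 2))) 1 ∩ {v | c < ⟪ξ, v⟫}) := by simp

/-- **Theorem 5.1, direction ii) ⇒ i)**. If `n ≥ 2`, `ϕ, φ` satisfy A1)–A3), `μ` is a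
nonzero finite Borel measure on `S^{n-1}` and there is a convex body `K ∈ 𝒦₀ⁿ` with
`μ/|μ| = C̃_φ(K,·)/Ṽ_φ(K)`, then `μ` is not concentrated in any closed hemisphere. -/
theorem dual_orlicz_minkowski_necessity {n : ℕ} (hn : 2 ≤ n) (ϕ φ : ℝ → ℝ)
    (hA : CondA ϕ φ) (μ : Measure (EuclideanSpace ℝ (Fin n))) [IsFiniteMeasure μ]
    (hμ0 : μ ≠ 0) (hμs : μ (unitSphere n)ᶜ = 0)
    (K : Set (EuclideanSpace ℝ (Fin n))) (hK : IsConvexBody0 K)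
    (hrep : ∀ η : Set (EuclideanSpace ℝ (Fin n)), MeasurableSet η →
      (μ η).toReal * dualQuerm φ K = (μ Set.univ).toReal * dualCurv φ K η) :
    NotConcentrated μ := by
  obtain ⟨m, rfl⟩ : ∃ m, n = m + 2 := ⟨n - 2, by omega⟩
  intro ξ hξ
  have hξ1 : ‖ξ‖ = 1 := mem_sphere_zero_iff_norm.1 hξ
  obtain ⟨hφpos, hφcont⟩ : (∀ t > (0:ℝ), 0 < φ t) ∧ ContinuousOn φ (Set.Ioi 0) :=
    ⟨hA.2.2.2.2.2.1, hA.2.2.2.2.2.2⟩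
  -- rewrite the measure
  have hsph : sphMeasure (m + 2) =
      (μH[(m : ℝ) + 1] : Measure (EuclideanSpace ℝ (Fin (m + 2)))).restrict
        (sphere (0 : EuclideanSpace ℝ (Fin (m + 2))) 1) := by
    have hd : ((m + 2 : ℕ) : ℝ) - 1 = (m : ℝ) + 1 := by push_cast; ring
    rw [sphMeasure, hd]; rfl
  haveI hfinsph : IsFiniteMeasure (sphMeasure (m + 2)) := by
    constructor
    rw [hsph, Measure.restrict_apply_univ]
    exact euclid_sphere_hausdorff_lt_top m
  -- geometry of K
  obtain ⟨hcomp, hconv, h0int⟩ := hK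
  have hK' : IsConvexBody0 K := ⟨hcomp, hconv, h0int⟩
  obtain ⟨ε, hε, hball0⟩ := Metric.isOpen_iff.1 isOpen_interior 0 h0int
  set r := ε / 2 with hrdef
  have hr : 0 < r := by positivity
  have hball : closedBall (0 : EuclideanSpace ℝ (Fin (m + 2))) r ⊆ K :=
    (closedBall_subset_ball (by rw [hrdef]; linarith)).trans (hball0.trans interior_subset)
  obtain ⟨R₀, hR₀⟩ := isBounded_iff_forall_norm_le.1 hcomp.isBounded
  set R := max R₀ r with hRdef
  have hR : ∀ x ∈ K, ‖x‖ ≤ R := fun x hx => le_trans (hR₀ x hx) (le_max_left _ _)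
  have hrR : r ≤ R := le_max_right _ _
  have hRpos : 0 < R := lt_of_lt_of_le hr hrR
  -- bounds for φ on [r, R]
  have hIccsub : Icc r R ⊆ Ioi (0:ℝ) := fun t ht => lt_of_lt_of_le hr ht.1
  have hφIcc : ContinuousOn φ (Icc r R) := hφcont.mono hIccsub
  obtain ⟨t₀, ht₀, hmin⟩ := isCompact_Icc.exists_isMinOn ⟨r, le_refl r, hrR⟩ hφIcc
  obtain ⟨t₁, ht₁, hmax⟩ := isCompact_Icc.exists_isMaxOn ⟨r, le_refl r, hrR⟩ hφIcc
  set mφ := φ t₀ with hmφdef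
  set Mφ := φ t₁ with hMφdef
  have hmφ : 0 < mφ := hφpos t₀ (hIccsub ht₀)
  -- the integrand and its clamped version
  set f : EuclideanSpace ℝ (Fin (m + 2)) → ℝ := fun u => φ (radialFn K u) with hfdef
  set g : EuclideanSpace ℝ (Fin (m + 2)) → ℝ :=
    fun u => φ (min (max (radialFn K u) r) R) with hgdef
  have hclampIcc : ∀ u, min (max (radialFn K u) r) R ∈ Icc r R := fun u =>
    ⟨le_min (le_max_right _ _) hrR, min_le_right _ _⟩
  have hfg : ∀ u ∈ sphere (0 : EuclideanSpace ℝ (Fin (m + 2))) 1, f u = g u := by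
    intro u hu
    have hspec := radial_spec hK' hr hball hR (mem_sphere_zero_iff_norm.1 hu)
    rw [hgdef]
    simp only
    rw [max_eq_left hspec.1, min_eq_left hspec.2.1]
  have hgbounds : ∀ u, mφ ≤ g u ∧ ‖g u‖ ≤ Mφ := by
    intro u
    have h1 := hmin (hclampIcc u)
    have h2 := hmax (hclampIcc u)
    have h3 : 0 < g u := hφpos _ (hIccsub (hclampIcc u))
    exact ⟨h1, by rw [Real.norm_eq_abs, abs_of_pos h3]; exact h2⟩
  have hclampcont : Continuous (fun t : ℝ => min (max t r) R) :=
    (continuous_id.max continuous_const).min continuous_const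
  have hgcont : ContinuousOn g (sphere (0 : EuclideanSpace ℝ (Fin (m + 2))) 1) := by
    refine hφcont.comp
      (hclampcont.comp_continuousOn (radial_continuousOn hK' hr hball hR)) ?_
    intro u _
    exact hIccsub (hclampIcc u)
  have hgmeas : AEStronglyMeasurable g (sphMeasure (m + 2)) := by
    rw [hsph]
    exact (hgcont.aemeasurable isClosed_sphere.measurableSet).aestronglyMeasurable
  have hgint : Integrable g (sphMeasure (m + 2)) :=
    (integrable_const Mφ).mono' hgmeas (ae_of_all _ fun u => (hgbounds u).2)
  have hae_sphere : ∀ᵐ u ∂(sphMeasure (m + 2)),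
      u ∈ sphere (0 : EuclideanSpace ℝ (Fin (m + 2))) 1 := by
    rw [hsph]
    exact ae_restrict_mem isClosed_sphere.measurableSet
  have hfeqg : f =ᵐ[sphMeasure (m + 2)] g := hae_sphere.mono fun u hu => hfg u hu
  have hfint : Integrable f (sphMeasure (m + 2)) := hgint.congr hfeqg.symm
  have hflb : ∀ᵐ u ∂(sphMeasure (m + 2)), mφ ≤ f u := by
    refine hae_sphere.mono fun u hu => ?_
    rw [hfg u hu]; exact (hgbounds u).1
  -- positivity of total measure of the sphere
  have hc1 : 1 - r ^ 2 / (2 * R ^ 2) < 1 := by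
    have : 0 < r ^ 2 / (2 * R ^ 2) := by positivity
    linarith
  have hS_pos : 0 < sphMeasure (m + 2) univ := by
    rw [hsph, Measure.restrict_apply_univ]
    refine lt_of_lt_of_le (cap_hausdorff_pos m hξ1 hc1) (measure_mono inter_subset_left)
  have hntoR : (0:ℝ) < ((m + 2 : ℕ) : ℝ)⁻¹ := by
    rw [inv_pos]; exact_mod_cast Nat.succ_pos _
  -- positivity of the dual quermassintegral
  have hVpos : 0 < dualQuerm φ K := by
    rw [dualQuerm]
    refine mul_pos hntoR ?_
    have h1 : mφ * (sphMeasure (m + 2) univ).toReal ≤ ∫ u, f u ∂(sphMeasure (m + 2)) := by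
      have h2 := integral_mono_ae (integrable_const mφ) hfint hflb
      rwa [integral_const, smul_eq_mul, mul_comm] at h2
    have h3 : 0 < (sphMeasure (m + 2) univ).toReal :=
      ENNReal.toReal_pos hS_pos.ne' (measure_ne_top _ _)
    calc (0:ℝ) < mφ * (sphMeasure (m + 2) univ).toReal := mul_pos hmφ h3
      _ ≤ _ := h1
  -- the open half-space of outer normals
  set η := {w : EuclideanSpace ℝ (Fin (m + 2)) | 0 < ⟪ξ, w⟫} with hηdef
  have hηopen : IsOpen η :=
    isOpen_lt continuous_const (Continuous.inner continuous_const continuous_id)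
  have hηmeas : MeasurableSet η := hηopen.measurableSet
  set c := 1 - r ^ 2 / (2 * R ^ 2) with hcdef
  set capSet := sphere (0 : EuclideanSpace ℝ (Fin (m + 2))) 1 ∩ {v | c < ⟪ξ, v⟫} with hcapdef
  have hcapmeas : MeasurableSet capSet := by
    refine isClosed_sphere.measurableSet.inter ?_
    exact (isOpen_lt continuous_const (Continuous.inner continuous_const continuous_id)).measurableSet
  -- the cap is inside the reverse Gauss image of the half-space
  have hcapsub : capSet ⊆ revGauss K η := by
    rintro v ⟨hvs, hvc⟩
    have hv1 : ‖v‖ = 1 := mem_sphere_zero_iff_norm.1 hvs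
    have hspec := radial_spec hK' hr hball hR hv1
    set ρv := radialFn K v with hρvdef
    have hρpos : 0 < ρv := lt_of_lt_of_le hr hspec.1
    obtain ⟨u, hu1, hle, hsupp⟩ := exists_unit_normal hK' hspec.2.2.2.2.1
    have hru : r • u ∈ K := by
      refine hball ?_
      rw [mem_closedBall_zero_iff, norm_smul, hu1, mul_one, Real.norm_eq_abs,
        abs_of_pos hr]
    have h1 : r ≤ ⟪ρv • v, u⟫ := by
      have := hle _ hru
      rwa [real_inner_smul_left, real_inner_self_eq_norm_sq, hu1, one_pow, mul_one] at this
    have h2 : ⟪ρv • v, u⟫ = ρv * ⟪v, u⟫ := real_inner_smul_left _ _ _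
    have hvu : r / R ≤ ⟪v, u⟫ := by
      rw [h2] at h1
      rw [div_le_iff₀ hRpos]
      nlinarith [hspec.2.1]
    have hnormlt : ‖ξ - v‖ < r / R := by
      have hsq : ‖ξ - v‖ ^ 2 = 2 - 2 * ⟪ξ, v⟫ := by
        rw [norm_sub_sq_real, hξ1, hv1]; ring
      have h4 : ‖ξ - v‖ ^ 2 < (r / R) ^ 2 := by
        have hvc' : 1 - r ^ 2 / (2 * R ^ 2) < ⟪ξ, v⟫ := hvc
        have hhalf : (r / R) ^ 2 = 2 * (r ^ 2 / (2 * R ^ 2)) := by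
          rw [div_pow]
          field_simp
        rw [hsq, hhalf]
        linarith
      by_contra hcon
      push_neg at hcon
      nlinarith [norm_nonneg (ξ - v), div_pos hr hRpos]
    have hinner : -(‖ξ - v‖) ≤ ⟪ξ - v, u⟫ := by
      have h := abs_real_inner_le_norm (ξ - v) u
      rw [hu1, mul_one] at h
      linarith [neg_abs_le (⟪ξ - v, u⟫ : ℝ)]
    have hξu : 0 < ⟪ξ, u⟫ := by
      have h5 : ⟪ξ - v, u⟫ = ⟪ξ, u⟫ - ⟪v, u⟫ := inner_sub_left _ _ _
      have h6 : 0 < r / R := div_pos hr hRpos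
      linarith [hinner, hvu, hnormlt, h5]
    refine ⟨ρv • v, hspec.2.2.2.2.1, ⟨u, hξu, hsupp⟩, ?_⟩
    have hnx : ‖ρv • v‖ = ρv := by
      rw [norm_smul, hv1, mul_one, Real.norm_eq_abs, abs_of_pos hρpos]
    rw [hnx, smul_smul, inv_mul_cancel₀ hρpos.ne', one_smul]
  -- positivity of the curvature of the half-space
  have hcap_pos : 0 < sphMeasure (m + 2) capSet := by
    rw [hsph, Measure.restrict_apply hcapmeas]
    rw [inter_eq_self_of_subset_left (inter_subset_left : capSet ⊆ _)]
    exact cap_hausdorff_pos m hξ1 hc1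
  have hνA_pos : 0 < sphMeasure (m + 2) (revGauss K η) :=
    lt_of_lt_of_le hcap_pos (measure_mono hcapsub)
  have hCpos : 0 < dualCurv φ K η := by
    rw [dualCurv]
    refine mul_pos hntoR ?_
    have hint : Integrable f ((sphMeasure (m + 2)).restrict (revGauss K η)) :=
      hfint.restrict
    have hflb' : ∀ᵐ u ∂((sphMeasure (m + 2)).restrict (revGauss K η)), mφ ≤ f u :=
      ae_restrict_of_ae hflb
    have h1 := integral_mono_ae (integrable_const mφ) hint hflb'
    rw [integral_const, smul_eq_mul, measureReal_restrict_apply_univ] at h1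
    have h3 : 0 < (sphMeasure (m + 2) (revGauss K η)).toReal :=
      ENNReal.toReal_pos hνA_pos.ne' (measure_ne_top _ _)
    calc (0:ℝ) < (sphMeasure (m + 2) (revGauss K η)).toReal * mφ := mul_pos h3 hmφ
      _ ≤ _ := h1
  -- conclude μ η > 0 from the representation
  have hμuniv : 0 < (μ univ).toReal :=
    ENNReal.toReal_pos (Measure.measure_univ_ne_zero.2 hμ0) (measure_ne_top μ _)
  have hμη : 0 < (μ η).toReal := by
    have h := hrep η hηmeas
    have hrhs : 0 < (μ univ).toReal * dualCurv φ K η := mul_pos hμuniv hCpos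
    rw [← h] at hrhs
    by_contra hcon
    push_neg at hcon
    have : (μ η).toReal = 0 := le_antisymm hcon ENNReal.toReal_nonneg
    rw [this, zero_mul] at hrhs
    exact lt_irrefl 0 hrhs
  have hμηne : μ η ≠ 0 := by
    intro h
    rw [h] at hμη
    simp at hμη
  -- final integral positivity
  have hμmem : ∀ᵐ θ ∂μ, θ ∈ unitSphere (m + 2) := by
    rw [show (∀ᵐ θ ∂μ, θ ∈ unitSphere (m + 2)) ↔ μ (unitSphere (m + 2))ᶜ = 0 from
      mem_ae_iff]
    exact hμs
  have hhc : Continuous (fun θ : EuclideanSpace ℝ (Fin (m + 2)) => max ⟪ξ, θ⟫ 0) :=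
    (Continuous.inner continuous_const continuous_id).max continuous_const
  have hnn : 0 ≤ᵐ[μ] fun θ => max ⟪ξ, θ⟫ 0 := ae_of_all _ fun θ => le_max_right _ _
  have hb : ∀ᵐ θ ∂μ, ‖max ⟪ξ, θ⟫ 0‖ ≤ 1 := by
    refine hμmem.mono fun θ hθ => ?_
    have hθ1 : ‖θ‖ = 1 := mem_sphere_zero_iff_norm.1 hθ
    have h1 : |⟪ξ, θ⟫| ≤ 1 := by
      have := abs_real_inner_le_norm ξ θ
      rwa [hξ1, hθ1, one_mul] at this
    rw [Real.norm_eq_abs, abs_of_nonneg (le_max_right _ _)]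
    exact max_le (le_trans (le_abs_self _) h1) zero_le_one
  have hint : Integrable (fun θ => max ⟪ξ, θ⟫ 0) μ :=
    (integrable_const (1:ℝ)).mono' hhc.aestronglyMeasurable hb
  rw [integral_pos_iff_support_of_nonneg_ae hnn hint]
  have hsub : η ⊆ Function.support fun θ => max ⟪ξ, θ⟫ 0 := by
    intro θ hθ
    have hθ' : (0:ℝ) < ⟪ξ, θ⟫ := hθ
    have h2 : 0 < max ⟪ξ, θ⟫ 0 := lt_of_lt_of_le hθ' (le_max_left _ _)
    exact h2.ne'
  exact lt_of_lt_of_le (pos_iff_ne_zero.2 hμηne) (measure_mono hsub)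
end
end

section
/- Let φ : (0,∞) → (0,∞) be a strictly decreasing continuous function. If K, L ∈ 𝒦₀ⁿ satisfy C̃_φ(K,η) = C̃_φ(L,η) for every Borel set η ⊆ S^{n-1}, then K = L. -/
open MeasureTheory Metric Set Filter
open scoped ENNReal NNReal Topology RealInnerProductSpace

noncomputable section

namespace BodyAux


variable {n : ℕ} {K L : Set (EuclideanSpace ℝ (Fin n))} {u v x : EuclideanSpace ℝ (Fin n)}
  {r t : ℝ}

lemma zero_mem (hK : IsConvexBody0 K) : (0 : EuclideanSpace ℝ (Fin n)) ∈ K :=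
  interior_subset hK.2.2

lemma exists_radius (hK : IsConvexBody0 K) : ∃ ε > 0, ball (0 : EuclideanSpace ℝ (Fin n)) ε ⊆ K := by
  obtain ⟨ε, hε, hsub⟩ := Metric.mem_nhds_iff.1 (mem_interior_iff_mem_nhds.1 hK.2.2)
  exact ⟨ε, hε, hsub⟩

lemma exists_bound (hK : IsConvexBody0 K) : ∃ R > 0, ∀ x ∈ K, ‖x‖ ≤ R := by
  obtain ⟨R, hR⟩ := hK.1.isBounded.subset_ball 0
  refine ⟨max R 1, lt_of_lt_of_le one_pos (le_max_right _ _), fun x hx => ?_⟩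
  have := hR hx
  rw [mem_ball, dist_zero_right] at this
  exact this.le.trans (le_max_left _ _)

lemma radialSet_nonempty (hK : IsConvexBody0 K) (hu : ‖u‖ = 1) :
    {r : ℝ | 0 < r ∧ r • u ∈ K}.Nonempty := by
  obtain ⟨ε, hε, hsub⟩ := exists_radius hK
  refine ⟨ε / 2, half_pos hε, hsub ?_⟩
  rw [mem_ball_zero_iff, norm_smul, hu, mul_one, Real.norm_eq_abs, abs_of_pos (half_pos hε)]
  linarith

lemma radialSet_bddAbove (hK : IsConvexBody0 K) (hu : ‖u‖ = 1) :
    BddAbove {r : ℝ | 0 < r ∧ r • u ∈ K} := by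
  obtain ⟨R, hR, hRb⟩ := exists_bound hK
  refine ⟨R, fun r hr => ?_⟩
  have := hRb _ hr.2
  rwa [norm_smul, hu, mul_one, Real.norm_eq_abs, abs_of_pos hr.1] at this

lemma radialFn_pos (hK : IsConvexBody0 K) (hu : ‖u‖ = 1) : 0 < radialFn K u := by
  obtain ⟨ε, hε, hsub⟩ := exists_radius hK
  have h1 : ε / 2 ≤ radialFn K u := by
    apply le_csSup (radialSet_bddAbove hK hu)
    refine ⟨half_pos hε, hsub ?_⟩
    rw [mem_ball_zero_iff, norm_smul, hu, mul_one, Real.norm_eq_abs, abs_of_pos (half_pos hε)]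
    linarith
  linarith [half_pos hε]

lemma le_radialFn_of_mem (hK : IsConvexBody0 K) (hu : ‖u‖ = 1) (hr : 0 < r) (hm : r • u ∈ K) :
    r ≤ radialFn K u :=
  le_csSup (radialSet_bddAbove hK hu) ⟨hr, hm⟩

lemma radialFn_smul_mem (hK : IsConvexBody0 K) (hu : ‖u‖ = 1) : radialFn K u • u ∈ K := by
  have hcl : IsClosed K := hK.1.isClosed
  have h1 : radialFn K u ∈ closure {r : ℝ | 0 < r ∧ r • u ∈ K} :=
    csSup_mem_closure (radialSet_nonempty hK hu) (radialSet_bddAbove hK hu)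
  have hcont : Continuous fun r : ℝ => r • u := by continuity
  have : radialFn K u • u ∈ closure ((fun r : ℝ => r • u) '' {r : ℝ | 0 < r ∧ r • u ∈ K}) := by
    have := image_closure_subset_closure_image hcont (s := {r : ℝ | 0 < r ∧ r • u ∈ K})
    exact this ⟨_, h1, rfl⟩
  refine hcl.closure_subset_iff.2 ?_ this
  rintro y ⟨r, hr, rfl⟩
  exact hr.2

lemma not_mem_of_radialFn_lt (hK : IsConvexBody0 K) (hu : ‖u‖ = 1)
    (hr : radialFn K u < r) : r • u ∉ K := fun hm =>
  absurd (le_radialFn_of_mem hK hu ((radialFn_pos hK hu).trans hr) hm) (not_le.2 hr)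

lemma smul_mem_interior_of_lt (hK : IsConvexBody0 K) (hu : ‖u‖ = 1) (h0 : 0 ≤ r)
    (hr : r < radialFn K u) : r • u ∈ interior K := by
  have hρ := radialFn_pos hK hu
  have key : r • u = (1 - r / radialFn K u) • (0 : EuclideanSpace ℝ (Fin n))
      + (r / radialFn K u) • (radialFn K u • u) := by
    rw [smul_zero, zero_add, smul_smul, div_mul_cancel₀]
    exact hρ.ne'
  rw [key]
  have h1 : r / radialFn K u < 1 := (div_lt_one hρ).2 hr
  exact hK.2.1.combo_interior_closure_mem_interior hK.2.2
    (subset_closure (radialFn_smul_mem hK hu))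
    (by linarith) (by positivity) (by ring)

lemma smul_mem_of_le (hK : IsConvexBody0 K) (hu : ‖u‖ = 1) (h0 : 0 ≤ r)
    (hr : r ≤ radialFn K u) : r • u ∈ K := by
  rcases eq_or_lt_of_le hr with h | h
  · rw [h]; exact radialFn_smul_mem hK hu
  · exact interior_subset (smul_mem_interior_of_lt hK hu h0 h)

lemma radialFn_smul_mem_frontier (hK : IsConvexBody0 K) (hu : ‖u‖ = 1) :
    radialFn K u • u ∈ frontier K := by
  rw [hK.1.isClosed.frontier_eq]
  refine ⟨radialFn_smul_mem hK hu, fun hint => ?_⟩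
  obtain ⟨ε, hε, hsub⟩ := Metric.mem_nhds_iff.1 (mem_interior_iff_mem_nhds.1 hint)
  have hmem : (radialFn K u + ε / 2) • u ∈ K := by
    apply hsub
    rw [mem_ball, dist_eq_norm, ← sub_smul, add_sub_cancel_left, norm_smul, hu, mul_one,
      Real.norm_eq_abs, abs_of_pos (half_pos hε)]
    linarith
  exact not_mem_of_radialFn_lt hK hu (by linarith) hmem

lemma frontier_ne_zero (hK : IsConvexBody0 K) (hx : x ∈ frontier K) : x ≠ 0 := by
  rintro rfl
  rw [hK.1.isClosed.frontier_eq] at hx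
  exact hx.2 hK.2.2

lemma norm_inv_smul_unit (hx : x ≠ 0) : ‖‖x‖⁻¹ • x‖ = 1 := by
  rw [norm_smul, Real.norm_eq_abs, abs_of_nonneg (inv_nonneg.2 (norm_nonneg x)),
    inv_mul_cancel₀ (norm_ne_zero_iff.2 hx)]

lemma norm_eq_radialFn_of_frontier (hK : IsConvexBody0 K) (hx : x ∈ frontier K) :
    ‖x‖ = radialFn K (‖x‖⁻¹ • x) := by
  have hx0 : x ≠ 0 := frontier_ne_zero hK hx
  have hu : ‖‖x‖⁻¹ • x‖ = 1 := norm_inv_smul_unit hx0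
  have hxK : x ∈ K := hK.1.isClosed.frontier_subset hx
  have hxx : ‖x‖ • (‖x‖⁻¹ • x) = x := by
    rw [smul_smul, mul_inv_cancel₀ (norm_ne_zero_iff.2 hx0), one_smul]
  have hle : ‖x‖ ≤ radialFn K (‖x‖⁻¹ • x) := by
    apply le_radialFn_of_mem hK hu (norm_pos_iff.2 hx0)
    rw [hxx]; exact hxK
  rw [hK.1.isClosed.frontier_eq] at hx
  rcases eq_or_lt_of_le hle with h | h
  · exact h
  · exfalso
    have hi := smul_mem_interior_of_lt hK hu (norm_nonneg x) h
    rw [hxx] at hi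
    exact hx.2 hi


lemma radialFn_continuousOn (hK : IsConvexBody0 K) :
    ContinuousOn (radialFn K) (unitSphere n) := by
  rw [Metric.continuousOn_iff]
  intro u hu ε hε
  have hu1 : ‖u‖ = 1 := by rwa [unitSphere, mem_sphere_zero_iff_norm] at hu
  have hρ := radialFn_pos hK hu1
  set ε' := min (ε / 2) (radialFn K u / 2) with hε'
  have hε'0 : 0 < ε' := lt_min (half_pos hε) (half_pos hρ)
  -- inner point
  have hin : (radialFn K u - ε') • u ∈ interior K :=
    smul_mem_interior_of_lt hK hu1 (by
      have := min_le_right (ε / 2) (radialFn K u / 2); simp only [← hε'] at this; linarith)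
      (by linarith)
  -- outer point
  have hout : (radialFn K u + ε') • u ∈ Kᶜ :=
    not_mem_of_radialFn_lt hK hu1 (by linarith)
  -- continuity of v ↦ c • v
  obtain ⟨δ₁, hδ₁, h₁⟩ : ∃ δ > 0, ∀ v : EuclideanSpace ℝ (Fin n), dist v u < δ →
      (radialFn K u - ε') • v ∈ interior K := by
    have hcont : Continuous fun v : EuclideanSpace ℝ (Fin n) => (radialFn K u - ε') • v := by
      fun_prop
    have := hcont.continuousAt (x := u)
    rw [ContinuousAt] at this
    have hmem : interior K ∈ 𝓝 ((radialFn K u - ε') • u) := isOpen_interior.mem_nhds hin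
    obtain ⟨δ, hδ, hδs⟩ := Metric.mem_nhds_iff.1 (this hmem)
    exact ⟨δ, hδ, fun v hv => hδs (by rwa [mem_ball])⟩
  obtain ⟨δ₂, hδ₂, h₂⟩ : ∃ δ > 0, ∀ v : EuclideanSpace ℝ (Fin n), dist v u < δ →
      (radialFn K u + ε') • v ∈ Kᶜ := by
    have hcont : Continuous fun v : EuclideanSpace ℝ (Fin n) => (radialFn K u + ε') • v := by
      fun_prop
    have := hcont.continuousAt (x := u)
    rw [ContinuousAt] at this
    have hmem : Kᶜ ∈ 𝓝 ((radialFn K u + ε') • u) := (hK.1.isClosed.isOpen_compl).mem_nhds hout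
    obtain ⟨δ, hδ, hδs⟩ := Metric.mem_nhds_iff.1 (this hmem)
    exact ⟨δ, hδ, fun v hv => hδs (by rwa [mem_ball])⟩
  refine ⟨min δ₁ δ₂, lt_min hδ₁ hδ₂, fun v hv hdist => ?_⟩
  have hv1 : ‖v‖ = 1 := by rwa [unitSphere, mem_sphere_zero_iff_norm] at hv
  have hd₁ := h₁ v (lt_of_lt_of_le hdist (min_le_left _ _))
  have hd₂ := h₂ v (lt_of_lt_of_le hdist (min_le_right _ _))
  have hl : radialFn K u - ε' ≤ radialFn K v :=
    le_radialFn_of_mem hK hv1 (by linarith [min_le_right (ε/2) (radialFn K u / 2)])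
      (interior_subset hd₁)
  have hr : radialFn K v ≤ radialFn K u + ε' := by
    by_contra hcon
    push_neg at hcon
    exact hd₂ (smul_mem_of_le hK hv1 (by linarith) hcon.le)
  rw [Real.dist_eq, abs_lt]
  have : ε' ≤ ε / 2 := min_le_left _ _
  constructor <;> linarith

lemma eq_of_radialFn_eq (hK : IsConvexBody0 K) (hL : IsConvexBody0 L)
    (h : ∀ u : EuclideanSpace ℝ (Fin n), ‖u‖ = 1 → radialFn K u = radialFn L u) : K = L := by
  have key : ∀ (A B : Set (EuclideanSpace ℝ (Fin n))), IsConvexBody0 A → IsConvexBody0 B →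
      (∀ u : EuclideanSpace ℝ (Fin n), ‖u‖ = 1 → radialFn A u = radialFn B u) → A ⊆ B := by
    intro A B hA hB hAB x hx
    rcases eq_or_ne x 0 with rfl | hx0
    · exact zero_mem hB
    · have hu : ‖‖x‖⁻¹ • x‖ = 1 := norm_inv_smul_unit hx0
      have hxx : ‖x‖ • (‖x‖⁻¹ • x) = x := by
        rw [smul_smul, mul_inv_cancel₀ (norm_ne_zero_iff.2 hx0), one_smul]
      have h1 : ‖x‖ ≤ radialFn A (‖x‖⁻¹ • x) := by
        apply le_radialFn_of_mem hA hu (norm_pos_iff.2 hx0)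
        rw [hxx]; exact hx
      have h2 := smul_mem_of_le hB hu (norm_nonneg x) (by rw [← hAB _ hu]; exact h1)
      rwa [hxx] at h2
  exact le_antisymm (key K L hK hL h) (key L K hL hK fun u hu => (h u hu).symm)


lemma suppFn_bddAbove (hc : IsCompact K) (v : EuclideanSpace ℝ (Fin n)) :
    BddAbove ((fun x => ⟪x, v⟫) '' K) :=
  (hc.image (continuous_id.inner continuous_const)).bddAbove

lemma inner_le_suppFn (hc : IsCompact K) (hx : x ∈ K) : ⟪x, v⟫ ≤ suppFn K v :=
  le_csSup (suppFn_bddAbove hc v) ⟨x, hx, rfl⟩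

lemma suppFn_le (hne : K.Nonempty) (hb : ∀ x ∈ K, ⟪x, v⟫ ≤ r) : suppFn K v ≤ r := by
  apply csSup_le (hne.image _)
  rintro y ⟨x, hx, rfl⟩; exact hb x hx

example (hc : IsCompact K) : Continuous fun x : EuclideanSpace ℝ (Fin n) => ⟪x, v⟫ :=
  continuous_id.inner continuous_const

lemma suppFn_continuous (hc : IsCompact K) (hne : K.Nonempty) :
    Continuous (suppFn K) := by
  obtain ⟨R, hR⟩ := hc.isBounded.subset_closedBall 0
  have hRnn : 0 ≤ R := by
    obtain ⟨x, hx⟩ := hne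
    have := hR hx
    rw [mem_closedBall, dist_zero_right] at this
    exact (norm_nonneg x).trans this
  have key : ∀ u v : EuclideanSpace ℝ (Fin n), suppFn K u ≤ suppFn K v + R * ‖u - v‖ := by
    intro u v
    apply suppFn_le hne
    intro x hx
    have hxR : ‖x‖ ≤ R := by
      have := hR hx; rwa [mem_closedBall, dist_zero_right] at this
    have h1 : ⟪x, u⟫ - ⟪x, v⟫ ≤ R * ‖u - v‖ := by
      rw [← inner_sub_right]
      calc ⟪x, u - v⟫ ≤ ‖x‖ * ‖u - v‖ := real_inner_le_norm x (u - v)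
        _ ≤ R * ‖u - v‖ := by
            apply mul_le_mul_of_nonneg_right hxR (norm_nonneg _)
    linarith [inner_le_suppFn (v := v) hc hx]
  rw [Metric.continuous_iff]
  intro v ε hε
  rcases eq_or_lt_of_le hRnn with hR0 | hR0
  · exact ⟨1, one_pos, fun u _ => by
      have h1 := key u v; have h2 := key v u
      rw [← hR0] at h1 h2
      simp only [zero_mul] at h1 h2
      rw [Real.dist_eq]
      have : suppFn K u = suppFn K v := le_antisymm (by linarith) (by linarith)
      simpa [this]⟩
  · refine ⟨ε / R, by positivity, fun u hu => ?_⟩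
    rw [Real.dist_eq, abs_lt]
    have h1 := key u v; have h2 := key v u
    rw [dist_eq_norm] at hu
    have h3 : R * ‖u - v‖ < ε := by
      calc R * ‖u - v‖ < R * (ε / R) := by
            exact mul_lt_mul_of_pos_left hu hR0
        _ = ε := by field_simp
    have h4 : ‖v - u‖ = ‖u - v‖ := norm_sub_rev v u
    constructor <;> nlinarith [key u v, key v u]

lemma suppFn_pos (hc : IsCompact K) {ε : ℝ} (hε : 0 < ε)
    (hsub : ball (0 : EuclideanSpace ℝ (Fin n)) ε ⊆ K) (hv : v ≠ 0) : 0 < suppFn K v := by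
  have hvn : 0 < ‖v‖ := norm_pos_iff.2 hv
  set y := (ε / (2 * ‖v‖)) • v with hy
  have hyK : y ∈ K := by
    apply hsub
    rw [mem_ball_zero_iff, hy, norm_smul, Real.norm_eq_abs, abs_of_pos (by positivity)]
    rw [div_mul_eq_mul_div, mul_comm]
    rw [div_lt_iff₀ (by positivity)]
    nlinarith
  have h1 : ⟪y, v⟫ = (ε / (2 * ‖v‖)) * (‖v‖ * ‖v‖) := by
    rw [hy, real_inner_smul_left, real_inner_self_eq_norm_mul_norm]
  have h2 : 0 < ⟪y, v⟫ := by rw [h1]; positivity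
  exact lt_of_lt_of_le h2 (inner_le_suppFn hc hyK)

lemma exists_unit_normal (hc : IsCompact K) (hconv : Convex ℝ K)
    (h0 : (0 : EuclideanSpace ℝ (Fin n)) ∈ interior K) (hx : x ∈ frontier K) :
    ∃ v : EuclideanSpace ℝ (Fin n), ‖v‖ = 1 ∧ ⟪x, v⟫ = suppFn K v := by
  have hxi : x ∉ interior K := by
    rw [hc.isClosed.frontier_eq] at hx; exact hx.2
  have hxK : x ∈ K := hc.isClosed.frontier_subset hx
  obtain ⟨f, hf⟩ := geometric_hahn_banach_open_point hconv.interior isOpen_interior hxi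
  · -- f nonzero
    have hf0 : f 0 < f x := hf 0 h0
    -- all of K
    have hfK : ∀ a ∈ K, f a ≤ f x := by
      intro a ha
      by_contra hcon
      push_neg at hcon
      -- consider points (1-t)•a + t•0 ∈ interior K for t ∈ (0,1)
      have hmem : ∀ t : ℝ, 0 < t → t ≤ 1 → t • (0 : EuclideanSpace ℝ (Fin n)) + (1 - t) • a ∈ interior K := by
        intro t ht ht1
        exact hconv.combo_interior_closure_mem_interior h0 (subset_closure ha) ht (by linarith)
          (by ring)
      have hflt : ∀ t : ℝ, 0 < t → t ≤ 1 → (1 - t) * f a < f x := by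
        intro t ht ht1
        have := hf _ (hmem t ht ht1)
        simpa [map_add, _root_.map_smul, smul_eq_mul, map_zero] using this
      -- f x < f a and f x > f 0 = 0
      have hfx0 : (0:ℝ) < f x := by simpa using hf0
      have hfa0 : 0 < f a := lt_trans hfx0 hcon
      -- pick t with (1-t) f a > f x : t = (f a - f x)/(2 f a)? choose (1-t) = (f x/f a + 1)/2
      set s : ℝ := (f x / f a + 1) / 2 with hs
      have hs1 : s < 1 := by
        have : f x / f a < 1 := (div_lt_one hfa0).2 hcon
        rw [hs]; linarith
      have hs0 : 0 < s := by
        have : 0 < f x / f a := by positivity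
        rw [hs]; linarith
      have := hflt (1 - s) (by linarith) (by linarith)
      rw [sub_sub_cancel] at this
      have hgt : f x < s * f a := by
        rw [hs, div_mul_eq_mul_div, add_mul, div_mul_cancel₀ _ hfa0.ne']
        rw [lt_div_iff₀ (by norm_num : (0:ℝ) < 2)]
        nlinarith
      linarith
    -- represent f by a vector
    set w := (InnerProductSpace.toDual ℝ (EuclideanSpace ℝ (Fin n))).symm f with hw
    have hwf : ∀ a, ⟪w, a⟫ = f a := fun a => InnerProductSpace.toDual_symm_apply
    have hw0 : w ≠ 0 := by
      intro hww
      have h1 := hwf x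
      rw [hww, inner_zero_left] at h1
      have hfx0 : (0:ℝ) < f x := by simpa using hf0
      rw [← h1] at hfx0
      exact lt_irrefl _ hfx0
    have hwn : 0 < ‖w‖ := norm_pos_iff.2 hw0
    refine ⟨‖w‖⁻¹ • w, ?_, ?_⟩
    · rw [norm_smul, Real.norm_eq_abs, abs_of_nonneg (inv_nonneg.2 (norm_nonneg w)),
        inv_mul_cancel₀ hwn.ne']
    · refine le_antisymm (inner_le_suppFn hc hxK) (suppFn_le ⟨x, hxK⟩ ?_)
      intro a ha
      have h1 : ⟪a, ‖w‖⁻¹ • w⟫ = ‖w‖⁻¹ * f a := by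
        rw [real_inner_smul_right, real_inner_comm, hwf]
      have h2 : ⟪x, ‖w‖⁻¹ • w⟫ = ‖w‖⁻¹ * f x := by
        rw [real_inner_smul_right, real_inner_comm, hwf]
      rw [h1, h2]
      exact mul_le_mul_of_nonneg_left (hfK a ha) (inv_nonneg.2 (norm_nonneg w))


lemma normalize_lipschitz :
    LipschitzOnWith 2 (fun x : EuclideanSpace ℝ (Fin n) => ‖x‖⁻¹ • x)
      {x : EuclideanSpace ℝ (Fin n) | 1 ≤ ‖x‖} := by
  apply LipschitzOnWith.of_dist_le_mul
  intro x hx y hy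
  simp only [mem_setOf_eq] at hx hy
  have hxn : 0 < ‖x‖ := lt_of_lt_of_le one_pos hx
  have hyn : 0 < ‖y‖ := lt_of_lt_of_le one_pos hy
  rw [dist_eq_norm, dist_eq_norm]
  have key : ‖x‖⁻¹ • x - ‖y‖⁻¹ • y = ‖x‖⁻¹ • (x - y) + (‖x‖⁻¹ - ‖y‖⁻¹) • y := by
    rw [smul_sub, sub_smul]; abel
  rw [key]
  have h1 : ‖‖x‖⁻¹ • (x - y)‖ = ‖x‖⁻¹ * ‖x - y‖ := by
    rw [norm_smul, Real.norm_eq_abs, abs_of_pos (inv_pos.2 hxn)]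
  have h2 : ‖(‖x‖⁻¹ - ‖y‖⁻¹) • y‖ = |‖x‖⁻¹ - ‖y‖⁻¹| * ‖y‖ := by
    rw [norm_smul, Real.norm_eq_abs]
  have h3 : |‖x‖⁻¹ - ‖y‖⁻¹| * ‖y‖ = |‖y‖ - ‖x‖| * ‖x‖⁻¹ := by
    have he : ‖x‖⁻¹ - ‖y‖⁻¹ = (‖y‖ - ‖x‖) * (‖x‖⁻¹ * ‖y‖⁻¹) := by
      field_simp
    rw [he, abs_mul, abs_of_pos (mul_pos (inv_pos.2 hxn) (inv_pos.2 hyn))]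
    field_simp
  have h4 : |‖y‖ - ‖x‖| ≤ ‖x - y‖ := by
    rw [abs_sub_comm]
    exact (abs_norm_sub_norm_le x y).trans (le_of_eq rfl)
  have h5 : ‖x‖⁻¹ ≤ 1 := by
    rw [inv_le_one_iff₀]; right; exact hx
  have h6 : ‖‖x‖⁻¹ • (x - y) + (‖x‖⁻¹ - ‖y‖⁻¹) • y‖
      ≤ ‖x‖⁻¹ * ‖x - y‖ + |‖y‖ - ‖x‖| * ‖x‖⁻¹ := by
    calc ‖‖x‖⁻¹ • (x - y) + (‖x‖⁻¹ - ‖y‖⁻¹) • y‖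
        ≤ ‖‖x‖⁻¹ • (x - y)‖ + ‖(‖x‖⁻¹ - ‖y‖⁻¹) • y‖ := norm_add_le _ _
      _ = ‖x‖⁻¹ * ‖x - y‖ + |‖y‖ - ‖x‖| * ‖x‖⁻¹ := by rw [h1, h2, h3]
  have hc : ((2 : ℝ≥0) : ℝ) = 2 := by norm_num
  rw [hc]
  have ha : ‖x‖⁻¹ * ‖x - y‖ ≤ 1 * ‖x - y‖ :=
    mul_le_mul_of_nonneg_right h5 (norm_nonneg _)
  have hb : |‖y‖ - ‖x‖| * ‖x‖⁻¹ ≤ ‖x - y‖ * 1 :=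
    mul_le_mul h4 h5 (inv_nonneg.2 (norm_nonneg _)) (norm_nonneg _)
  linarith


/-- coordinate bound -/
lemma abs_coord_le_norm (u : EuclideanSpace ℝ (Fin n)) (i : Fin n) : |u i| ≤ ‖u‖ := by
  have h1 : |u i| = √((u i) ^ 2) := by
    rw [Real.sqrt_sq_eq_abs]
  rw [h1, EuclideanSpace.norm_eq]
  apply Real.sqrt_le_sqrt
  have : ∀ j, (0:ℝ) ≤ ‖u j‖ ^ 2 := fun j => sq_nonneg _
  calc (u i) ^ 2 = ‖u i‖ ^ 2 := by rw [Real.norm_eq_abs, sq_abs]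
    _ ≤ ∑ j, ‖u j‖ ^ 2 := Finset.single_le_sum (fun j _ => this j) (Finset.mem_univ i)

/-- the face sets -/
def face (i : Fin n) (s : ℝ) : Set (EuclideanSpace ℝ (Fin n)) :=
  {x | x i = s ∧ ‖x‖ ≤ (n : ℝ)}

lemma face_compact (i : Fin n) (s : ℝ) : IsCompact (face (n := n) i s) := by
  have h1 : face (n := n) i s = {x : EuclideanSpace ℝ (Fin n) | x i = s} ∩ closedBall 0 (n : ℝ) := by
    ext x; simp [face, mem_closedBall, dist_zero_right]
  rw [h1]
  exact (isCompact_closedBall _ _).inter_left (isClosed_eq (by fun_prop) continuous_const)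

lemma sphere_subset_faces_image (hn : 0 < n) :
    unitSphere n ⊆ ⋃ (i : Fin n), ⋃ (b : Bool),
      (fun x : EuclideanSpace ℝ (Fin n) => ‖x‖⁻¹ • x) ''
        (face i (if b then 1 else -1) ∩ {x | 1 ≤ ‖x‖}) := by
  intro u hu
  have hu1 : ‖u‖ = 1 := by rwa [unitSphere, mem_sphere_zero_iff_norm] at hu
  obtain ⟨i, _, hi⟩ := Finset.exists_max_image Finset.univ (fun j => |u j|)
    ⟨⟨0, hn⟩, Finset.mem_univ _⟩
  have hi' : ∀ j, |u j| ≤ |u i| := fun j => hi j (Finset.mem_univ j)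
  have hui : u i ≠ 0 := by
    intro h0
    have : u = 0 := by
      ext j
      have := hi' j
      rw [h0, abs_zero, abs_nonpos_iff] at this
      simpa using this
    rw [this, norm_zero] at hu1; norm_num at hu1
  have huiabs : 0 < |u i| := abs_pos.2 hui
  set x := |u i|⁻¹ • u with hxdef
  have hxn : ‖x‖ = |u i|⁻¹ := by
    rw [hxdef, norm_smul, Real.norm_eq_abs, abs_of_pos (inv_pos.2 huiabs), hu1, mul_one]
  have huile : |u i| ≤ 1 := by
    have := abs_coord_le_norm u i; rwa [hu1] at this
  have hx1 : 1 ≤ ‖x‖ := by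
    rw [hxn]
    exact one_le_inv_iff₀.2 ⟨huiabs, huile⟩
  -- lower bound on |u i| : |u i| ≥ 1/n
  have hni : (1 : ℝ) / n ≤ |u i| := by
    have hsum : ∑ j, ‖u j‖ ^ 2 = 1 := by
      have := EuclideanSpace.norm_eq u
      rw [hu1] at this
      have h2 : (1:ℝ) = √(∑ j, ‖u j‖ ^ 2) := this
      have h3 : ((1:ℝ))^2 = (√(∑ j, ‖u j‖ ^ 2))^2 := by rw [← h2]
      rw [Real.sq_sqrt (Finset.sum_nonneg fun j _ => sq_nonneg _)] at h3
      linarith [h3]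
    have hterm : ∀ j, ‖u j‖ ^ 2 ≤ |u i| ^ 2 := by
      intro j
      rw [Real.norm_eq_abs]
      exact pow_le_pow_left₀ (abs_nonneg _) (hi' j) 2
    have hsum2 : (1:ℝ) ≤ n * |u i| ^ 2 := by
      calc (1:ℝ) = ∑ j, ‖u j‖ ^ 2 := hsum.symm
        _ ≤ ∑ _j : Fin n, |u i| ^ 2 := Finset.sum_le_sum fun j _ => hterm j
        _ = n * |u i| ^ 2 := by rw [Finset.sum_const, Finset.card_univ, Fintype.card_fin,
            nsmul_eq_mul]
    -- conclude |u i| ≥ 1/n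
    by_contra hcon
    push_neg at hcon
    have hnpos : (0:ℝ) < n := Nat.cast_pos.2 hn
    have h4 : |u i| ^ 2 < (1/n) * |u i| := by
      have := mul_lt_mul_of_pos_right hcon huiabs
      calc |u i| ^ 2 = |u i| * |u i| := sq (|u i|) ▸ by ring
        _ < (1/n) * |u i| := this
    have h5 : n * |u i| ^ 2 < n * ((1/n) * |u i|) := mul_lt_mul_of_pos_left h4 hnpos
    rw [← mul_assoc, mul_one_div_cancel hnpos.ne', one_mul] at h5
    linarith
  have hxnorm_le : ‖x‖ ≤ (n : ℝ) := by
    rw [hxn]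
    rw [inv_le_comm₀ huiabs (Nat.cast_pos.2 hn)]
    rw [inv_eq_one_div]
    exact hni
  -- membership
  set b : Bool := decide (0 < u i) with hb
  refine mem_iUnion.2 ⟨i, mem_iUnion.2 ⟨b, ⟨x, ⟨⟨?_, hxnorm_le⟩, hx1⟩, ?_⟩⟩⟩
  · rw [hxdef]
    show |u i|⁻¹ * u i = _
    rcases lt_trichotomy (u i) 0 with hlt | heq | hgt
    · have : b = false := by rw [hb]; simp [not_lt.2 hlt.le, hlt.not_gt]
      rw [this]
      simp only [if_neg Bool.false_ne_true]
      rw [abs_of_neg hlt]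
      field_simp
    · exact absurd heq hui
    · have : b = true := by rw [hb]; simp [hgt]
      rw [this]
      simp only [if_pos rfl]
      rw [abs_of_pos hgt]
      field_simp
      simp
  · show ‖x‖⁻¹ • x = u
    rw [hxn, inv_inv, hxdef, smul_smul, mul_inv_cancel₀ huiabs.ne', one_smul]


lemma face_hausdorff_lt_top (hn : 0 < n) (i : Fin n) (s : ℝ) :
    (μH[(n:ℝ)-1] : Measure (EuclideanSpace ℝ (Fin n))) (face i s) < ⊤ := by
  have hd : (0:ℝ) ≤ (n:ℝ) - 1 := by
    have : (1:ℝ) ≤ n := by exact_mod_cast hn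
    linarith
  set w : EuclideanSpace ℝ (Fin n) := EuclideanSpace.single i s with hw
  set G : Set (EuclideanSpace ℝ (Fin n)) := (fun x => x - w) '' face i s with hG
  have hGm : (μH[(n:ℝ)-1] : Measure (EuclideanSpace ℝ (Fin n))) G
      = μH[(n:ℝ)-1] (face i s) := by
    rw [hG]
    exact (IsometryEquiv.subRight w).hausdorffMeasure_image ((n:ℝ)-1) (face i s)
  rw [← hGm]
  -- G is a compact subset of the hyperplane V
  set V : Submodule ℝ (EuclideanSpace ℝ (Fin n)) :=
    (Submodule.span ℝ {EuclideanSpace.single i (1:ℝ)})ᗮ with hV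
  have hGV : G ⊆ (V : Set (EuclideanSpace ℝ (Fin n))) := by
    rintro _ ⟨x, hx, rfl⟩
    rw [SetLike.mem_coe, hV, Submodule.mem_orthogonal]
    intro z hz
    rw [Submodule.mem_span_singleton] at hz
    obtain ⟨c, rfl⟩ := hz
    rw [real_inner_smul_left]
    have : ⟪EuclideanSpace.single i (1:ℝ), x - w⟫ = (x - w) i := by
      rw [EuclideanSpace.inner_single_left]
      simp
    rw [this]
    have : (x - w) i = x i - w i := rfl
    rw [this, hw, EuclideanSpace.single_apply, if_pos rfl, hx.1, sub_self, mul_zero]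
  have hGc : IsCompact G := (face_compact i s).image (continuous_id.sub continuous_const)
  -- pull back to V
  set B : Set V := (Subtype.val : V → EuclideanSpace ℝ (Fin n)) ⁻¹' G with hB
  have hBG : (Subtype.val : V → EuclideanSpace ℝ (Fin n)) '' B = G := by
    rw [hB, Set.image_preimage_eq_inter_range, Subtype.range_coe]
    exact Set.inter_eq_self_of_subset_left hGV
  have hmeas : (μH[(n:ℝ)-1] : Measure (EuclideanSpace ℝ (Fin n))) G
      = (μH[(n:ℝ)-1] : Measure V) B := by
    rw [← hBG]
    exact isometry_subtype_coe.hausdorffMeasure_image (Or.inl hd) B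
  rw [hmeas]
  -- B is compact in V
  have hBc : IsCompact B :=
    (isometry_subtype_coe.isClosedEmbedding).isCompact_preimage hGc
  -- finrank of V
  have hfr : (Module.finrank ℝ V : ℝ) = (n:ℝ) - 1 := by
    have hsingle : EuclideanSpace.single i (1:ℝ) ≠ 0 := by
      intro hcon
      have h0 : ‖EuclideanSpace.single i (1:ℝ)‖ = 0 := by rw [hcon, norm_zero]
      rw [EuclideanSpace.norm_single] at h0
      norm_num at h0
    have h1 : Module.finrank ℝ (Submodule.span ℝ {EuclideanSpace.single i (1:ℝ)}) = 1 :=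
      finrank_span_singleton hsingle
    have h2 := Submodule.finrank_add_finrank_orthogonal
      (𝕜 := ℝ) (Submodule.span ℝ {EuclideanSpace.single i (1:ℝ)})
    rw [h1, finrank_euclideanSpace_fin] at h2
    have h2' : 1 + Module.finrank ℝ ↥V = n := by rw [hV]; exact h2
    have h3 : Module.finrank ℝ V = n - 1 := by omega
    rw [h3]
    have : (1:ℕ) ≤ n := hn
    push_cast [Nat.cast_sub this]
    ring
  rw [← hfr]
  exact hBc.measure_lt_top

lemma sphere_hausdorff_lt_top (hn : 0 < n) :
    (μH[(n:ℝ)-1] : Measure (EuclideanSpace ℝ (Fin n))) (unitSphere n) < ⊤ := by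
  have hd : (0:ℝ) ≤ (n:ℝ) - 1 := by
    have : (1:ℝ) ≤ n := by exact_mod_cast hn
    linarith
  have hsub := sphere_subset_faces_image (n := n) hn
  have hle := measure_mono (μ := (μH[(n:ℝ)-1] : Measure (EuclideanSpace ℝ (Fin n)))) hsub
  apply lt_of_le_of_lt hle
  apply lt_of_le_of_lt (measure_iUnion_le _)
  have hbound : ∀ i : Fin n, (μH[(n:ℝ)-1] : Measure (EuclideanSpace ℝ (Fin n)))
      (⋃ (b : Bool), (fun x : EuclideanSpace ℝ (Fin n) => ‖x‖⁻¹ • x) ''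
        (face i (if b then 1 else -1) ∩ {x | 1 ≤ ‖x‖})) < ⊤ := by
    intro i
    apply lt_of_le_of_lt (measure_iUnion_le _)
    have hbb : ∀ b : Bool, (μH[(n:ℝ)-1] : Measure (EuclideanSpace ℝ (Fin n)))
        ((fun x : EuclideanSpace ℝ (Fin n) => ‖x‖⁻¹ • x) ''
          (face i (if b then 1 else -1) ∩ {x | 1 ≤ ‖x‖})) < ⊤ := by
      intro b
      have hlip := (normalize_lipschitz (n := n)).mono
        (Set.inter_subset_right (s := face i (if b then 1 else -1)))
      apply lt_of_le_of_lt (hlip.hausdorffMeasure_image_le hd)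
      apply ENNReal.mul_lt_top
      · exact ENNReal.rpow_lt_top_of_nonneg hd (by norm_num)
      · exact lt_of_le_of_lt (measure_mono (Set.inter_subset_left)) (face_hausdorff_lt_top hn i _)
    rw [tsum_fintype]
    exact ENNReal.sum_lt_top.2 fun b _ => hbb b
  rw [tsum_fintype]
  exact ENNReal.sum_lt_top.2 fun i _ => hbound i


set_option maxHeartbeats 2000000 in
lemma sphere_cap_pos (hn : 0 < n) (u₀ : EuclideanSpace ℝ (Fin n)) (hu₀ : ‖u₀‖ = 1)
    {ε : ℝ} (hε : 0 < ε) :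
    0 < (μH[(n:ℝ)-1] : Measure (EuclideanSpace ℝ (Fin n))) (unitSphere n ∩ ball u₀ ε) := by
  have hd : (0:ℝ) ≤ (n:ℝ) - 1 := by
    have : (1:ℝ) ≤ n := by exact_mod_cast hn
    linarith
  have hu0ne : u₀ ≠ 0 := by
    intro hcon; rw [hcon, norm_zero] at hu₀; norm_num at hu₀
  set V : Submodule ℝ (EuclideanSpace ℝ (Fin n)) := (Submodule.span ℝ {u₀})ᗮ with hV
  set P := Submodule.orthogonalProjection V with hP
  have hPlip : LipschitzWith 1 (⇑P) := by
    apply LipschitzWith.of_dist_le_mul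
    intro x y
    rw [dist_eq_norm, dist_eq_norm, ← map_sub, NNReal.coe_one, one_mul]
    calc ‖P (x - y)‖ ≤ ‖P‖ * ‖x - y‖ := P.le_opNorm _
      _ ≤ 1 * ‖x - y‖ := mul_le_mul_of_nonneg_right (Submodule.orthogonalProjection_norm_le V)
          (norm_nonneg _)
      _ = ‖x - y‖ := one_mul _
  set δ : ℝ := min (ε / 2) 2⁻¹ with hδ
  have hδ0 : 0 < δ := lt_min (half_pos hε) (by norm_num)
  have hδhalf : δ ≤ 2⁻¹ := min_le_right _ _
  have hδε : δ ≤ ε / 2 := min_le_left _ _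
  -- the small ball in V is contained in the image of the cap
  have hsub : Metric.ball (0 : V) δ ⊆ ⇑P '' (unitSphere n ∩ ball u₀ ε) := by
    intro y hy
    rw [mem_ball_zero_iff] at hy
    have hy1 : ‖y‖ ≤ 2⁻¹ := (le_of_lt hy).trans hδhalf
    have hynn : (0:ℝ) ≤ ‖y‖ := norm_nonneg _
    have harg : (0:ℝ) ≤ 1 - ‖y‖^2 := by nlinarith
    set a : ℝ := √(1 - ‖y‖^2) with ha
    have ha2 : a^2 = 1 - ‖y‖^2 := Real.sq_sqrt harg
    have ha0 : 0 ≤ a := Real.sqrt_nonneg _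
    have ha1 : a ≤ 1 := by nlinarith
    set x : EuclideanSpace ℝ (Fin n) := a • u₀ + (y : EuclideanSpace ℝ (Fin n)) with hx
    have hinner : ⟪u₀, (y : EuclideanSpace ℝ (Fin n))⟫ = 0 := by
      exact (Submodule.mem_orthogonal (Submodule.span ℝ {u₀}) (y : EuclideanSpace ℝ (Fin n))).1
        y.2 u₀ (Submodule.mem_span_singleton_self u₀)
    have hinner2 : ⟪a • u₀, (y : EuclideanSpace ℝ (Fin n))⟫ = 0 := by
      rw [real_inner_smul_left, hinner, mul_zero]
    have hxnorm : ‖x‖ = 1 := by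
      have h1 : ‖x‖^2 = a^2 + ‖y‖^2 := by
        rw [hx, norm_add_sq_real, hinner2, norm_smul, Real.norm_eq_abs, abs_of_nonneg ha0, hu₀]
        ring_nf
        simp [Submodule.coe_norm]
      have h2 : ‖x‖^2 = 1 := by rw [h1, ha2]; ring
      nlinarith [norm_nonneg x]
    have hxcap : x ∈ unitSphere n ∩ ball u₀ ε := by
      constructor
      · rwa [unitSphere, mem_sphere_zero_iff_norm]
      · rw [mem_ball, dist_eq_norm]
        have h3 : x - u₀ = (a - 1) • u₀ + (y : EuclideanSpace ℝ (Fin n)) := by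
          rw [hx, sub_smul, one_smul]; abel
        have h4 : ⟪(a - 1) • u₀, (y : EuclideanSpace ℝ (Fin n))⟫ = 0 := by
          rw [real_inner_smul_left, hinner, mul_zero]
        have h5 : ‖x - u₀‖^2 = (a-1)^2 + ‖y‖^2 := by
          rw [h3, norm_add_sq_real, h4, norm_smul, Real.norm_eq_abs, hu₀]
          ring_nf
          simp [Submodule.coe_norm]
          ring
        have h6 : (1 - a) ≤ ‖y‖^2 := by nlinarith
        have h7 : ‖x - u₀‖^2 < ε^2 := by
          have hyδ : ‖y‖ < δ := hy
          have : ‖y‖ < ε / 2 := lt_of_lt_of_le hyδ hδε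
          nlinarith
        have := lt_of_pow_lt_pow_left₀ 2 hε.le h7
        linarith [this]
    refine ⟨x, hxcap, ?_⟩
    have hPu₀ : P u₀ = 0 :=
      Submodule.orthogonalProjection_orthogonalComplement_singleton_eq_zero u₀
    have hPy : P (y : EuclideanSpace ℝ (Fin n)) = y :=
      Submodule.orthogonalProjection_mem_subspace_eq_self y
    rw [hx, map_add, _root_.map_smul, hPu₀, smul_zero, zero_add, hPy]
  -- conclude
  have hpos : 0 < (μH[(n:ℝ)-1] : Measure V) (Metric.ball (0 : V) δ) := by
    have hfr : (Module.finrank ℝ V : ℝ) = (n:ℝ) - 1 := by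
      have h1 : Module.finrank ℝ (Submodule.span ℝ {u₀}) = 1 := finrank_span_singleton hu0ne
      have h2 := Submodule.finrank_add_finrank_orthogonal (𝕜 := ℝ) (Submodule.span ℝ {u₀})
      rw [h1, finrank_euclideanSpace_fin] at h2
      have h2' : 1 + Module.finrank ℝ ↥V = n := by rw [hV]; exact h2
      have h3 : Module.finrank ℝ V = n - 1 := by omega
      rw [h3]
      have : (1:ℕ) ≤ n := hn
      push_cast [Nat.cast_sub this]
      ring
    rw [← hfr]
    exact Metric.isOpen_ball.measure_pos _ ⟨0, mem_ball_self hδ0⟩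
  have hchain : (μH[(n:ℝ)-1] : Measure V) (Metric.ball (0 : V) δ)
      ≤ (μH[(n:ℝ)-1] : Measure (EuclideanSpace ℝ (Fin n))) (unitSphere n ∩ ball u₀ ε) := by
    calc (μH[(n:ℝ)-1] : Measure V) (Metric.ball (0 : V) δ)
        ≤ (μH[(n:ℝ)-1] : Measure V) (⇑P '' (unitSphere n ∩ ball u₀ ε)) := measure_mono hsub
      _ ≤ (1:ℝ≥0) ^ ((n:ℝ)-1) * (μH[(n:ℝ)-1] : Measure (EuclideanSpace ℝ (Fin n)))
            (unitSphere n ∩ ball u₀ ε) := LipschitzOnWith.hausdorffMeasure_image_le (hPlip.lipschitzOnWith (s := unitSphere n ∩ ball u₀ ε)) hd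
      _ = (μH[(n:ℝ)-1] : Measure (EuclideanSpace ℝ (Fin n))) (unitSphere n ∩ ball u₀ ε) := by
          rw [ENNReal.coe_one, ENNReal.one_rpow, one_mul]
  exact lt_of_lt_of_le hpos hchain



variable {A B : Set (EuclideanSpace ℝ (Fin n))}

lemma suppFn_zero (hne : K.Nonempty) : suppFn K (0 : EuclideanSpace ℝ (Fin n)) = 0 := by
  have h1 : (fun x : EuclideanSpace ℝ (Fin n) => ⟪x, (0 : EuclideanSpace ℝ (Fin n))⟫) '' K
      = {(0:ℝ)} := by
    rw [show (fun x : EuclideanSpace ℝ (Fin n) => ⟪x, (0 : EuclideanSpace ℝ (Fin n))⟫)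
        = fun _ => (0:ℝ) from funext fun x => inner_zero_right x]
    exact Set.Nonempty.image_const hne 0
  rw [suppFn, h1, csSup_singleton]

lemma revGauss_subset (hA : IsConvexBody0 A) (hB : IsConvexBody0 B) :
    revGauss A {w | suppFn B w < suppFn A w}
      ⊆ {u | u ∈ unitSphere n ∧ radialFn B u < radialFn A u} := by
  rintro v ⟨x, hxf, ⟨w, hw, hxw⟩, rfl⟩
  have hx0 : x ≠ 0 := frontier_ne_zero hA hxf
  have hxn : 0 < ‖x‖ := norm_pos_iff.2 hx0
  have hv1 : ‖‖x‖⁻¹ • x‖ = 1 := norm_inv_smul_unit hx0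
  have hvS : ‖x‖⁻¹ • x ∈ unitSphere n := by
    rw [unitSphere, mem_sphere_zero_iff_norm]; exact hv1
  have hxρ : ‖x‖ = radialFn A (‖x‖⁻¹ • x) := norm_eq_radialFn_of_frontier hA hxf
  refine ⟨hvS, ?_⟩
  simp only [mem_setOf_eq] at hw
  have hw0 : w ≠ 0 := by
    rintro rfl
    rw [suppFn_zero ⟨0, zero_mem hA⟩, suppFn_zero ⟨0, zero_mem hB⟩] at hw
    exact lt_irrefl _ hw
  obtain ⟨εB, hεB, hsubB⟩ := exists_radius hB
  have hBpos : 0 < suppFn B w := suppFn_pos hB.1 hεB hsubB hw0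
  have hxv : x = ‖x‖ • (‖x‖⁻¹ • x) := by
    rw [smul_smul, mul_inv_cancel₀ hxn.ne', one_smul]
  have hxw2 : ‖x‖ * ⟪‖x‖⁻¹ • x, w⟫ = suppFn A w := by
    rw [← real_inner_smul_left, ← hxv]; exact hxw
  have hvw : 0 < ⟪‖x‖⁻¹ • x, w⟫ := by
    rcases le_or_gt ⟪‖x‖⁻¹ • x, w⟫ 0 with hle | h
    · exfalso
      have : suppFn A w ≤ 0 := by
        rw [← hxw2]
        exact mul_nonpos_of_nonneg_of_nonpos hxn.le hle
      linarith
    · exact h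
  have hρB : radialFn B (‖x‖⁻¹ • x) * ⟪‖x‖⁻¹ • x, w⟫ ≤ suppFn B w := by
    have hmem : radialFn B (‖x‖⁻¹ • x) • (‖x‖⁻¹ • x) ∈ B := radialFn_smul_mem hB hv1
    have := inner_le_suppFn (v := w) hB.1 hmem
    rwa [real_inner_smul_left] at this
  have hlt : radialFn B (‖x‖⁻¹ • x) * ⟪‖x‖⁻¹ • x, w⟫
      < radialFn A (‖x‖⁻¹ • x) * ⟪‖x‖⁻¹ • x, w⟫ := by
    rw [← hxρ, hxw2]
    exact lt_of_le_of_lt hρB hw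
  exact lt_of_mul_lt_mul_right hlt hvw.le

lemma omega_subset_revGauss (hA : IsConvexBody0 A) (hB : IsConvexBody0 B) :
    {u | u ∈ unitSphere n ∧ radialFn B u < radialFn A u}
      ⊆ revGauss B {w | suppFn B w < suppFn A w} := by
  rintro u ⟨huS, hlt⟩
  have hu1 : ‖u‖ = 1 := by rwa [unitSphere, mem_sphere_zero_iff_norm] at huS
  have hρB := radialFn_pos hB hu1
  have hρA := radialFn_pos hA hu1
  set x := radialFn B u • u with hx
  have hxf : x ∈ frontier B := radialFn_smul_mem_frontier hB hu1
  obtain ⟨w, hw1, hxw⟩ := exists_unit_normal hB.1 hB.2.1 hB.2.2 hxf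
  have hw0 : w ≠ 0 := by
    intro hcon; rw [hcon, norm_zero] at hw1; norm_num at hw1
  obtain ⟨εB, hεB, hsubB⟩ := exists_radius hB
  have hBpos : 0 < suppFn B w := suppFn_pos hB.1 hεB hsubB hw0
  have hsw : radialFn B u * ⟪u, w⟫ = suppFn B w := by
    rw [← real_inner_smul_left, ← hx]; exact hxw
  have huw : 0 < ⟪u, w⟫ := by
    rcases le_or_gt ⟪u, w⟫ 0 with hle | h
    · exfalso
      have : suppFn B w ≤ 0 := by
        rw [← hsw]
        exact mul_nonpos_of_nonneg_of_nonpos hρB.le hle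
      linarith
    · exact h
  have hwη : suppFn B w < suppFn A w := by
    have hmem : radialFn A u • u ∈ A := radialFn_smul_mem hA hu1
    have h1 : radialFn A u * ⟪u, w⟫ ≤ suppFn A w := by
      have := inner_le_suppFn (v := w) hA.1 hmem
      rwa [real_inner_smul_left] at this
    have h2 : radialFn B u * ⟪u, w⟫ < radialFn A u * ⟪u, w⟫ :=
      mul_lt_mul_of_pos_right hlt huw
    rw [← hsw]
    linarith
  have hxnorm : ‖x‖ = radialFn B u := by
    rw [hx, norm_smul, Real.norm_eq_abs, abs_of_pos hρB, hu1, mul_one]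
  refine ⟨x, hxf, ⟨w, hwη, hxw⟩, ?_⟩
  rw [hxnorm, hx, smul_smul, inv_mul_cancel₀ hρB.ne', one_smul]

end BodyAux

/-- **Theorem 3.1** (uniqueness). If `φ : (0,∞) → (0,∞)` is strictly decreasing and
continuous, and `K, L ∈ 𝒦₀ⁿ` have equal dual Orlicz curvature measures, then `K = L`. -/
theorem dualCurv_injective {n : ℕ} (hn : 0 < n) (φ : ℝ → ℝ)
    (hφa : StrictAntiOn φ (Set.Ioi 0)) (hφc : ContinuousOn φ (Set.Ioi 0))
    (hφp : ∀ t > (0 : ℝ), 0 < φ t)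
    (K L : Set (EuclideanSpace ℝ (Fin n))) (hK : IsConvexBody0 K) (hL : IsConvexBody0 L)
    (h : ∀ η : Set (EuclideanSpace ℝ (Fin n)), MeasurableSet η →
      dualCurv φ K η = dualCurv φ L η) :
    K = L := by
  classical
  have key : ∀ (A B : Set (EuclideanSpace ℝ (Fin n))), IsConvexBody0 A → IsConvexBody0 B →
      (∀ η : Set (EuclideanSpace ℝ (Fin n)), MeasurableSet η →
        dualCurv φ A η = dualCurv φ B η) →
      ∀ u ∈ unitSphere n, radialFn A u ≤ radialFn B u := by
    intro A B hA hB hevent u₀ hu₀S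
    by_contra hcon
    push_neg at hcon
    have hSclosed : IsClosed (unitSphere n) := (isCompact_sphere _ _).isClosed
    have hSmeas : MeasurableSet (unitSphere n) := hSclosed.measurableSet
    have hScompact : IsCompact (unitSphere n) := isCompact_sphere _ _
    have hμS : sphMeasure n Set.univ < ⊤ := by
      rw [sphMeasure, Measure.restrict_apply MeasurableSet.univ, Set.univ_inter]
      exact BodyAux.sphere_hausdorff_lt_top hn
    haveI : IsFiniteMeasure (sphMeasure n) := ⟨hμS⟩
    have hcontA := BodyAux.radialFn_continuousOn hA
    have hcontB := BodyAux.radialFn_continuousOn hB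
    have hgc : ContinuousOn (fun u => radialFn A u - radialFn B u) (unitSphere n) :=
      hcontA.sub hcontB
    obtain ⟨U, hUopen, hUeq⟩ := (_root_.continuousOn_iff'.1 hgc) (Set.Ioi 0) isOpen_Ioi
    set ω : Set (EuclideanSpace ℝ (Fin n)) := U ∩ unitSphere n with hω
    have hωiff : ∀ u, u ∈ ω ↔ (u ∈ unitSphere n ∧ radialFn B u < radialFn A u) := by
      intro u
      constructor
      · intro hu
        have h1 : u ∈ (fun u => radialFn A u - radialFn B u) ⁻¹' (Set.Ioi 0) ∩ unitSphere n := by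
          rw [hUeq]; exact hu
        have h2 := h1.1
        simp only [Set.mem_preimage, Set.mem_Ioi] at h2
        exact ⟨h1.2, by linarith⟩
      · rintro ⟨huS, hlt⟩
        have h1 : u ∈ (fun u => radialFn A u - radialFn B u) ⁻¹' (Set.Ioi 0) ∩ unitSphere n :=
          ⟨by simp only [Set.mem_preimage, Set.mem_Ioi]; linarith, huS⟩
        rw [hUeq] at h1; exact h1
    have hωmeas : MeasurableSet ω := hUopen.measurableSet.inter hSmeas
    have hωeq : ω = {u | u ∈ unitSphere n ∧ radialFn B u < radialFn A u} := Set.ext hωiff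
    have hu₀ω : u₀ ∈ ω := (hωiff u₀).2 ⟨hu₀S, hcon⟩
    obtain ⟨ε, hε, hball⟩ := Metric.isOpen_iff.1 hUopen u₀ hu₀ω.1
    have hcap : unitSphere n ∩ Metric.ball u₀ ε ⊆ ω := fun z hz => ⟨hball hz.2, hz.1⟩
    have hu₀1 : ‖u₀‖ = 1 := by rwa [unitSphere, mem_sphere_zero_iff_norm] at hu₀S
    have hωpos : 0 < sphMeasure n ω := by
      refine lt_of_lt_of_le ?_ (measure_mono hcap)
      rw [sphMeasure, Measure.restrict_apply (hSmeas.inter measurableSet_ball)]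
      have h1 : unitSphere n ∩ ball u₀ ε ∩ unitSphere n = unitSphere n ∩ ball u₀ ε := by
        rw [Set.inter_eq_self_of_subset_left]
        exact Set.inter_subset_left
      rw [h1]
      exact BodyAux.sphere_cap_pos hn u₀ hu₀1 hε
    set η : Set (EuclideanSpace ℝ (Fin n)) := {w | suppFn B w < suppFn A w} with hη
    have hηmeas : MeasurableSet η :=
      (isOpen_lt (BodyAux.suppFn_continuous hB.1 ⟨0, BodyAux.zero_mem hB⟩)
        (BodyAux.suppFn_continuous hA.1 ⟨0, BodyAux.zero_mem hA⟩)).measurableSet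
    have hnorm : ∀ u, u ∈ unitSphere n → ‖u‖ = 1 := by
      intro u hu; rwa [unitSphere, mem_sphere_zero_iff_norm] at hu
    have hfAc : ContinuousOn (fun u => φ (radialFn A u)) (unitSphere n) :=
      hφc.comp hcontA fun u hu => Set.mem_Ioi.2 (BodyAux.radialFn_pos hA (hnorm u hu))
    have hfBc : ContinuousOn (fun u => φ (radialFn B u)) (unitSphere n) :=
      hφc.comp hcontB fun u hu => Set.mem_Ioi.2 (BodyAux.radialFn_pos hB (hnorm u hu))
    have hfAmeas : AEStronglyMeasurable (fun u => φ (radialFn A u)) (sphMeasure n) :=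
      hfAc.aestronglyMeasurable hSmeas
    have hfBmeas : AEStronglyMeasurable (fun u => φ (radialFn B u)) (sphMeasure n) :=
      hfBc.aestronglyMeasurable hSmeas
    have haeS : ∀ᵐ u ∂(sphMeasure n), u ∈ unitSphere n := ae_restrict_mem hSmeas
    obtain ⟨CA, hCA⟩ := hScompact.exists_bound_of_continuousOn hfAc
    obtain ⟨CB, hCB⟩ := hScompact.exists_bound_of_continuousOn hfBc
    have hintA : Integrable (fun u => φ (radialFn A u)) (sphMeasure n) := by
      refine Integrable.mono' (integrable_const CA) hfAmeas ?_
      filter_upwards [haeS] with u hu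
      exact hCA u hu
    have hintB : Integrable (fun u => φ (radialFn B u)) (sphMeasure n) := by
      refine Integrable.mono' (integrable_const CB) hfBmeas ?_
      filter_upwards [haeS] with u hu
      exact hCB u hu
    have hfApos : 0 ≤ᵐ[sphMeasure n] fun u => φ (radialFn A u) := by
      filter_upwards [haeS] with u hu
      exact (hφp _ (BodyAux.radialFn_pos hA (hnorm u hu))).le
    have hfBpos : 0 ≤ᵐ[sphMeasure n] fun u => φ (radialFn B u) := by
      filter_upwards [haeS] with u hu
      exact (hφp _ (BodyAux.radialFn_pos hB (hnorm u hu))).le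
    have hI1 : ∫ u in revGauss A η, φ (radialFn A u) ∂(sphMeasure n)
        ≤ ∫ u in ω, φ (radialFn A u) ∂(sphMeasure n) := by
      refine integral_mono_measure (Measure.restrict_mono ?_ le_rfl)
        (hfApos.filter_mono (ae_mono Measure.restrict_le_self)) hintA.restrict
      rw [hωeq]
      exact BodyAux.revGauss_subset hA hB
    have hI3 : ∫ u in ω, φ (radialFn B u) ∂(sphMeasure n)
        ≤ ∫ u in revGauss B η, φ (radialFn B u) ∂(sphMeasure n) := by
      refine integral_mono_measure (Measure.restrict_mono ?_ le_rfl)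
        (hfBpos.filter_mono (ae_mono Measure.restrict_le_self)) hintB.restrict
      rw [hωeq]
      exact BodyAux.omega_subset_revGauss hA hB
    have hptω : ∀ u ∈ ω, φ (radialFn A u) < φ (radialFn B u) := by
      intro u hu
      obtain ⟨huS, hlt⟩ := (hωiff u).1 hu
      exact hφa (Set.mem_Ioi.2 (BodyAux.radialFn_pos hB (hnorm u huS)))
        (Set.mem_Ioi.2 (BodyAux.radialFn_pos hA (hnorm u huS))) hlt
    have hI2 : ∫ u in ω, φ (radialFn A u) ∂(sphMeasure n)
        < ∫ u in ω, φ (radialFn B u) ∂(sphMeasure n) := by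
      have hg0 : 0 ≤ᵐ[(sphMeasure n).restrict ω]
          fun u => φ (radialFn B u) - φ (radialFn A u) := by
        have h1 : ∀ᵐ u ∂(sphMeasure n).restrict ω,
            0 ≤ φ (radialFn B u) - φ (radialFn A u) := by
          rw [ae_restrict_iff' hωmeas]
          refine Filter.Eventually.of_forall fun u hu => ?_
          have := hptω u hu
          linarith
        exact h1
      have hgint : Integrable (fun u => φ (radialFn B u) - φ (radialFn A u))
          ((sphMeasure n).restrict ω) := hintB.restrict.sub hintA.restrict
      have hpos : 0 < ∫ u in ω, (φ (radialFn B u) - φ (radialFn A u)) ∂(sphMeasure n) := by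
        rw [integral_pos_iff_support_of_nonneg_ae hg0 hgint]
        have hsupp : ω ⊆ Function.support fun u => φ (radialFn B u) - φ (radialFn A u) := by
          intro u hu
          have := hptω u hu
          simp only [Function.mem_support]
          intro hzero
          rw [sub_eq_zero] at hzero
          linarith
        calc (0:ℝ≥0∞) < sphMeasure n ω := hωpos
          _ = (sphMeasure n).restrict ω ω := by
              rw [Measure.restrict_apply hωmeas, Set.inter_self]
          _ ≤ (sphMeasure n).restrict ω
              (Function.support fun u => φ (radialFn B u) - φ (radialFn A u)) :=
              measure_mono hsupp
      have hsub := integral_sub hintB.restrict (hintA.restrict (s := ω))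
      rw [hsub] at hpos
      linarith
    have hfinal : ∫ u in revGauss A η, φ (radialFn A u) ∂(sphMeasure n)
        < ∫ u in revGauss B η, φ (radialFn B u) ∂(sphMeasure n) := by linarith
    have heq := hevent η hηmeas
    rw [dualCurv, dualCurv] at heq
    have hninv : (n:ℝ)⁻¹ ≠ 0 := by
      have : (0:ℝ) < n := Nat.cast_pos.2 hn
      positivity
    have := mul_left_cancel₀ hninv heq
    linarith
  apply BodyAux.eq_of_radialFn_eq hK hL
  intro u hu
  have huS : u ∈ unitSphere n := by rw [unitSphere, mem_sphere_zero_iff_norm]; exact hu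
  exact le_antisymm (key K L hK hL h u huS)
    (key L K hL hK (fun η hη => (h η hη).symm) u huS)
end
end

section
/- Let ϕ : (0,∞) → (0,∞) be a continuous function. If a sequence of convex bodies {K_i}_{i=1}^∞ ⊆ 𝒦₀ⁿ converges to K ∈ 𝒦₀ⁿ with respect to the Hausdorff metric, then Ṽ_ϕ(K_i) → Ṽ_ϕ(K) as i → ∞. -/
open MeasureTheory Metric Set Filter
open scoped ENNReal NNReal Topology RealInnerProductSpace

noncomputable section

open scoped Pointwise

section AuxLemmas

variable {n : ℕ}


lemma radial_props {K : Set (EuclideanSpace ℝ (Fin n))} (hc : IsCompact K) (hv : Convex ℝ K)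
    (h0 : (0 : EuclideanSpace ℝ (Fin n)) ∈ interior K) {u : EuclideanSpace ℝ (Fin n)}
    (hu : ‖u‖ = 1) :
    0 < radialFn K u ∧ radialFn K u • u ∈ K ∧
      ∀ s : ℝ, 0 < s → (s • u ∈ K ↔ s ≤ radialFn K u) := by
  obtain ⟨δ, hδ, hδK⟩ := Metric.mem_nhds_iff.mp (mem_interior_iff_mem_nhds.mp h0)
  obtain ⟨R, hR⟩ := isBounded_iff_forall_norm_le.mp hc.isBounded
  have hSne : (δ/2) ∈ {r : ℝ | 0 < r ∧ r • u ∈ K} := by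
    refine ⟨by positivity, hδK ?_⟩
    simp only [Metric.mem_ball, dist_zero_right, norm_smul, hu, Real.norm_eq_abs]
    rw [abs_of_pos (by positivity)]
    linarith
  have hbdd : BddAbove {r : ℝ | 0 < r ∧ r • u ∈ K} := by
    refine ⟨R, fun s hs => ?_⟩
    have := hR _ hs.2
    rwa [norm_smul, hu, Real.norm_eq_abs, mul_one, abs_of_pos hs.1] at this
  have hρpos : 0 < radialFn K u := lt_of_lt_of_le (by positivity) (le_csSup hbdd hSne)
  have hρmem : radialFn K u • u ∈ K := by
    have h1 : radialFn K u ∈ closure {r : ℝ | 0 < r ∧ r • u ∈ K} :=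
      csSup_mem_closure ⟨_, hSne⟩ hbdd
    have hcont : Continuous (fun t : ℝ => t • u) := continuous_id.smul continuous_const
    have h2 : radialFn K u • u ∈ (fun t : ℝ => t • u) '' closure {r : ℝ | 0 < r ∧ r • u ∈ K} :=
      ⟨_, h1, rfl⟩
    have h3 := image_closure_subset_closure_image (f := fun t : ℝ => t • u) hcont h2
    refine hc.isClosed.closure_subset (closure_mono ?_ h3)
    rintro x ⟨t, ht, rfl⟩; exact ht.2
  refine ⟨hρpos, hρmem, fun s hs => ⟨fun hmem => le_csSup hbdd ⟨hs, hmem⟩, fun hle => ?_⟩⟩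
  have h0K : (0 : EuclideanSpace ℝ (Fin n)) ∈ K := interior_subset h0
  have hcomb := hv hρmem h0K (a := s / radialFn K u) (b := 1 - s / radialFn K u)
    (by positivity) (by rw [sub_nonneg]; exact div_le_one_of_le₀ hle hρpos.le) (by ring)
  rwa [smul_zero, add_zero, smul_smul, div_mul_cancel₀ _ hρpos.ne'] at hcomb

lemma gauge_eq_inv_radial {K : Set (EuclideanSpace ℝ (Fin n))} (hc : IsCompact K)
    (hv : Convex ℝ K) (h0 : (0 : EuclideanSpace ℝ (Fin n)) ∈ interior K)
    {u : EuclideanSpace ℝ (Fin n)} (hu : ‖u‖ = 1) :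
    gauge K u = (radialFn K u)⁻¹ := by
  obtain ⟨hρpos, _, hchar⟩ := radial_props hc hv h0 hu
  have : {r : ℝ | 0 < r ∧ u ∈ r • (K : Set (EuclideanSpace ℝ (Fin n)))} = Ici (radialFn K u)⁻¹ := by
    ext r
    simp only [mem_setOf_eq, mem_Ici]
    constructor
    · rintro ⟨hr, hmem⟩
      rw [Set.mem_smul_set_iff_inv_smul_mem₀ hr.ne'] at hmem
      have := (hchar r⁻¹ (by positivity)).mp hmem
      exact (inv_le_comm₀ hρpos hr).mpr this
    · intro h
      have hr : 0 < r := lt_of_lt_of_le (by positivity) h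
      refine ⟨hr, (Set.mem_smul_set_iff_inv_smul_mem₀ hr.ne' _ _).mpr ?_⟩
      exact (hchar r⁻¹ (by positivity)).mpr ((inv_le_comm₀ hρpos hr).mp h)
  rw [gauge, this, csInf_Ici]

lemma radial_continuousOn_s3 {K : Set (EuclideanSpace ℝ (Fin n))} (hc : IsCompact K)
    (hv : Convex ℝ K) (h0 : (0 : EuclideanSpace ℝ (Fin n)) ∈ interior K) :
    ContinuousOn (radialFn K) (unitSphere n) := by
  have hg : Continuous (gauge K) := continuous_gauge hv (mem_interior_iff_mem_nhds.mp h0)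
  have : ContinuousOn (fun u => (gauge K u)⁻¹) (unitSphere n) := by
    refine ContinuousOn.inv₀ hg.continuousOn fun u hu => ?_
    have hu' : ‖u‖ = 1 := by simpa [unitSphere, dist_zero_right] using hu
    rw [gauge_eq_inv_radial hc hv h0 hu']
    exact inv_ne_zero (radial_props hc hv h0 hu').1.ne'
  refine this.congr fun u hu => ?_
  have hu' : ‖u‖ = 1 := by simpa [unitSphere, dist_zero_right] using hu
  dsimp only
  rw [gauge_eq_inv_radial hc hv h0 hu', inv_inv]


lemma closedBall_subset_of_approx {K : Set (EuclideanSpace ℝ (Fin n))} (hv : Convex ℝ K)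
    (hcl : IsClosed K) (hne : K.Nonempty) {r ε : ℝ} (hr : 0 < r) (hε : 0 ≤ ε) (hεr : ε < r)
    (h : ∀ x : EuclideanSpace ℝ (Fin n), ‖x‖ ≤ 2 * r → ∃ y ∈ K, dist x y ≤ ε) :
    Metric.closedBall (0 : EuclideanSpace ℝ (Fin n)) r ⊆ K := by
  intro x hx
  rw [Metric.mem_closedBall, dist_zero_right] at hx
  by_contra hxK
  obtain ⟨p, hpK, hproj⟩ := exists_norm_eq_iInf_of_complete_convex hne hcl.isComplete hv x
  have hchar := (norm_eq_iInf_iff_real_inner_le_zero hv hpK).mp hproj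
  have hd : 0 < ‖x - p‖ := by
    rw [norm_pos_iff, sub_ne_zero]
    rintro rfl; exact hxK hpK
  set d := ‖x - p‖ with hd_def
  set v : EuclideanSpace ℝ (Fin n) := d⁻¹ • (x - p) with hv_def
  have hvnorm : ‖v‖ = 1 := by
    rw [hv_def, norm_smul, Real.norm_eq_abs, abs_of_pos (by positivity)]
    field_simp
    exact hd_def.symm
  obtain ⟨y, hyK, hdist⟩ := h (x + r • v) (by
    calc ‖x + r • v‖ ≤ ‖x‖ + ‖r • v‖ := norm_add_le _ _
    _ ≤ r + r := by
        rw [norm_smul, Real.norm_eq_abs, hvnorm, mul_one, abs_of_pos hr]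
        linarith
    _ = 2 * r := by ring)
  have key : ⟪x + r • v - y, v⟫ = ⟪x - p, v⟫ + r - ⟪y - p, v⟫ := by
    have : x + r • v - y = (x - p) + r • v - (y - p) := by abel
    rw [this, inner_sub_left, inner_add_left, real_inner_smul_left, real_inner_self_eq_norm_sq,
      hvnorm]
    ring
  have h1 : ⟪x - p, v⟫ = d := by
    rw [hv_def, real_inner_smul_right, real_inner_self_eq_norm_sq, ← hd_def]
    field_simp [sq]
  have h2 : ⟪y - p, v⟫ ≤ 0 := by
    rw [hv_def, real_inner_smul_right]
    have := hchar y hyK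
    have h3 : (0:ℝ) ≤ d⁻¹ := by positivity
    calc d⁻¹ * ⟪y - p, x - p⟫ = d⁻¹ * ⟪x - p, y - p⟫ := by rw [real_inner_comm]
    _ ≤ 0 := mul_nonpos_of_nonneg_of_nonpos h3 this
  have hbound : |⟪x + r • v - y, v⟫| ≤ ε := by
    calc |⟪x + r • v - y, v⟫| ≤ ‖x + r • v - y‖ * ‖v‖ := abs_real_inner_le_norm _ _
    _ ≤ ε := by rw [hvnorm, mul_one]; rw [dist_eq_norm] at hdist; exact hdist
  have : d + r ≤ ε := by
    have := abs_le.mp hbound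
    rw [key, h1] at this
    linarith [this.2, h2]
  linarith
lemma radial_le_of_approx {K L : Set (EuclideanSpace ℝ (Fin n))}
    (hKc : IsCompact K) (hKv : Convex ℝ K) (hK0 : (0:EuclideanSpace ℝ (Fin n)) ∈ interior K)
    (hLc : IsCompact L) (hLv : Convex ℝ L) (hL0 : (0:EuclideanSpace ℝ (Fin n)) ∈ interior L)
    {δ ε : ℝ} (hδ : 0 < δ) (hε : 0 < ε)
    (hball : Metric.closedBall (0 : EuclideanSpace ℝ (Fin n)) δ ⊆ L)
    (happx : ∀ x ∈ K, ∃ y ∈ L, dist x y ≤ ε)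
    {u : EuclideanSpace ℝ (Fin n)} (hu : ‖u‖ = 1) :
    radialFn K u ≤ (1 + ε / δ) * radialFn L u := by
  obtain ⟨hρKpos, hρKmem, _⟩ := radial_props hKc hKv hK0 hu
  obtain ⟨hρLpos, _, hLchar⟩ := radial_props hLc hLv hL0 hu
  obtain ⟨y, hyL, hdist⟩ := happx _ hρKmem
  set c : ℝ := (1 + ε / δ)⁻¹ with hc_def
  have hc1 : 0 < 1 + ε / δ := by positivity
  have hcpos : 0 < c := by positivity
  have hcle : c ≤ 1 := by
    rw [hc_def]
    rw [inv_le_one_iff₀]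
    right; linarith [div_pos hε hδ]
  have h1c : 1 - c = c * (ε / δ) := by
    rw [hc_def]
    field_simp
    ring
  set w : EuclideanSpace ℝ (Fin n) := (δ / ε) • (radialFn K u • u - y) with hw_def
  have hwL : w ∈ L := by
    apply hball
    rw [Metric.mem_closedBall, dist_zero_right, hw_def, norm_smul, Real.norm_eq_abs,
      abs_of_pos (by positivity)]
    rw [dist_eq_norm] at hdist
    calc δ / ε * ‖radialFn K u • u - y‖ ≤ δ / ε * ε := by
          apply mul_le_mul_of_nonneg_left hdist (by positivity)
    _ = δ := by field_simp
  have hcomb : c • y + (1 - c) • w ∈ L := hLv hyL hwL hcpos.le (by linarith) (by ring)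
  have heq : c • y + (1 - c) • w = (c * radialFn K u) • u := by
    rw [h1c, hw_def, smul_smul]
    have : c * (ε / δ) * (δ / ε) = c := by field_simp
    rw [this, smul_sub, smul_smul]
    abel
  rw [heq] at hcomb
  have hle := (hLchar _ (by positivity)).mp hcomb
  calc radialFn K u = (1 + ε / δ) * (c * radialFn K u) := by
        rw [hc_def]; field_simp
  _ ≤ (1 + ε / δ) * radialFn L u := by
        apply mul_le_mul_of_nonneg_left hle hc1.le

end AuxLemmas
namespace SphFin

variable {m : ℕ}

lemma sqrt_diff_le {a b c : ℝ} (hc : 0 < c) (ha : c ≤ a) (hb : c ≤ b) :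
    |Real.sqrt a - Real.sqrt b| ≤ |a - b| / Real.sqrt c := by
  have hscpos : 0 < Real.sqrt c := Real.sqrt_pos.mpr hc
  have h1 : Real.sqrt c ≤ Real.sqrt a + Real.sqrt b :=
    le_trans (Real.sqrt_le_sqrt ha) (le_add_of_nonneg_right (Real.sqrt_nonneg b))
  rw [le_div_iff₀ hscpos]
  have key : (Real.sqrt a - Real.sqrt b) * (Real.sqrt a + Real.sqrt b) = a - b := by
    have h2 := Real.sq_sqrt (hc.le.trans ha)
    have h3 := Real.sq_sqrt (hc.le.trans hb)
    nlinarith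
  calc |Real.sqrt a - Real.sqrt b| * Real.sqrt c
      ≤ |Real.sqrt a - Real.sqrt b| * (Real.sqrt a + Real.sqrt b) :=
        mul_le_mul_of_nonneg_left h1 (abs_nonneg _)
  _ = |(Real.sqrt a - Real.sqrt b) * (Real.sqrt a + Real.sqrt b)| := by
        rw [abs_mul, abs_of_nonneg (show (0:ℝ) ≤ Real.sqrt a + Real.sqrt b by positivity)]
  _ = |a - b| := by rw [key]

/-- The cap domain. -/
def capDom (m : ℕ) : Set (EuclideanSpace ℝ (Fin m)) :=
  {y | ‖y‖ ^ 2 ≤ 1 - 1 / (m + 1)}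

/-- The cap parametrization. -/
def capMap (σ : ℝ) (i : Fin (m + 1)) (y : EuclideanSpace ℝ (Fin m)) :
    EuclideanSpace ℝ (Fin (m + 1)) :=
  (WithLp.equiv 2 (Fin (m + 1) → ℝ)).symm
    (i.insertNth (σ * Real.sqrt (1 - ‖y‖ ^ 2)) (WithLp.equiv 2 (Fin m → ℝ) y))

lemma capMap_apply_same (σ : ℝ) (i : Fin (m + 1)) (y : EuclideanSpace ℝ (Fin m)) :
    capMap σ i y i = σ * Real.sqrt (1 - ‖y‖ ^ 2) := by
  simp [capMap]

lemma capMap_apply_succAbove (σ : ℝ) (i : Fin (m + 1)) (y : EuclideanSpace ℝ (Fin m))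
    (k : Fin m) : capMap σ i y (i.succAbove k) = y k := by
  simp [capMap]

lemma norm_le_abs_add (x : EuclideanSpace ℝ (Fin (m + 1))) (i : Fin (m + 1)) :
    ‖x‖ ≤ |x i| + ‖(WithLp.equiv 2 (Fin m → ℝ)).symm (fun k => x (i.succAbove k))‖ := by
  rw [EuclideanSpace.norm_eq x, EuclideanSpace.norm_eq]
  rw [Fin.sum_univ_succAbove (fun j => ‖x j‖ ^ 2) i]
  set S : ℝ := ∑ k : Fin m, ‖x (i.succAbove k)‖ ^ 2 with hS_def
  have hS : 0 ≤ S := Finset.sum_nonneg fun _ _ => by positivity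
  have h2 : (∑ k : Fin m,
      ‖(WithLp.equiv 2 (Fin m → ℝ)).symm (fun k => x (i.succAbove k)) k‖ ^ 2) = S := rfl
  rw [h2]
  have hsq := Real.sq_sqrt hS
  calc Real.sqrt (‖x i‖ ^ 2 + S) ≤ Real.sqrt ((|x i| + Real.sqrt S) ^ 2) := by
        apply Real.sqrt_le_sqrt
        rw [Real.norm_eq_abs]
        nlinarith [Real.sqrt_nonneg S, abs_nonneg (x i)]
  _ = |x i| + Real.sqrt S := Real.sqrt_sq (by positivity)

lemma norm_le_one_of_capDom {y : EuclideanSpace ℝ (Fin m)} (hy : y ∈ capDom m) : ‖y‖ ≤ 1 := by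
  have h1 : ‖y‖ ^ 2 ≤ 1 := le_trans hy (by
    have : (0:ℝ) ≤ 1 / (m + 1) := by positivity
    linarith)
  nlinarith [norm_nonneg y]

lemma capMap_lipschitz (σ : ℝ) (hσ : σ = 1 ∨ σ = -1) (i : Fin (m + 1)) :
    LipschitzOnWith (⟨1 + 2 * Real.sqrt (m + 1), by positivity⟩ : ℝ≥0)
      (capMap σ i) (capDom m) := by
  have hσ1 : |σ| = 1 := by rcases hσ with rfl | rfl <;> norm_num
  apply LipschitzOnWith.of_dist_le_mul
  intro y hy z hz
  rw [dist_eq_norm, dist_eq_norm]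
  have hc : (0:ℝ) < 1 / (m + 1) := by positivity
  have hay : 1 / ((m:ℝ) + 1) ≤ 1 - ‖y‖ ^ 2 := by
    have := hy; simp only [capDom, mem_setOf_eq] at this; linarith
  have haz : 1 / ((m:ℝ) + 1) ≤ 1 - ‖z‖ ^ 2 := by
    have := hz; simp only [capDom, mem_setOf_eq] at this; linarith
  have hfd : |Real.sqrt (1 - ‖y‖ ^ 2) - Real.sqrt (1 - ‖z‖ ^ 2)| ≤
      2 * Real.sqrt (m + 1) * ‖y - z‖ := by
    have h1 := sqrt_diff_le hc hay haz
    have h2 : |1 - ‖y‖ ^ 2 - (1 - ‖z‖ ^ 2)| ≤ 2 * ‖y - z‖ := by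
      have h3 : |‖y‖ - ‖z‖| ≤ ‖y - z‖ := abs_norm_sub_norm_le y z
      have h4 : ‖y‖ ≤ 1 := norm_le_one_of_capDom hy
      have h5 : ‖z‖ ≤ 1 := norm_le_one_of_capDom hz
      rw [abs_le]
      constructor <;> nlinarith [abs_le.mp h3, norm_nonneg y, norm_nonneg z,
        norm_nonneg (y - z)]
    have h7 : Real.sqrt (1 / ((m:ℝ) + 1)) = (Real.sqrt ((m:ℝ) + 1))⁻¹ := by
      rw [one_div, Real.sqrt_inv]
    have h8 : 0 < Real.sqrt ((m:ℝ) + 1) := Real.sqrt_pos.mpr (by positivity)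
    calc |Real.sqrt (1 - ‖y‖ ^ 2) - Real.sqrt (1 - ‖z‖ ^ 2)|
        ≤ |1 - ‖y‖ ^ 2 - (1 - ‖z‖ ^ 2)| / Real.sqrt (1 / ((m:ℝ) + 1)) := h1
    _ = |1 - ‖y‖ ^ 2 - (1 - ‖z‖ ^ 2)| * Real.sqrt ((m:ℝ) + 1) := by
        rw [h7, div_eq_mul_inv, inv_inv]
    _ ≤ 2 * ‖y - z‖ * Real.sqrt ((m:ℝ) + 1) := by
        apply mul_le_mul_of_nonneg_right h2 h8.le
    _ = 2 * Real.sqrt ((m:ℝ) + 1) * ‖y - z‖ := by ring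
  have hmain := norm_le_abs_add (capMap σ i y - capMap σ i z) i
  have hco1 : (capMap σ i y - capMap σ i z) i =
      σ * Real.sqrt (1 - ‖y‖ ^ 2) - σ * Real.sqrt (1 - ‖z‖ ^ 2) := by
    rw [PiLp.sub_apply, capMap_apply_same, capMap_apply_same]
  have hco2 : (WithLp.equiv 2 (Fin m → ℝ)).symm
      (fun k => (capMap σ i y - capMap σ i z) (i.succAbove k)) = y - z := by
    ext k
    rw [WithLp.equiv_symm_apply, PiLp.toLp_apply, PiLp.sub_apply, capMap_apply_succAbove,
      capMap_apply_succAbove]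
    rfl
  rw [hco1, hco2] at hmain
  have habs : |σ * Real.sqrt (1 - ‖y‖ ^ 2) - σ * Real.sqrt (1 - ‖z‖ ^ 2)| =
      |Real.sqrt (1 - ‖y‖ ^ 2) - Real.sqrt (1 - ‖z‖ ^ 2)| := by
    rw [← mul_sub, abs_mul, hσ1, one_mul]
  rw [habs] at hmain
  calc ‖capMap σ i y - capMap σ i z‖
      ≤ |Real.sqrt (1 - ‖y‖ ^ 2) - Real.sqrt (1 - ‖z‖ ^ 2)| + ‖y - z‖ := hmain
  _ ≤ 2 * Real.sqrt (m + 1) * ‖y - z‖ + ‖y - z‖ := by linarith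
  _ = (1 + 2 * Real.sqrt (m + 1)) * ‖y - z‖ := by ring
  _ = (⟨1 + 2 * Real.sqrt (m + 1), by positivity⟩ : ℝ≥0) * ‖y - z‖ := rfl

lemma sphere_subset_caps :
    unitSphere (m + 1) ⊆
      ⋃ i : Fin (m + 1), (capMap 1 i '' capDom m ∪ capMap (-1) i '' capDom m) := by
  intro u hu
  have hu1 : ‖u‖ = 1 := by simpa [unitSphere, dist_zero_right] using hu
  have hsum : ∑ j, ‖u j‖ ^ 2 = 1 := by
    have h := EuclideanSpace.norm_eq u
    rw [hu1] at h
    have h2 : Real.sqrt (∑ j, ‖u j‖ ^ 2) = 1 := h.symm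
    have h3 : (0:ℝ) ≤ ∑ j, ‖u j‖ ^ 2 := Finset.sum_nonneg fun _ _ => by positivity
    nlinarith [Real.sq_sqrt h3]
  have hex : ∃ i : Fin (m + 1), 1 / ((m:ℝ) + 1) ≤ ‖u i‖ ^ 2 := by
    by_contra hno
    push_neg at hno
    have hlt : ∑ j, ‖u j‖ ^ 2 < ∑ _j : Fin (m + 1), 1 / ((m:ℝ) + 1) :=
      Finset.sum_lt_sum_of_nonempty ⟨⟨0, Nat.succ_pos m⟩, Finset.mem_univ _⟩
        fun j _ => hno j
    rw [Finset.sum_const, Finset.card_univ, Fintype.card_fin, nsmul_eq_mul] at hlt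
    have : ((m:ℝ) + 1) * (1 / ((m:ℝ) + 1)) = 1 := by field_simp
    rw [hsum] at hlt
    push_cast at hlt
    rw [this] at hlt
    exact lt_irrefl _ hlt
  obtain ⟨i, hi⟩ := hex
  set y : EuclideanSpace ℝ (Fin m) := WithLp.toLp 2 (fun k => u (i.succAbove k)) with hy_def
  have hynorm : ‖y‖ ^ 2 = 1 - ‖u i‖ ^ 2 := by
    have h := EuclideanSpace.norm_eq y
    have h3 : (0:ℝ) ≤ ∑ k, ‖y k‖ ^ 2 := Finset.sum_nonneg fun _ _ => by positivity
    have h4 : ‖y‖ ^ 2 = ∑ k, ‖y k‖ ^ 2 := by rw [h, Real.sq_sqrt h3]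
    rw [h4]
    have h5 := Fin.sum_univ_succAbove (fun j => ‖u j‖ ^ 2) i
    rw [hsum] at h5
    have h6 : ∑ k, ‖y k‖ ^ 2 = ∑ k : Fin m, ‖u (i.succAbove k)‖ ^ 2 := rfl
    rw [h6]; linarith
  have hyD : y ∈ capDom m := by
    rw [capDom, mem_setOf_eq, hynorm]; linarith
  have hfy : Real.sqrt (1 - ‖y‖ ^ 2) = |u i| := by
    rw [hynorm]
    have : 1 - (1 - ‖u i‖ ^ 2) = ‖u i‖ ^ 2 := by ring
    rw [this, Real.norm_eq_abs, sq_abs, Real.sqrt_sq_eq_abs]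
  rcases le_or_gt 0 (u i) with hpos | hneg
  · refine mem_iUnion.mpr ⟨i, Or.inl ⟨y, hyD, ?_⟩⟩
    ext j
    rcases eq_or_ne j i with rfl | hne
    · rw [capMap_apply_same, hfy, one_mul, abs_of_nonneg hpos]
    · obtain ⟨k, rfl⟩ := Fin.exists_succAbove_eq hne
      rw [capMap_apply_succAbove]
  · refine mem_iUnion.mpr ⟨i, Or.inr ⟨y, hyD, ?_⟩⟩
    ext j
    rcases eq_or_ne j i with rfl | hne
    · rw [capMap_apply_same, hfy, abs_of_neg hneg]; ring
    · obtain ⟨k, rfl⟩ := Fin.exists_succAbove_eq hne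
      rw [capMap_apply_succAbove]

lemma pi_to_euclid_lipschitz :
    LipschitzWith (Real.sqrt m).toNNReal
      (fun x : Fin m → ℝ => ((WithLp.equiv 2 (Fin m → ℝ)).symm x : EuclideanSpace ℝ (Fin m))) := by
  rw [lipschitzWith_iff_dist_le_mul]
  intro x y
  rw [EuclideanSpace.dist_eq]
  have h1 : ∀ i : Fin m, dist ((WithLp.equiv 2 (Fin m → ℝ)).symm x i)
      ((WithLp.equiv 2 (Fin m → ℝ)).symm y i) = dist (x i) (y i) := fun i => rfl
  have h2 : ∑ i, dist ((WithLp.equiv 2 (Fin m → ℝ)).symm x i)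
      ((WithLp.equiv 2 (Fin m → ℝ)).symm y i) ^ 2 ≤ ∑ _i : Fin m, dist x y ^ 2 := by
    apply Finset.sum_le_sum
    intro i _
    rw [h1 i]
    have := dist_le_pi_dist x y i
    nlinarith [dist_nonneg (x := x i) (y := y i)]
  calc Real.sqrt (∑ i, dist ((WithLp.equiv 2 (Fin m → ℝ)).symm x i)
        ((WithLp.equiv 2 (Fin m → ℝ)).symm y i) ^ 2)
      ≤ Real.sqrt (∑ _i : Fin m, dist x y ^ 2) := Real.sqrt_le_sqrt h2
  _ = Real.sqrt (m * dist x y ^ 2) := by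
      rw [Finset.sum_const, Finset.card_univ, Fintype.card_fin, nsmul_eq_mul]
  _ = Real.sqrt m * dist x y := by
      rw [Real.sqrt_mul (by positivity), Real.sqrt_sq dist_nonneg]
  _ = (Real.sqrt m).toNNReal * dist x y := by
      rw [Real.coe_toNNReal _ (Real.sqrt_nonneg _)]

lemma capDom_hausdorff_lt_top : μH[(m : ℝ)] (capDom m) < ⊤ := by
  have hsub : capDom m ⊆ (fun x : Fin m → ℝ =>
      ((WithLp.equiv 2 (Fin m → ℝ)).symm x : EuclideanSpace ℝ (Fin m))) ''
      Metric.closedBall (0 : Fin m → ℝ) 1 := by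
    intro y hy
    refine ⟨WithLp.equiv 2 (Fin m → ℝ) y, ?_, rfl⟩
    rw [Metric.mem_closedBall, dist_zero_right]
    rw [pi_norm_le_iff_of_nonneg zero_le_one]
    intro i
    have h1 : ‖y‖ ≤ 1 := norm_le_one_of_capDom hy
    have h2 : |y i| ≤ ‖y‖ := by
      have h3 := EuclideanSpace.norm_eq y
      have h4 : ‖y i‖ ^ 2 ≤ ∑ k, ‖y k‖ ^ 2 :=
        Finset.single_le_sum (f := fun k => ‖y k‖ ^ 2)
          (fun k _ => by positivity) (Finset.mem_univ i)
      rw [h3]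
      rw [← Real.sqrt_sq (abs_nonneg (y i))]
      apply Real.sqrt_le_sqrt
      rwa [Real.norm_eq_abs] at h4
    exact le_trans h2 h1
  calc μH[(m : ℝ)] (capDom m) ≤ μH[(m : ℝ)] ((fun x : Fin m → ℝ =>
        ((WithLp.equiv 2 (Fin m → ℝ)).symm x : EuclideanSpace ℝ (Fin m))) ''
        Metric.closedBall (0 : Fin m → ℝ) 1) := measure_mono hsub
  _ ≤ ((Real.sqrt m).toNNReal : ℝ≥0∞) ^ (m:ℝ) *
        μH[(m : ℝ)] (Metric.closedBall (0 : Fin m → ℝ) 1) :=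
      pi_to_euclid_lipschitz.hausdorffMeasure_image_le (by positivity) _
  _ < ⊤ := by
      apply ENNReal.mul_lt_top
      · exact ENNReal.rpow_lt_top_of_nonneg (by positivity) ENNReal.coe_ne_top
      · have hcast : (μH[(m : ℝ)] : Measure (Fin m → ℝ)) = volume := by
          have := MeasureTheory.hausdorffMeasure_pi_real (ι := Fin m)
          rwa [Fintype.card_fin] at this
        rw [hcast]
        exact (isCompact_closedBall _ _).measure_lt_top

lemma sphMeasure_univ_lt_top (n : ℕ) (hn : 0 < n) : sphMeasure n Set.univ < ⊤ := by
  obtain ⟨m, rfl⟩ : ∃ m, n = m + 1 := ⟨n - 1, by omega⟩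
  rw [sphMeasure, Measure.restrict_apply_univ]
  have hcast : ((m + 1 : ℕ) : ℝ) - 1 = (m : ℝ) := by push_cast; ring
  rw [hcast]
  have hmono := measure_mono (μ := (μH[(m : ℝ)] : Measure (EuclideanSpace ℝ (Fin (m+1)))))
    sphere_subset_caps
  refine lt_of_le_of_lt (hmono.trans (measure_iUnion_le _)) ?_
  have hbound : ∀ (σ : ℝ), σ = 1 ∨ σ = -1 → ∀ i : Fin (m + 1),
      μH[(m : ℝ)] (capMap σ i '' capDom m) < ⊤ := by
    intro σ hσ i
    refine lt_of_le_of_lt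
      ((capMap_lipschitz σ hσ i).hausdorffMeasure_image_le (by positivity)) ?_
    exact ENNReal.mul_lt_top
      (ENNReal.rpow_lt_top_of_nonneg (by positivity) ENNReal.coe_ne_top)
      capDom_hausdorff_lt_top
  rw [tsum_fintype]
  apply ENNReal.sum_lt_top.mpr
  intro i _
  exact lt_of_le_of_lt (measure_union_le _ _)
    (ENNReal.add_lt_top.mpr ⟨hbound 1 (Or.inl rfl) i, hbound (-1) (Or.inr rfl) i⟩)

end SphFin


section MainAux

variable {n : ℕ}

lemma integrable_phi_radial (hn : 0 < n) {K : Set (EuclideanSpace ℝ (Fin n))}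
    (hKc : IsCompact K) (hKv : Convex ℝ K)
    (hK0 : (0 : EuclideanSpace ℝ (Fin n)) ∈ interior K) {ϕ : ℝ → ℝ}
    (hϕc : ContinuousOn ϕ (Set.Ioi 0)) :
    Integrable (fun u => ϕ (radialFn K u)) (sphMeasure n) := by
  haveI : IsFiniteMeasure (sphMeasure n) := ⟨SphFin.sphMeasure_univ_lt_top n hn⟩
  have hS : MeasurableSet (unitSphere n) :=
    (isClosed_sphere : IsClosed (unitSphere n)).measurableSet
  have hcont : ContinuousOn (fun u => ϕ (radialFn K u)) (unitSphere n) := by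
    refine hϕc.comp (radial_continuousOn_s3 hKc hKv hK0) (fun u hu => ?_)
    have hu' : ‖u‖ = 1 := by simpa [unitSphere, dist_zero_right] using hu
    exact mem_Ioi.mpr (radial_props hKc hKv hK0 hu').1
  obtain ⟨C, hC⟩ :=
    (isCompact_sphere (0 : EuclideanSpace ℝ (Fin n)) 1).exists_bound_of_continuousOn hcont
  refine ⟨hcont.aestronglyMeasurable hS, ?_⟩
  apply MeasureTheory.HasFiniteIntegral.of_bounded (C := C)
  filter_upwards [ae_restrict_mem hS] with u hu using hC u hu

end MainAux

set_option maxHeartbeats 2000000 in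
/-- **Lemma 3.1** (continuity of the dual Orlicz-quermassintegral). If `ϕ : (0,∞) → (0,∞)`
is continuous and `K_i → K` in the Hausdorff metric with `K_i, K ∈ 𝒦₀ⁿ`, then
`Ṽ_ϕ(K_i) → Ṽ_ϕ(K)`. -/
theorem dualQuerm_continuous {n : ℕ} (hn : 0 < n) (ϕ : ℝ → ℝ)
    (hϕc : ContinuousOn ϕ (Set.Ioi 0)) (hϕp : ∀ t > (0 : ℝ), 0 < ϕ t)
    (K : ℕ → Set (EuclideanSpace ℝ (Fin n))) (K₀ : Set (EuclideanSpace ℝ (Fin n)))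
    (hKi : ∀ i, IsConvexBody0 (K i)) (hK₀ : IsConvexBody0 K₀)
    (hconv : Tendsto (fun i => Metric.hausdorffDist (K i) K₀) atTop (𝓝 0)) :
    Tendsto (fun i => dualQuerm ϕ (K i)) atTop (𝓝 (dualQuerm ϕ K₀)) := by
  classical
  obtain ⟨hK₀c, hK₀v, hK₀0⟩ := hK₀
  haveI : IsFiniteMeasure (sphMeasure n) := ⟨SphFin.sphMeasure_univ_lt_top n hn⟩
  have hS : MeasurableSet (unitSphere n) :=
    (isClosed_sphere : IsClosed (unitSphere n)).measurableSet
  set M : ℝ := (sphMeasure n Set.univ).toReal with hM_def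
  have hM0 : 0 ≤ M := ENNReal.toReal_nonneg
  -- interior ball and outer bound for K₀
  obtain ⟨ε₀, hε₀, hball₀⟩ := Metric.mem_nhds_iff.mp (mem_interior_iff_mem_nhds.mp hK₀0)
  set r : ℝ := ε₀ / 4 with hr_def
  have hr : 0 < r := by positivity
  have hball2r : Metric.closedBall (0 : EuclideanSpace ℝ (Fin n)) (2 * r) ⊆ K₀ := by
    refine subset_trans (fun x hx => ?_) hball₀
    rw [Metric.mem_closedBall] at hx
    rw [Metric.mem_ball]
    calc dist x 0 ≤ 2 * r := hx
    _ < ε₀ := by rw [hr_def]; linarith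
  obtain ⟨R, hRbound⟩ := isBounded_iff_forall_norm_le.mp hK₀c.isBounded
  have hu₀ : ‖(EuclideanSpace.single (⟨0, hn⟩ : Fin n) (1 : ℝ))‖ = 1 := by
    rw [EuclideanSpace.norm_single]; norm_num
  have hRr : 2 * r ≤ R := by
    have hmem : (2 * r) • (EuclideanSpace.single (⟨0, hn⟩ : Fin n) (1 : ℝ)) ∈ K₀ := by
      apply hball2r
      rw [Metric.mem_closedBall, dist_zero_right, norm_smul, Real.norm_eq_abs,
        abs_of_pos (by positivity), hu₀, mul_one]
    have := hRbound _ hmem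
    rwa [norm_smul, Real.norm_eq_abs, abs_of_pos (by positivity), hu₀, mul_one] at this
  have hRpos : 0 < R := lt_of_lt_of_le (by positivity) hRr
  -- uniform continuity of ϕ on [r, 2R]
  have hIcc : Set.Icc r (2 * R) ⊆ Set.Ioi 0 := fun t ht => lt_of_lt_of_le hr ht.1
  have huc : UniformContinuousOn ϕ (Set.Icc r (2 * R)) :=
    isCompact_Icc.uniformContinuousOn_of_continuous (hϕc.mono hIcc)
  rw [Metric.tendsto_atTop]
  intro η hη
  have hnR : (0 : ℝ) < n := by exact_mod_cast hn
  set η' : ℝ := η * n / (2 * (M + 1)) with hη'_def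
  have hη' : 0 < η' := by
    apply div_pos (mul_pos hη hnR) (by positivity)
  obtain ⟨δ', hδ', hδ'uc⟩ := Metric.uniformContinuousOn_iff.mp huc η' hη'
  set ε : ℝ := min (r / 2) (δ' * r / (4 * R)) with hε_def
  have hεpos : 0 < ε := lt_min (by positivity) (by positivity)
  have hεr2 : ε ≤ r / 2 := min_le_left _ _
  have hεδ : 2 * R * ε / r ≤ δ' / 2 := by
    have h1 : ε ≤ δ' * r / (4 * R) := min_le_right _ _
    rw [div_le_div_iff₀ (by positivity) (by norm_num)]
    have h2 : 2 * R * ε ≤ 2 * R * (δ' * r / (4 * R)) :=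
      mul_le_mul_of_nonneg_left h1 (by positivity)
    calc 2 * R * ε * 2 ≤ 2 * R * (δ' * r / (4 * R)) * 2 := by linarith
    _ = δ' * r := by field_simp; ring
  obtain ⟨N, hN⟩ := Metric.tendsto_atTop.mp hconv ε hεpos
  refine ⟨N, fun i hi => ?_⟩
  have hdi : Metric.hausdorffDist (K i) K₀ < ε := by
    have := hN i hi
    rwa [Real.dist_eq, sub_zero, abs_of_nonneg Metric.hausdorffDist_nonneg] at this
  obtain ⟨hKic, hKiv, hKi0⟩ := hKi i
  have hKine : (K i).Nonempty := ⟨0, interior_subset hKi0⟩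
  have hK₀ne : K₀.Nonempty := ⟨0, interior_subset hK₀0⟩
  have hene : EMetric.hausdorffEdist (K i) K₀ ≠ ⊤ :=
    Metric.hausdorffEdist_ne_top_of_nonempty_of_bounded hKine hK₀ne
      hKic.isBounded hK₀c.isBounded
  have happx1 : ∀ x ∈ K i, ∃ y ∈ K₀, dist x y ≤ ε := fun x hx => by
    obtain ⟨y, hy, hd⟩ := Metric.exists_dist_lt_of_hausdorffDist_lt hx hdi hene
    exact ⟨y, hy, hd.le⟩
  have happx0 : ∀ x ∈ K₀, ∃ y ∈ K i, dist x y ≤ ε := fun x hx => by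
    obtain ⟨y, hy, hd⟩ := Metric.exists_dist_lt_of_hausdorffDist_lt' hx hdi hene
    exact ⟨y, hy, by rw [dist_comm]; exact hd.le⟩
  have hballi : Metric.closedBall (0 : EuclideanSpace ℝ (Fin n)) r ⊆ K i := by
    refine closedBall_subset_of_approx hKiv hKic.isClosed hKine hr hεpos.le
      (lt_of_le_of_lt hεr2 (by linarith)) (fun x hx => ?_)
    refine happx0 x (hball2r ?_)
    rw [Metric.mem_closedBall, dist_zero_right]; exact hx
  -- pointwise estimates on the sphere
  have hpt : ∀ u ∈ unitSphere n,
      ‖ϕ (radialFn (K i) u) - ϕ (radialFn K₀ u)‖ ≤ η' := by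
    intro u hu
    have hu' : ‖u‖ = 1 := by simpa [unitSphere, dist_zero_right] using hu
    obtain ⟨hρipos, hρimem, hichar⟩ := radial_props hKic hKiv hKi0 hu'
    obtain ⟨hρ0pos, hρ0mem, h0char⟩ := radial_props hK₀c hK₀v hK₀0 hu'
    set ρi := radialFn (K i) u
    set ρ0 := radialFn K₀ u
    have h_i_le : ρi ≤ (1 + ε / (2 * r)) * ρ0 :=
      radial_le_of_approx hKic hKiv hKi0 hK₀c hK₀v hK₀0 (by positivity) hεpos
        hball2r happx1 hu'
    have h_0_le : ρ0 ≤ (1 + ε / r) * ρi :=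
      radial_le_of_approx hK₀c hK₀v hK₀0 hKic hKiv hKi0 hr hεpos hballi happx0 hu'
    have hρ0low : 2 * r ≤ ρ0 := by
      refine (h0char (2 * r) (by positivity)).mp (hball2r ?_)
      rw [Metric.mem_closedBall, dist_zero_right, norm_smul, Real.norm_eq_abs,
        abs_of_pos (by positivity), hu', mul_one]
    have hρ0up : ρ0 ≤ R := by
      have := hRbound _ hρ0mem
      rwa [norm_smul, Real.norm_eq_abs, abs_of_pos hρ0pos, hu', mul_one] at this
    have hεrr : ε / r ≤ 1 / 2 := by
      rw [div_le_div_iff₀ hr (by norm_num)]; linarith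
    have hρilow : r ≤ ρi := by nlinarith
    have hεr4 : ε / (2 * r) ≤ 1 / 4 := by
      rw [div_le_div_iff₀ (by positivity) (by norm_num)]; linarith
    have hρiup : ρi ≤ 2 * R := by
      have hprod : (ε / (2 * r)) * ρ0 ≤ (1 / 4) * R :=
        mul_le_mul hεr4 hρ0up hρ0pos.le (by norm_num)
      nlinarith [hprod]
    have hdiff : |ρi - ρ0| ≤ 2 * R * ε / r := by
      rw [abs_le]
      constructor
      · have h1 : ρ0 - ρi ≤ (ε / r) * ρi := by nlinarith
        have h2 : (ε / r) * ρi ≤ (ε / r) * (2 * R) :=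
          mul_le_mul_of_nonneg_left hρiup (by positivity)
        have h3 : (ε / r) * (2 * R) = 2 * R * ε / r := by field_simp
        linarith
      · have h1 : ρi - ρ0 ≤ (ε / (2 * r)) * ρ0 := by nlinarith
        have h2 : (ε / (2 * r)) * ρ0 ≤ (ε / (2 * r)) * R :=
          mul_le_mul_of_nonneg_left hρ0up (by positivity)
        have h3 : (ε / (2 * r)) * R ≤ 2 * R * ε / r := by
          rw [div_mul_eq_mul_div, div_le_div_iff₀ (by positivity) hr]
          nlinarith [mul_nonneg (mul_nonneg hεpos.le hRpos.le) hr.le]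
        linarith
    have hmemi : ρi ∈ Set.Icc r (2 * R) := ⟨hρilow, hρiup⟩
    have hmem0 : ρ0 ∈ Set.Icc r (2 * R) := ⟨by linarith, by linarith⟩
    have hdd : dist ρi ρ0 < δ' := by
      rw [Real.dist_eq]
      calc |ρi - ρ0| ≤ 2 * R * ε / r := hdiff
      _ ≤ δ' / 2 := hεδ
      _ < δ' := by linarith
    have := hδ'uc ρi hmemi ρ0 hmem0 hdd
    rw [Real.dist_eq] at this
    rw [Real.norm_eq_abs]
    exact this.le
  -- integral estimate
  have hint_i : Integrable (fun u => ϕ (radialFn (K i) u)) (sphMeasure n) :=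
    integrable_phi_radial hn hKic hKiv hKi0 hϕc
  have hint_0 : Integrable (fun u => ϕ (radialFn K₀ u)) (sphMeasure n) :=
    integrable_phi_radial hn hK₀c hK₀v hK₀0 hϕc
  have hae : ∀ᵐ u ∂(sphMeasure n),
      ‖ϕ (radialFn (K i) u) - ϕ (radialFn K₀ u)‖ ≤ η' := by
    filter_upwards [ae_restrict_mem hS] with u hu using hpt u hu
  have hnorm : ‖∫ u, (ϕ (radialFn (K i) u) - ϕ (radialFn K₀ u)) ∂(sphMeasure n)‖ ≤
      η' * M := by
    exact norm_integral_le_of_norm_le_const hae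
  rw [Real.dist_eq, dualQuerm, dualQuerm, ← mul_sub,
    ← integral_sub hint_i hint_0]
  rw [abs_mul, abs_of_nonneg (by positivity : (0:ℝ) ≤ (n:ℝ)⁻¹)]
  rw [← Real.norm_eq_abs (∫ u, (ϕ (radialFn (K i) u) - ϕ (radialFn K₀ u)) ∂(sphMeasure n))]
  calc (n:ℝ)⁻¹ * ‖∫ u, (ϕ (radialFn (K i) u) - ϕ (radialFn K₀ u)) ∂(sphMeasure n)‖
      ≤ (n:ℝ)⁻¹ * (η' * M) := mul_le_mul_of_nonneg_left hnorm (by positivity)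
  _ = η * M / (2 * (M + 1)) := by
      rw [hη'_def]; field_simp
  _ < η := by
      rw [div_lt_iff₀ (by positivity)]
      nlinarith
end
end

section
/- Let K ∈ 𝒦₀ⁿ and let φ : (0,∞) → (0,∞) be a continuous function. The dual Orlicz curvature measure C̃_φ(K,·) is absolutely continuous with respect to the surface area measure S(K,·): every Borel set η ⊆ S^{n-1} with S(K,η) = 0 satisfies C̃_φ(K,η) = 0. -/
open MeasureTheory Metric Set Filter
open scoped ENNReal NNReal Topology RealInnerProductSpace

noncomputable section

/-! ### Auxiliary lemmas -/

section Aux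

open scoped RealInnerProductSpace

lemma norm_radialProj_sub_le {E : Type*} [NormedAddCommGroup E] [NormedSpace ℝ E]
    {c : ℝ} (hc : 0 < c) {a b : E} (ha : c ≤ ‖a‖) (hb : c ≤ ‖b‖) :
    ‖‖a‖⁻¹ • a - ‖b‖⁻¹ • b‖ ≤ 2 / c * ‖a - b‖ := by
  have ha0 : (0:ℝ) < ‖a‖ := lt_of_lt_of_le hc ha
  have hb0 : (0:ℝ) < ‖b‖ := lt_of_lt_of_le hc hb
  have key : ‖a‖⁻¹ • a - ‖b‖⁻¹ • b = ‖a‖⁻¹ • (a - b) + (‖a‖⁻¹ - ‖b‖⁻¹) • b := by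
    rw [smul_sub, sub_smul]; abel
  rw [key]
  have h1 : ‖‖a‖⁻¹ • (a - b)‖ = ‖a‖⁻¹ * ‖a - b‖ := by
    rw [norm_smul, Real.norm_eq_abs, abs_of_pos (by positivity)]
  have h2 : ‖(‖a‖⁻¹ - ‖b‖⁻¹) • b‖ ≤ ‖a‖⁻¹ * ‖a - b‖ := by
    rw [norm_smul, Real.norm_eq_abs]
    have heq : |‖a‖⁻¹ - ‖b‖⁻¹| = |‖b‖ - ‖a‖| / (‖a‖ * ‖b‖) := by
      rw [show ‖a‖⁻¹ - ‖b‖⁻¹ = (‖b‖ - ‖a‖) / (‖a‖ * ‖b‖) by field_simp,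
        abs_div, abs_of_pos (show (0:ℝ) < ‖a‖ * ‖b‖ by positivity)]
    rw [heq]
    have hba : |‖b‖ - ‖a‖| ≤ ‖a - b‖ := by
      rw [abs_sub_comm]; exact abs_norm_sub_norm_le a b
    calc |‖b‖ - ‖a‖| / (‖a‖ * ‖b‖) * ‖b‖ = |‖b‖ - ‖a‖| / ‖a‖ := by field_simp
      _ ≤ ‖a - b‖ / ‖a‖ := by gcongr
      _ = ‖a‖⁻¹ * ‖a - b‖ := by ring
  calc ‖‖a‖⁻¹ • (a - b) + (‖a‖⁻¹ - ‖b‖⁻¹) • b‖ ≤ ‖‖a‖⁻¹ • (a-b)‖ + ‖(‖a‖⁻¹ - ‖b‖⁻¹) • b‖ :=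
        norm_add_le _ _
    _ ≤ ‖a‖⁻¹ * ‖a - b‖ + ‖a‖⁻¹ * ‖a - b‖ := by rw [h1]; exact add_le_add (le_refl _) h2
    _ = 2 * ‖a‖⁻¹ * ‖a - b‖ := by ring
    _ ≤ 2 / c * ‖a - b‖ := by
        apply mul_le_mul_of_nonneg_right _ (norm_nonneg _)
        rw [div_eq_mul_inv]
        exact mul_le_mul_of_nonneg_left (inv_anti₀ hc ha) (by norm_num)

lemma lipschitzOnWith_radialProj {E : Type*} [NormedAddCommGroup E] [NormedSpace ℝ E]
    {c : ℝ} (hc : 0 < c) :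
    LipschitzOnWith (2 / c).toNNReal (fun x : E => ‖x‖⁻¹ • x) {x : E | c ≤ ‖x‖} := by
  rw [lipschitzOnWith_iff_dist_le_mul]
  intro x hx y hy
  rw [dist_eq_norm, dist_eq_norm]
  have := norm_radialProj_sub_le hc hx hy
  rwa [Real.coe_toNNReal _ (by positivity)]

lemma coord_abs_le_norm {k : ℕ} (x : EuclideanSpace ℝ (Fin k)) (i : Fin k) : |x i| ≤ ‖x‖ := by
  rw [EuclideanSpace.norm_eq]
  have h : |x i| = Real.sqrt (‖x i‖^2) := by simp [Real.sqrt_sq_eq_abs]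
  rw [h]
  apply Real.sqrt_le_sqrt
  exact Finset.single_le_sum (f := fun j => ‖x j‖^2) (fun j _ => by positivity) (Finset.mem_univ i)

/-- The embedding of `ℝ^m` onto the affine hyperplane `{w : w i = s}` of `ℝ^{m+1}`. -/
def emb (m : ℕ) (i : Fin (m+1)) (s : ℝ) (y : Fin m → ℝ) :
    EuclideanSpace ℝ (Fin (m+1)) := (WithLp.equiv 2 _).symm (i.insertNth s y)

lemma emb_apply_same (m : ℕ) (i : Fin (m+1)) (s : ℝ) (y : Fin m → ℝ) : emb m i s y i = s := by
  simp [emb, WithLp.equiv_symm_apply, PiLp.toLp_apply]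

lemma emb_apply_succAbove (m : ℕ) (i : Fin (m+1)) (s : ℝ) (y : Fin m → ℝ) (k : Fin m) :
    emb m i s y (i.succAbove k) = y k := by
  simp [emb, WithLp.equiv_symm_apply, PiLp.toLp_apply]

lemma emb_lipschitz (m : ℕ) (i : Fin (m+1)) (s : ℝ) :
    LipschitzWith (Real.sqrt m).toNNReal (emb m i s) := by
  apply LipschitzWith.of_dist_le_mul
  intro y y'
  rw [Real.coe_toNNReal _ (Real.sqrt_nonneg _), dist_eq_norm]
  rw [EuclideanSpace.norm_eq]
  have hb : ∀ j, ‖(emb m i s y - emb m i s y') j‖^2 ≤ (if j = i then 0 else (dist y y')^2) := by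
    intro j
    have hcoord : (emb m i s y - emb m i s y') j = emb m i s y j - emb m i s y' j := rfl
    rcases eq_or_ne j i with rfl | hj
    · simp [hcoord, emb_apply_same]
    · obtain ⟨k, rfl⟩ := Fin.exists_succAbove_eq hj
      rw [if_neg hj, hcoord, emb_apply_succAbove, emb_apply_succAbove, Real.norm_eq_abs, sq_abs]
      have h1 : |y k - y' k| ≤ dist y y' := by
        rw [← Real.dist_eq]; exact dist_le_pi_dist y y' k
      calc (y k - y' k)^2 = |y k - y' k|^2 := (sq_abs _).symm
        _ ≤ (dist y y')^2 := by gcongr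
  calc Real.sqrt (∑ j, ‖(emb m i s y - emb m i s y') j‖^2)
      ≤ Real.sqrt (∑ j : Fin (m+1), if j = i then 0 else (dist y y')^2) := by
        apply Real.sqrt_le_sqrt; exact Finset.sum_le_sum fun j _ => hb j
    _ ≤ Real.sqrt (m * (dist y y')^2) := by
        apply Real.sqrt_le_sqrt
        rw [← Finset.sum_erase_add _ _ (Finset.mem_univ i), if_pos rfl, add_zero]
        have h2 : ∀ j ∈ Finset.univ.erase i, (if j = i then (0:ℝ) else (dist y y')^2)
            = (dist y y')^2 := fun j hj => if_neg (Finset.mem_erase.mp hj).1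
        rw [Finset.sum_congr rfl h2, Finset.sum_const,
          Finset.card_erase_of_mem (Finset.mem_univ i), Finset.card_univ, Fintype.card_fin]
        simp [nsmul_eq_mul]
    _ = Real.sqrt m * dist y y' := by
        rw [Real.sqrt_mul (Nat.cast_nonneg m), Real.sqrt_sq dist_nonneg]

lemma inner_emb (m : ℕ) (i : Fin (m+1)) (s : ℝ) (z : EuclideanSpace ℝ (Fin (m+1)))
    (y : Fin m → ℝ) : ⟪z, emb m i s y⟫ = z i * s + ∑ k, z (i.succAbove k) * y k := by
  have h : ⟪z, emb m i s y⟫ = ∑ j, z j * emb m i s y j := by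
    simp [PiLp.inner_apply, RCLike.inner_apply]
    exact Finset.sum_congr rfl fun _ _ => mul_comm _ _
  rw [h, Fin.sum_univ_succAbove (fun j => z j * emb m i s y j) i, emb_apply_same]
  simp [emb_apply_succAbove]

lemma suppFn_lipschitzWith {k : ℕ} {M : Set (EuclideanSpace ℝ (Fin k))} (hne : M.Nonempty)
    {B : ℝ} (hB : 0 ≤ B) (hb : ∀ z ∈ M, ‖z‖ ≤ B) : LipschitzWith B.toNNReal (suppFn M) := by
  have hbdd : ∀ w : EuclideanSpace ℝ (Fin k), BddAbove ((fun z => ⟪z, w⟫) '' M) := by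
    intro w
    refine ⟨B * ‖w‖, ?_⟩
    rintro a ⟨z, hz, rfl⟩
    calc ⟪z, w⟫ ≤ ‖z‖ * ‖w‖ := real_inner_le_norm z w
      _ ≤ B * ‖w‖ := mul_le_mul_of_nonneg_right (hb z hz) (norm_nonneg _)
  apply LipschitzWith.of_dist_le_mul
  intro w w'
  rw [Real.dist_eq, Real.coe_toNNReal _ hB, dist_eq_norm]
  have key : ∀ a b : EuclideanSpace ℝ (Fin k), suppFn M a - suppFn M b ≤ B * ‖a - b‖ := by
    intro a b
    rw [sub_le_iff_le_add, suppFn]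
    apply csSup_le (hne.image _)
    rintro _ ⟨z, hz, rfl⟩
    calc ⟪z, a⟫ = ⟪z, b⟫ + ⟪z, a - b⟫ := by rw [inner_sub_right]; ring
      _ ≤ suppFn M b + B * ‖a - b‖ := by
          apply add_le_add (le_csSup (hbdd b) ⟨z, hz, rfl⟩)
          calc ⟪z, a - b⟫ ≤ ‖z‖ * ‖a - b‖ := real_inner_le_norm _ _
            _ ≤ B * ‖a - b‖ := mul_le_mul_of_nonneg_right (hb z hz) (norm_nonneg _)
      _ = B * ‖a - b‖ + suppFn M b := by ring
  rw [abs_sub_le_iff]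
  exact ⟨key w w', by rw [norm_sub_rev]; exact key w' w⟩

lemma uniqueMax_of_differentiableAt (m : ℕ) (i : Fin (m+1)) {s : ℝ} (hs : s ≠ 0)
    (M : Set (EuclideanSpace ℝ (Fin (m+1))))
    (hbdd : ∀ w, BddAbove ((fun z => ⟪z, w⟫) '' M))
    {y : Fin m → ℝ}
    (hdiff : DifferentiableAt ℝ (fun y' => suppFn M (emb m i s y')) y)
    {z₁ z₂ : EuclideanSpace ℝ (Fin (m+1))} (hz₁ : z₁ ∈ M) (hz₂ : z₂ ∈ M)
    (hmax₁ : ∀ z ∈ M, ⟪z, emb m i s y⟫ ≤ ⟪z₁, emb m i s y⟫)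
    (hmax₂ : ∀ z ∈ M, ⟪z, emb m i s y⟫ ≤ ⟪z₂, emb m i s y⟫) : z₁ = z₂ := by
  set g : (Fin m → ℝ) → ℝ := fun y' => suppFn M (emb m i s y') with hg
  have hge : ∀ (z) (_ : z ∈ M) (y' : Fin m → ℝ), ⟪z, emb m i s y'⟫ ≤ g y' :=
    fun z hz y' => le_csSup (hbdd _) (mem_image_of_mem _ hz)
  have hval : ∀ (z) (_ : z ∈ M) (_ : ∀ z' ∈ M, ⟪z', emb m i s y⟫ ≤ ⟪z, emb m i s y⟫),
      g y = ⟪z, emb m i s y⟫ := by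
    intro z hz hmax
    apply le_antisymm
    · exact csSup_le (Set.Nonempty.image _ ⟨z, hz⟩) (fun a ⟨z', hz', he⟩ => he ▸ hmax z' hz')
    · exact hge z hz y
  have key : ∀ (z) (_ : z ∈ M) (_ : ∀ z' ∈ M, ⟪z', emb m i s y⟫ ≤ ⟪z, emb m i s y⟫),
      fderiv ℝ g y = ∑ k : Fin m, z (i.succAbove k) • ContinuousLinearMap.proj k := by
    intro z hz hmax
    set L : (Fin m → ℝ) →L[ℝ] ℝ := ∑ k : Fin m, z (i.succAbove k) • ContinuousLinearMap.proj k
      with hL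
    have hLapp : ∀ y' : Fin m → ℝ, L y' = ∑ k, z (i.succAbove k) * y' k := by
      intro y'
      simp [hL, ContinuousLinearMap.sum_apply, ContinuousLinearMap.smul_apply,
        ContinuousLinearMap.proj_apply, smul_eq_mul]
    have hφ : HasFDerivAt (fun y' => ⟪z, emb m i s y'⟫) L y := by
      have h : (fun y' => ⟪z, emb m i s y'⟫) = fun y' => L y' + z i * s := by
        funext y'; rw [inner_emb, hLapp]; ring
      rw [h]
      exact (L.hasFDerivAt).add_const _
    have hG : HasFDerivAt (fun y' => g y' - ⟪z, emb m i s y'⟫) (fderiv ℝ g y - L) y :=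
      (hdiff.hasFDerivAt).sub hφ
    have hmin : IsLocalMin (fun y' => g y' - ⟪z, emb m i s y'⟫) y := by
      apply Filter.Eventually.of_forall
      intro y'
      have h0 : g y - ⟪z, emb m i s y⟫ = 0 := by rw [hval z hz hmax]; ring
      have h1 : 0 ≤ g y' - ⟪z, emb m i s y'⟫ := sub_nonneg.mpr (hge z hz y')
      show g y - ⟪z, emb m i s y⟫ ≤ g y' - ⟪z, emb m i s y'⟫
      rw [h0]; exact h1
    exact sub_eq_zero.mp (hmin.hasFDerivAt_eq_zero hG)
  have h1 := key z₁ hz₁ hmax₁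
  have h2 := key z₂ hz₂ hmax₂
  have hLeq : (∑ k : Fin m, z₁ (i.succAbove k) • (ContinuousLinearMap.proj k :
      (Fin m → ℝ) →L[ℝ] ℝ)) = ∑ k : Fin m, z₂ (i.succAbove k) • ContinuousLinearMap.proj k :=
    h1 ▸ h2
  have hcoord : ∀ k : Fin m, z₁ (i.succAbove k) = z₂ (i.succAbove k) := by
    intro k
    have h3 := congrArg (fun (L : (Fin m → ℝ) →L[ℝ] ℝ) => L (Pi.single k 1)) hLeq
    simpa [ContinuousLinearMap.sum_apply, ContinuousLinearMap.smul_apply,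
      ContinuousLinearMap.proj_apply, Pi.single_apply, Finset.sum_ite_eq',
      smul_eq_mul, mul_comm] using h3
  have hinner : ⟪z₁, emb m i s y⟫ = ⟪z₂, emb m i s y⟫ :=
    le_antisymm (hmax₂ z₁ hz₁) (hmax₁ z₂ hz₂)
  have hi : z₁ i = z₂ i := by
    rw [inner_emb, inner_emb] at hinner
    have hsum : ∑ k, z₁ (i.succAbove k) * y k = ∑ k, z₂ (i.succAbove k) * y k :=
      Finset.sum_congr rfl fun k _ => by rw [hcoord k]
    have h4 : z₁ i * s = z₂ i * s := by linarith [hinner, hsum]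
    exact mul_right_cancel₀ hs h4
  ext j
  rcases eq_or_ne j i with rfl | hj
  · exact hi
  · obtain ⟨k, rfl⟩ := Fin.exists_succAbove_eq hj
    exact hcoord k

end Aux

/-- **Proposition 3.1 ii)**. For `K ∈ 𝒦₀ⁿ` and continuous `φ : (0,∞) → (0,∞)`, the dual
Orlicz curvature measure is absolutely continuous with respect to the surface area
measure `S(K,η) = H^{n-1}(ν_K⁻¹(η))`: if a Borel set `η ⊆ S^{n-1}` satisfies
`S(K,η) = 0` then `C̃_φ(K,η) = 0`. Here `νm` selects the unique outer unit normal on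
`∂′K`. -/


theorem dualCurv_absolutelyContinuous {n : ℕ} (hn : 0 < n)
    (K : Set (EuclideanSpace ℝ (Fin n))) (hK : IsConvexBody0 K)
    (φ : ℝ → ℝ) (hφc : ContinuousOn φ (Set.Ioi 0)) (hφp : ∀ t > (0 : ℝ), 0 < φ t)
    (νm : EuclideanSpace ℝ (Fin n) → EuclideanSpace ℝ (Fin n))
    (hνm : ∀ x ∈ uniqNormalPts K, νm x ∈ unitSphere n ∧ ⟪x, νm x⟫ = suppFn K (νm x)) :
    ∀ η : Set (EuclideanSpace ℝ (Fin n)), MeasurableSet η → η ⊆ unitSphere n →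
      μH[(n : ℝ) - 1] {x ∈ uniqNormalPts K | νm x ∈ η} = 0 →
      dualCurv φ K η = 0 := by
  intro η hηmeas hηsub hη0
  obtain ⟨m, rfl⟩ : ∃ m, n = m + 1 := ⟨n - 1, (Nat.succ_pred_eq_of_pos hn).symm⟩
  obtain ⟨hKc, hKconv, h0⟩ := hK
  have hKcl : IsClosed K := hKc.isClosed
  have hd : ((m+1 : ℕ) : ℝ) - 1 = (m : ℝ) := by push_cast; ring
  have hd0 : (0:ℝ) ≤ ((m+1 : ℕ) : ℝ) - 1 := by rw [hd]; positivity
  -- a small ball inside the interior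
  obtain ⟨r, hr, hball⟩ : ∃ r > 0, ball (0 : EuclideanSpace ℝ (Fin (m+1))) r ⊆ interior K :=
    Metric.isOpen_iff.mp isOpen_interior 0 h0
  have hballK : ball (0 : EuclideanSpace ℝ (Fin (m+1))) r ⊆ K := hball.trans interior_subset
  have hfr_norm : ∀ x ∈ frontier K, r ≤ ‖x‖ := by
    intro x hx
    by_contra h
    push_neg at h
    exact hx.2 (hball (mem_ball_zero_iff.mpr h))
  have hx_ne : ∀ x ∈ frontier K, x ≠ 0 := by
    intro x hx h0'
    have := hfr_norm x hx
    rw [h0', norm_zero] at this; linarith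
  -- support function bounds for K
  have hsuppK_bdd : ∀ u : EuclideanSpace ℝ (Fin (m+1)), BddAbove ((fun x => ⟪x, u⟫) '' K) :=
    fun u => (hKc.image (continuous_id.inner continuous_const)).bddAbove
  have hsuppK_le : ∀ u : EuclideanSpace ℝ (Fin (m+1)), ∀ x ∈ K, ⟪x, u⟫ ≤ suppFn K u :=
    fun u x hx => le_csSup (hsuppK_bdd u) (mem_image_of_mem _ hx)
  have hsupp_pos : ∀ u ∈ unitSphere (m+1), 0 < suppFn K u := by
    intro u hu
    have hu1 : ‖u‖ = 1 := mem_sphere_zero_iff_norm.mp hu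
    have hmem : (r/2) • u ∈ K := by
      apply hballK
      rw [mem_ball_zero_iff, norm_smul, hu1, Real.norm_eq_abs, abs_of_pos (by linarith)]
      linarith
    have h1 := hsuppK_le u _ hmem
    have hinner : ⟪(r/2) • u, u⟫ = r/2 := by
      rw [real_inner_smul_left, real_inner_self_eq_norm_sq, hu1]; ring
    rw [hinner] at h1
    linarith
  -- the polar body
  set M := polarBody K with hMdef
  have hM0 : (0 : EuclideanSpace ℝ (Fin (m+1))) ∈ M := by
    intro y hy; rw [inner_zero_left]; norm_num
  have hMne : M.Nonempty := ⟨0, hM0⟩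
  have hMB : ∀ z ∈ M, ‖z‖ ≤ 2 / r := by
    intro z hz
    rcases eq_or_ne z 0 with rfl | hz0
    · rw [norm_zero]; positivity
    · have hzpos : 0 < ‖z‖ := norm_pos_iff.mpr hz0
      have hmem : (r/2) • ‖z‖⁻¹ • z ∈ K := by
        apply hballK
        rw [mem_ball_zero_iff, norm_smul, norm_smul, norm_inv, norm_norm, Real.norm_eq_abs,
          abs_of_pos (show (0:ℝ) < r/2 by linarith), inv_mul_cancel₀ hzpos.ne']
        linarith
      have h1 := hz _ hmem
      rw [real_inner_smul_right, real_inner_smul_right, real_inner_self_eq_norm_sq] at h1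
      have h2 : ‖z‖⁻¹ * ‖z‖^2 = ‖z‖ := by field_simp
      rw [h2] at h1
      rw [le_div_iff₀ hr]
      nlinarith
  have hMbdd : ∀ w : EuclideanSpace ℝ (Fin (m+1)), BddAbove ((fun z => ⟪z, w⟫) '' M) := by
    intro w
    refine ⟨2 / r * ‖w‖, ?_⟩
    rintro a ⟨z, hz, rfl⟩
    calc ⟪z, w⟫ ≤ ‖z‖ * ‖w‖ := real_inner_le_norm z w
      _ ≤ 2 / r * ‖w‖ := mul_le_mul_of_nonneg_right (hMB z hz) (norm_nonneg _)
  -- the set of directions with at least two maximizers over the polar body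
  set MM : Set (EuclideanSpace ℝ (Fin (m+1))) :=
    {w | ∃ z₁ z₂, z₁ ∈ M ∧ z₂ ∈ M ∧ z₁ ≠ z₂ ∧
      (∀ z ∈ M, ⟪z, w⟫ ≤ ⟪z₁, w⟫) ∧ (∀ z ∈ M, ⟪z, w⟫ ≤ ⟪z₂, w⟫)} with hMMdef
  have hcone : ∀ t : ℝ, 0 < t → ∀ w ∈ MM, t • w ∈ MM := by
    rintro t ht w ⟨z₁, z₂, h1, h2, hne, hm1, hm2⟩
    refine ⟨z₁, z₂, h1, h2, hne, ?_, ?_⟩ <;> intro z hzM <;>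
      rw [real_inner_smul_right, real_inner_smul_right]
    · exact mul_le_mul_of_nonneg_left (hm1 z hzM) ht.le
    · exact mul_le_mul_of_nonneg_left (hm2 z hzM) ht.le
  -- frontier points with non-unique normals give multi-maximizer directions
  have hfrontier_mm : ∀ x ∈ frontier K, ∀ u₀, u₀ ∈ unitSphere (m+1) →
      ⟪x, u₀⟫ = suppFn K u₀ → x ∉ uniqNormalPts K → x ∈ MM := by
    intro x hx u₀ hu₀S hu₀ hnot
    have hxK : x ∈ K := hKcl.frontier_subset hx
    have hP : ∀ u₁, u₁ ∈ unitSphere (m+1) → ⟪x, u₁⟫ = suppFn K u₁ →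
        ((suppFn K u₁)⁻¹ • u₁ ∈ M ∧ ⟪(suppFn K u₁)⁻¹ • u₁, x⟫ = 1) := by
      intro u₁ hS h₁
      have hpos := hsupp_pos u₁ hS
      constructor
      · intro y hy
        rw [real_inner_smul_left]
        have h3 : ⟪u₁, y⟫ ≤ suppFn K u₁ := by
          rw [real_inner_comm]; exact hsuppK_le u₁ y hy
        calc (suppFn K u₁)⁻¹ * ⟪u₁, y⟫ ≤ (suppFn K u₁)⁻¹ * suppFn K u₁ :=
            mul_le_mul_of_nonneg_left h3 (inv_nonneg.mpr hpos.le)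
          _ = 1 := inv_mul_cancel₀ hpos.ne'
      · rw [real_inner_smul_left, real_inner_comm, h₁, inv_mul_cancel₀ hpos.ne']
    have hnot2 : ¬ ∃! v, v ∈ unitSphere (m+1) ∧ ⟪x, v⟫ = suppFn K v := fun h => hnot ⟨hx, h⟩
    have hsecond : ∃ u₁, (u₁ ∈ unitSphere (m+1) ∧ ⟪x, u₁⟫ = suppFn K u₁) ∧ u₁ ≠ u₀ := by
      by_contra hcon
      push_neg at hcon
      exact hnot2 ⟨u₀, ⟨hu₀S, hu₀⟩, fun v hv => hcon v hv⟩
    obtain ⟨u₁, ⟨hu₁S, hu₁⟩, hne01⟩ := hsecond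
    have hp0 := hP u₀ hu₀S hu₀
    have hp1 := hP u₁ hu₁S hu₁
    have hpos0 := hsupp_pos u₀ hu₀S
    have hpos1 := hsupp_pos u₁ hu₁S
    refine ⟨(suppFn K u₀)⁻¹ • u₀, (suppFn K u₁)⁻¹ • u₁, hp0.1, hp1.1, ?_, ?_, ?_⟩
    · intro heq
      have hn0 : ‖(suppFn K u₀)⁻¹ • u₀‖ = (suppFn K u₀)⁻¹ := by
        rw [norm_smul, Real.norm_eq_abs, abs_of_pos (inv_pos.mpr hpos0),
          mem_sphere_zero_iff_norm.mp hu₀S, mul_one]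
      have hn1 : ‖(suppFn K u₁)⁻¹ • u₁‖ = (suppFn K u₁)⁻¹ := by
        rw [norm_smul, Real.norm_eq_abs, abs_of_pos (inv_pos.mpr hpos1),
          mem_sphere_zero_iff_norm.mp hu₁S, mul_one]
      have heqn : (suppFn K u₀)⁻¹ = (suppFn K u₁)⁻¹ := by rw [← hn0, ← hn1, heq]
      have heqs : suppFn K u₀ = suppFn K u₁ := by
        have := congrArg (·⁻¹) heqn
        simpa using this
      apply hne01
      rw [heqs] at heq
      exact (smul_right_injective _ (inv_ne_zero hpos1.ne') heq).symm
    · intro z hzM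
      rw [hp0.2]
      exact hzM x hxK
    · intro z hzM
      rw [hp1.2]
      exact hzM x hxK
  -- the exceptional set coming from the hypothesis
  set T := {x ∈ uniqNormalPts K | νm x ∈ η} with hTdef
  -- Step A : inclusion of the reverse radial Gauss image
  have hrev : revGauss K η ⊆
      ((fun x : EuclideanSpace ℝ (Fin (m+1)) => ‖x‖⁻¹ • x) '' T) ∪ (MM ∩ unitSphere (m+1)) := by
    rintro v ⟨x, hxfr, ⟨u₀, hu₀η, hu₀⟩, rfl⟩
    by_cases hxu : x ∈ uniqNormalPts K
    · left
      obtain ⟨v', hv'P, huniq⟩ := hxu.2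
      have hu₀S : u₀ ∈ unitSphere (m+1) := hηsub hu₀η
      have he1 : u₀ = v' := huniq u₀ ⟨hu₀S, hu₀⟩
      obtain ⟨hνS, hνval⟩ := hνm x hxu
      have he2 : νm x = v' := huniq (νm x) ⟨hνS, hνval⟩
      exact mem_image_of_mem _ ⟨hxu, by rw [he2, ← he1]; exact hu₀η⟩
    · right
      have hxMM := hfrontier_mm x hxfr u₀ (hηsub hu₀η) hu₀ hxu
      have hx0 : x ≠ 0 := hx_ne x hxfr
      constructor
      · exact hcone _ (inv_pos.mpr (norm_pos_iff.mpr hx0)) x hxMM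
      · show _ ∈ Metric.sphere _ _
        rw [mem_sphere_zero_iff_norm, norm_smul, norm_inv, norm_norm,
          inv_mul_cancel₀ (norm_pos_iff.mpr hx0).ne']
  -- Step B : the image of T is null
  have hB : μH[((m+1 : ℕ) : ℝ) - 1]
      ((fun x : EuclideanSpace ℝ (Fin (m+1)) => ‖x‖⁻¹ • x) '' T) = 0 := by
    have hTsub : T ⊆ {x : EuclideanSpace ℝ (Fin (m+1)) | r ≤ ‖x‖} :=
      fun x hx => hfr_norm x hx.1.1
    have hlip := (lipschitzOnWith_radialProj (E := EuclideanSpace ℝ (Fin (m+1))) hr).mono hTsub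
    apply le_antisymm _ zero_le
    calc μH[((m+1 : ℕ) : ℝ) - 1] ((fun x : EuclideanSpace ℝ (Fin (m+1)) => ‖x‖⁻¹ • x) '' T)
        ≤ ((2/r).toNNReal : ℝ≥0∞) ^ (((m+1 : ℕ) : ℝ) - 1) * μH[((m+1 : ℕ) : ℝ) - 1] T :=
          hlip.hausdorffMeasure_image_le hd0
      _ = 0 := by rw [hη0, mul_zero]
  -- Step C : the singular directions are null
  have hpiH : (μH[((m+1 : ℕ) : ℝ) - 1] : Measure (Fin m → ℝ)) = volume := by
    rw [hd]
    have h5 := hausdorffMeasure_pi_real (ι := Fin m)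
    rwa [Fintype.card_fin] at h5
  have hchart : ∀ (i : Fin (m+1)) (s : ℝ), s ≠ 0 → |s| = 1 →
      μH[((m+1 : ℕ) : ℝ) - 1] (((fun x : EuclideanSpace ℝ (Fin (m+1)) => ‖x‖⁻¹ • x) ∘
        emb m i s) '' {y | emb m i s y ∈ MM}) = 0 := by
    intro i s hs habs
    have hg : LipschitzWith ((2/r).toNNReal * (Real.sqrt m).toNNReal)
        (suppFn M ∘ emb m i s) :=
      (suppFn_lipschitzWith hMne (by positivity) hMB).comp (emb_lipschitz m i s)
    have hrad := hg.ae_differentiableAt (μ := volume)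
    have hBadsub : {y | emb m i s y ∈ MM} ⊆
        {y | ¬ DifferentiableAt ℝ (suppFn M ∘ emb m i s) y} := by
      rintro y hy hdiff
      obtain ⟨z₁, z₂, h1, h2, hne12, hm1, hm2⟩ := hy
      exact hne12 (uniqueMax_of_differentiableAt m i hs M hMbdd hdiff h1 h2 hm1 hm2)
    have hvol : volume {y | emb m i s y ∈ MM} = 0 :=
      measure_mono_null hBadsub (ae_iff.mp hrad)
    have hHaus : μH[((m+1 : ℕ) : ℝ) - 1] {y | emb m i s y ∈ MM} = 0 := by
      rw [hpiH]; exact hvol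
    have hemb_norm : ∀ y : Fin m → ℝ, (1:ℝ) ≤ ‖emb m i s y‖ := by
      intro y
      calc (1:ℝ) = |emb m i s y i| := by rw [emb_apply_same, habs]
        _ ≤ ‖emb m i s y‖ := coord_abs_le_norm _ _
    have hf : LipschitzOnWith ((2/1 : ℝ).toNNReal * (Real.sqrt m).toNNReal)
        ((fun x : EuclideanSpace ℝ (Fin (m+1)) => ‖x‖⁻¹ • x) ∘ emb m i s)
        {y | emb m i s y ∈ MM} :=
      (lipschitzOnWith_radialProj one_pos).comp
        ((emb_lipschitz m i s).lipschitzOnWith) (fun y _ => hemb_norm y)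
    apply le_antisymm _ zero_le
    calc μH[((m+1 : ℕ) : ℝ) - 1] (((fun x : EuclideanSpace ℝ (Fin (m+1)) => ‖x‖⁻¹ • x) ∘
          emb m i s) '' {y | emb m i s y ∈ MM})
        ≤ (((2/1 : ℝ).toNNReal * (Real.sqrt m).toNNReal : ℝ≥0) : ℝ≥0∞) ^ (((m+1 : ℕ) : ℝ) - 1) *
          μH[((m+1 : ℕ) : ℝ) - 1] {y | emb m i s y ∈ MM} :=
          hf.hausdorffMeasure_image_le hd0
      _ = 0 := by rw [hHaus, mul_zero]
  have hcover : MM ∩ unitSphere (m+1) ⊆ ⋃ (p : Fin (m+1) × Bool),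
      ((fun x : EuclideanSpace ℝ (Fin (m+1)) => ‖x‖⁻¹ • x) ∘
        emb m p.1 (if p.2 then (1:ℝ) else -1)) ''
        {y | emb m p.1 (if p.2 then (1:ℝ) else -1) y ∈ MM} := by
    rintro u ⟨huMM, huS⟩
    have hu1 : ‖u‖ = 1 := mem_sphere_zero_iff_norm.mp huS
    have hune : u ≠ 0 := by intro h; rw [h, norm_zero] at hu1; norm_num at hu1
    have hex : ∃ i, u i ≠ 0 := by
      by_contra hcon
      push_neg at hcon
      exact hune (by ext j; exact hcon j)
    obtain ⟨i, hui⟩ := hex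
    have hmain : ∀ s : ℝ, 0 < s * u i → ∀ b : Bool, (if b then (1:ℝ) else -1) = s →
        u ∈ ((fun x : EuclideanSpace ℝ (Fin (m+1)) => ‖x‖⁻¹ • x) ∘
          emb m i (if b then (1:ℝ) else -1)) ''
          {y | emb m i (if b then (1:ℝ) else -1) y ∈ MM} := by
      intro s hsu b hb
      rw [hb]
      set t : ℝ := (s * u i)⁻¹ with htdef
      have ht : 0 < t := inv_pos.mpr hsu
      set w : EuclideanSpace ℝ (Fin (m+1)) := t • u with hwdef
      have hwMM : w ∈ MM := hcone t ht u huMM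
      have hwi : w i = s := by
        have hs1 : s * s = 1 := by
          rcases hb ▸ (by cases b <;> simp : (if b then (1:ℝ) else -1) = 1 ∨
            (if b then (1:ℝ) else -1) = -1) with h | h <;> rw [h] <;> norm_num
        show t * u i = s
        rw [htdef, inv_mul_eq_iff_eq_mul₀ hsu.ne']
        linear_combination (-(u i)) * hs1
      set y : Fin m → ℝ := fun k => w (i.succAbove k) with hydef
      have hemb : emb m i s y = w := by
        ext j
        rcases eq_or_ne j i with rfl | hj
        · rw [emb_apply_same, hwi]
        · obtain ⟨k, rfl⟩ := Fin.exists_succAbove_eq hj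
          rw [emb_apply_succAbove]
      refine ⟨y, ?_, ?_⟩
      · show emb m i s y ∈ MM
        rw [hemb]; exact hwMM
      · show ‖emb m i s y‖⁻¹ • emb m i s y = u
        rw [hemb, hwdef, norm_smul, Real.norm_eq_abs, abs_of_pos ht, hu1, mul_one, smul_smul,
          inv_mul_cancel₀ ht.ne', one_smul]
    rcases lt_trichotomy (u i) 0 with hneg | hzero | hpos
    · exact mem_iUnion.mpr ⟨⟨i, false⟩, hmain (-1) (by nlinarith) false (by norm_num)⟩
    · exact absurd hzero hui
    · exact mem_iUnion.mpr ⟨⟨i, true⟩, hmain 1 (by nlinarith) true (by norm_num)⟩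
  have hC : μH[((m+1 : ℕ) : ℝ) - 1] (MM ∩ unitSphere (m+1)) = 0 :=
    measure_mono_null hcover (measure_iUnion_null fun p =>
      hchart p.1 (if p.2 then (1:ℝ) else -1) (by cases p.2 <;> norm_num)
        (by cases p.2 <;> norm_num))
  -- conclusion
  have hnull : sphMeasure (m+1) (revGauss K η) = 0 := by
    rw [sphMeasure, Measure.restrict_apply']
    · apply le_antisymm _ zero_le
      calc μH[((m+1 : ℕ) : ℝ) - 1] (revGauss K η ∩ unitSphere (m+1))
          ≤ μH[((m+1 : ℕ) : ℝ) - 1]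
            (((fun x : EuclideanSpace ℝ (Fin (m+1)) => ‖x‖⁻¹ • x) '' T) ∪
              (MM ∩ unitSphere (m+1))) :=
            measure_mono (inter_subset_left.trans hrev)
        _ = 0 := measure_union_null hB hC
    · show MeasurableSet (unitSphere (m+1))
      exact Metric.isClosed_sphere.measurableSet
  show dualCurv φ K η = 0
  rw [dualCurv, Measure.restrict_eq_zero.mpr hnull, integral_zero_measure, mul_zero]
end
end
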